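/- arXiv:1812.09211 — 9 statements merged into one kernel-verified Lean document; each statement's English description precedes it below -/
import Mathlib

section
/- Let H be a complex Hilbert space, K a bounded self-adjoint operator on H, and (φ_k)_{k∈ℕ} a Hilbert basis of H consisting of eigenvectors of K, K φ_k = x_k • φ_k, where the family (x_k)_{k∈ℕ} of eigenvalues is rationally independent (linearly independent over ℚ). Then every unitary diagonal in this basis lies in the strong closure of the one-parameter group generated by K: for every sequence z : ℕ → ℂ with |z_k| = 1 for all k, every ε > 0 and every finite family ψ_1, …, ψ_M ∈ H, there exists t ∈ ℝ such that ‖exp(itK) ψ_j − Σ'_k z_k • ⟪φ_k, ψ_j⟫ • φ_k‖ < ε for all j = 1, …, M (the sum Σ'_k being the tsum over k ∈ ℕ, which converges in H). -/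
open scoped InnerProductSpace ENNReal NNReal

lemma exp_apply_eigenvector {H : Type*} [NormedAddCommGroup H] [NormedSpace ℂ H] [CompleteSpace H]
    (A : H →L[ℂ] H) (v : H) (c : ℂ) (h : A v = c • v) :
    NormedSpace.exp A v = Complex.exp c • v := by
  have hpow : ∀ n : ℕ, (A ^ n) v = c ^ n • v := by
    intro n; induction n with
    | zero => simp
    | succ n ih =>
      rw [pow_succ, pow_succ, ContinuousLinearMap.mul_apply, h, map_smul, ih, smul_smul,
        mul_comm]
  have hs : Summable fun n : ℕ => ((Nat.factorial n : ℂ)⁻¹) • A ^ n := NormedSpace.expSeries_summable' A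
  rw [NormedSpace.exp_eq_tsum (𝕂 := ℂ)]
  have := ((ContinuousLinearMap.apply ℂ H v).map_tsum hs)
  simp only [ContinuousLinearMap.apply_apply] at this
  rw [this]
  rw [Complex.exp_eq_exp_ℂ, NormedSpace.exp_eq_tsum (𝕂 := ℂ)]
  rw [← Summable.tsum_smul_const]
  · congr 1; funext n
    rw [ContinuousLinearMap.smul_apply, hpow n, smul_smul, smul_eq_mul]
  · exact NormedSpace.expSeries_summable' c

lemma norm_sub_sq_of_norm_one {u v : ℂ} (hu : ‖u‖ = 1) (hv : ‖v‖ = 1) :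
    ‖u - v‖ ^ 2 = 4 - ‖u + v‖ ^ 2 := by
  have h1 : Complex.normSq u = 1 := by
    rw [← Complex.sq_norm, hu]; norm_num
  have h2 : Complex.normSq v = 1 := by
    rw [← Complex.sq_norm, hv]; norm_num
  have e1 : ‖u - v‖ ^ 2 = Complex.normSq (u - v) := by
    rw [← Complex.sq_norm]
  have e2 : ‖u + v‖ ^ 2 = Complex.normSq (u + v) := by
    rw [← Complex.sq_norm]
  rw [e1, e2, Complex.normSq_sub, Complex.normSq_add, h1, h2]
  ring

lemma norm_integral_exp_le (μ : ℝ) (T : ℝ) (hμ : μ ≠ 0) :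
    ‖∫ t in (0:ℝ)..T, Complex.exp (Complex.I * ((μ:ℂ) * t))‖ ≤ 2 / |μ| := by
  have hμ' : (Complex.I * (μ:ℂ)) ≠ 0 :=
    mul_ne_zero Complex.I_ne_zero (Complex.ofReal_ne_zero.2 hμ)
  have h := integral_exp_mul_complex (a := 0) (b := T) hμ'
  simp only [mul_assoc] at h
  rw [h]
  have h00 : Complex.exp (Complex.I * ((μ:ℂ) * ((0:ℝ):ℂ))) = 1 := by norm_num
  have hden : ‖Complex.I * (μ:ℂ)‖ = |μ| := by
    simp [norm_mul, Complex.norm_real, Real.norm_eq_abs]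
  have h1 : ‖Complex.exp (Complex.I * ((μ:ℂ) * (T:ℂ)))‖ = 1 := by
    rw [Complex.norm_exp]
    simp
  have hpos : 0 < |μ| := abs_pos.2 hμ
  rw [h00, norm_div, hden]
  refine (div_le_div_iff_of_pos_right hpos).2 ?_
  refine (norm_sub_le _ _).trans ?_
  rw [h1, norm_one]
  norm_num

open Complex Finset Filter intervalIntegral in
lemma bohr_coeff_bound (N : ℕ) (a : Fin (N+1) → ℂ) (ha : ∀ j, ‖a j‖ = 1)
    (y : Fin (N+1) → ℝ)
    (hfreq : ∀ b b' : Fin (N+1) → ℕ, (∑ j, b j = ∑ j, b' j) →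
      (∑ j, (b j : ℝ) * y j = ∑ j, (b' j : ℝ) * y j) → b = b')
    (B : ℝ) (hB1 : 1 ≤ B)
    (hcon : ∀ t : ℝ, ‖∑ j, a j * Complex.exp (Complex.I * (y j * t))‖ ≤ B)
    (p : ℕ) :
    (((N+1)^p / (p+1)^(N+1) : ℕ) : ℝ) ≤ B ^ p := by
  classical
  set F : ℝ → ℂ := fun t => ∑ j, a j * Complex.exp (Complex.I * (y j * t)) with hFdef
  set cnt : (Fin p → Fin (N+1)) → (Fin (N+1) → ℕ) :=
    fun f j => (univ.filter (fun i => f i = j)).card with hcntdef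
  have hcnt_sum : ∀ f, ∑ j, cnt f j = p := by
    intro f
    rw [show ∑ j, cnt f j = (univ : Finset (Fin p)).card from
      (Finset.card_eq_sum_card_fiberwise (fun i _ => mem_univ (f i))).symm, card_univ,
      Fintype.card_fin]
  -- pigeonhole
  obtain ⟨b, hbmem, hbcard⟩ := Finset.exists_le_card_fiber_of_mul_le_card_of_maps_to
    (s := (univ : Finset (Fin p → Fin (N+1))))
    (t := Fintype.piFinset fun _ : Fin (N+1) => Finset.range (p+1))
    (f := cnt)
    (fun f _ => by
      simp only [Fintype.mem_piFinset, Finset.mem_range]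
      intro j
      calc cnt f j ≤ (univ : Finset (Fin p)).card := Finset.card_filter_le _ _
        _ < p + 1 := by simp [Nat.lt_succ_self]
      )
    ⟨fun _ => 0, by simp⟩
    (by
      have h1 : (Fintype.piFinset fun _ : Fin (N+1) => Finset.range (p+1)).card = (p+1)^(N+1) := by
        simp [Fintype.card_piFinset]
      have h2 : (univ : Finset (Fin p → Fin (N+1))).card = (N+1)^p := by
        simp [card_univ]
      rw [h1, h2]
      exact Nat.mul_div_le _ _)
  set S : Finset (Fin p → Fin (N+1)) := univ.filter (fun f => cnt f = b) with hSdef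
  rcases S.eq_empty_or_nonempty with hSe | hSne
  · have h0 : ((N+1)^p / (p+1)^(N+1) : ℕ) = 0 := Nat.le_zero.1 (by simpa [hSe] using hbcard)
    rw [h0]
    simpa using pow_nonneg (by linarith : (0:ℝ) ≤ B) p
  obtain ⟨f₀, hf₀⟩ := hSne
  have hcntf₀ : cnt f₀ = b := (mem_filter.1 hf₀).2
  have hbsum : ∑ j, b j = p := by rw [← hcntf₀, hcnt_sum]
  set freq : (Fin p → Fin (N+1)) → ℝ := fun f => ∑ i, y (f i) with hfreqdef
  set lam : ℝ := ∑ j, (b j : ℝ) * y j with hlamdef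
  set cA : (Fin p → Fin (N+1)) → ℂ := fun f => ∏ i, a (f i) with hcAdef
  set W : ℂ := ∏ j, a j ^ b j with hWdef
  have hfreq_cnt : ∀ f, freq f = ∑ j, (cnt f j : ℝ) * y j := by
    intro f
    show ∑ i : Fin p, y (f i) = _
    rw [← Finset.sum_fiberwise_of_maps_to (fun i (_ : i ∈ univ) => mem_univ (f i))
      (fun i => y (f i))]
    refine Finset.sum_congr rfl fun j _ => ?_
    have hc : ∀ i ∈ univ.filter (fun i => f i = j), y (f i) = y j :=
      fun i hi => by rw [(mem_filter.1 hi).2]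
    rw [Finset.sum_congr rfl hc, Finset.sum_const, nsmul_eq_mul]
  have hcA_cnt : ∀ f, cA f = ∏ j, a j ^ cnt f j := by
    intro f
    show ∏ i : Fin p, a (f i) = _
    rw [← Finset.prod_fiberwise_of_maps_to (fun i (_ : i ∈ univ) => mem_univ (f i))
      (fun i => a (f i))]
    refine Finset.prod_congr rfl fun j _ => ?_
    have hc : ∀ i ∈ univ.filter (fun i => f i = j), a (f i) = a j :=
      fun i hi => by rw [(mem_filter.1 hi).2]
    rw [Finset.prod_congr rfl hc, Finset.prod_const]
  have hfreqS : ∀ f ∈ S, freq f = lam := by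
    intro f hf
    rw [hfreq_cnt, (mem_filter.1 hf).2, hlamdef]
  have hcAS : ∀ f ∈ S, cA f = W := by
    intro f hf
    rw [hcA_cnt, (mem_filter.1 hf).2, hWdef]
  have hsep : ∀ f, f ∉ S → freq f ≠ lam := by
    intro f hf heq
    apply hf
    rw [hSdef, mem_filter]
    refine ⟨mem_univ f, ?_⟩
    refine hfreq (cnt f) b (by rw [hcnt_sum, hbsum]) ?_
    rw [← hfreq_cnt, heq, hlamdef]
  have hcAnorm : ∀ f, ‖cA f‖ = 1 := by
    intro f
    rw [hcAdef]
    simp only [norm_prod, ha, Finset.prod_const_one]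
  have hWnorm : ‖W‖ = 1 := by
    rw [hWdef]
    simp only [norm_prod, norm_pow, ha, one_pow, Finset.prod_const_one]
  -- expansion of F^p
  have hFpow : ∀ t : ℝ, F t ^ p =
      ∑ f : Fin p → Fin (N+1), cA f * Complex.exp (Complex.I * (freq f * t)) := by
    intro t
    have h1 : F t ^ p = ∏ _i : Fin p, F t := by
      rw [Finset.prod_const, card_univ, Fintype.card_fin]
    rw [h1, hFdef]
    rw [Finset.prod_univ_sum]
    rw [Fintype.piFinset_univ]
    refine Finset.sum_congr rfl fun f _ => ?_
    rw [Finset.prod_mul_distrib]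
    congr 1
    rw [← Complex.exp_sum]
    congr 1
    rw [hfreqdef]
    push_cast
    rw [Finset.sum_mul, Finset.mul_sum]
  set C : ℝ := ∑ f ∈ univ \ S, 2 / |freq f - lam| with hCdef
  have hC0 : 0 ≤ C := Finset.sum_nonneg fun f _ => by positivity
  have hmain : ∀ T : ℝ, 0 < T → (S.card : ℝ) * T ≤ B ^ p * T + C := by
    intro T hT
    have hcont : ∀ (c : ℂ) (μ : ℝ),
        Continuous fun t : ℝ => c * Complex.exp (Complex.I * (μ * t)) := by
      intro c μ
      fun_prop
    have hint : ∀ (c : ℂ) (μ : ℝ), IntervalIntegrable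
        (fun t : ℝ => c * Complex.exp (Complex.I * (μ * t))) MeasureTheory.volume 0 T :=
      fun c μ => (hcont c μ).intervalIntegrable 0 T
    have hptwise : ∀ t : ℝ, F t ^ p * Complex.exp (-(Complex.I * (lam * t)))
        = ∑ f : Fin p → Fin (N+1), cA f * Complex.exp (Complex.I * (((freq f - lam : ℝ) : ℂ) * t)) := by
      intro t
      rw [hFpow t, Finset.sum_mul]
      refine Finset.sum_congr rfl fun f _ => ?_
      rw [mul_assoc, ← Complex.exp_add]
      congr 2
      push_cast
      ring
    have hVeq : (∫ t in (0:ℝ)..T, F t ^ p * Complex.exp (-(Complex.I * (lam * t))))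
        = ∑ f : Fin p → Fin (N+1),
            cA f * ∫ t in (0:ℝ)..T, Complex.exp (Complex.I * (((freq f - lam : ℝ) : ℂ) * t)) := by
      rw [intervalIntegral.integral_congr
        (g := fun t => ∑ f : Fin p → Fin (N+1),
          cA f * Complex.exp (Complex.I * (((freq f - lam : ℝ) : ℂ) * t)))
        (fun t _ => hptwise t)]
      rw [intervalIntegral.integral_finset_sum (fun f _ => hint (cA f) (freq f - lam))]
      exact Finset.sum_congr rfl fun f _ => intervalIntegral.integral_const_mul _ _
    have hSint : ∀ f ∈ S,
        cA f * ∫ t in (0:ℝ)..T, Complex.exp (Complex.I * (((freq f - lam : ℝ) : ℂ) * t)) = W * T := by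
      intro f hf
      rw [hcAS f hf]
      congr 1
      rw [show freq f - lam = 0 by rw [hfreqS f hf, sub_self]]
      simp
    have hcompl : ∀ f ∈ univ \ S,
        ‖cA f * ∫ t in (0:ℝ)..T, Complex.exp (Complex.I * (((freq f - lam : ℝ) : ℂ) * t))‖
          ≤ 2 / |freq f - lam| := by
      intro f hf
      have hμ : freq f - lam ≠ 0 := sub_ne_zero.2 (hsep f (Finset.mem_sdiff.1 hf).2)
      rw [norm_mul, hcAnorm, one_mul]
      exact norm_integral_exp_le _ T hμ
    have hsplit : ∑ f : Fin p → Fin (N+1),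
        cA f * ∫ t in (0:ℝ)..T, Complex.exp (Complex.I * (((freq f - lam : ℝ) : ℂ) * t))
        = (S.card : ℂ) * (W * T) + ∑ f ∈ univ \ S,
            cA f * ∫ t in (0:ℝ)..T, Complex.exp (Complex.I * (((freq f - lam : ℝ) : ℂ) * t)) := by
      rw [← Finset.sum_sdiff (Finset.subset_univ S), add_comm]
      congr 1
      rw [Finset.sum_congr rfl hSint, Finset.sum_const, nsmul_eq_mul]
    have hnormA : ‖((S.card : ℂ) * (W * T))‖ = (S.card : ℝ) * T := by
      simp [norm_mul, hWnorm, Complex.norm_real, Real.norm_eq_abs, abs_of_pos hT]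
    have hnormR : ‖∑ f ∈ univ \ S,
        cA f * ∫ t in (0:ℝ)..T, Complex.exp (Complex.I * (((freq f - lam : ℝ) : ℂ) * t))‖ ≤ C := by
      refine (norm_sum_le _ _).trans ?_
      exact Finset.sum_le_sum hcompl
    have hle : ‖∫ t in (0:ℝ)..T, F t ^ p * Complex.exp (-(Complex.I * (lam * t)))‖
        ≤ B ^ p * T := by
      have hb := intervalIntegral.norm_integral_le_of_norm_le_const (C := B ^ p)
        (f := fun t : ℝ => F t ^ p * Complex.exp (-(Complex.I * (lam * t)))) (a := 0) (b := T)
        (fun t _ => by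
          rw [norm_mul]
          have h4 : ‖Complex.exp (-(Complex.I * (lam * t)))‖ = 1 := by
            rw [Complex.norm_exp]
            simp [Complex.exp_re]
          rw [h4, mul_one, norm_pow]
          exact pow_le_pow_left₀ (norm_nonneg _) (hcon t) p)
      rwa [sub_zero, abs_of_pos hT] at hb
    have hge : (S.card : ℝ) * T - C
        ≤ ‖∫ t in (0:ℝ)..T, F t ^ p * Complex.exp (-(Complex.I * (lam * t)))‖ := by
      rw [hVeq, hsplit]
      set A := (S.card : ℂ) * (W * T)
      set R := ∑ f ∈ univ \ S,
        cA f * ∫ t in (0:ℝ)..T, Complex.exp (Complex.I * (((freq f - lam : ℝ) : ℂ) * t))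
      have h3 : ‖A‖ ≤ ‖A + R‖ + ‖R‖ := by
        calc ‖A‖ = ‖A + R + -R‖ := by ring_nf
          _ ≤ ‖A + R‖ + ‖-R‖ := norm_add_le _ _
          _ = ‖A + R‖ + ‖R‖ := by rw [norm_neg]
      have := hnormR
      rw [← hnormA]
      linarith
    linarith
  have hcard : (S.card : ℝ) ≤ B ^ p := by
    refine le_of_forall_pos_le_add fun ε hε => ?_
    have hT : (0:ℝ) < (C + 1)/ε := by positivity
    have hm := hmain _ hT
    have hTε : ((C+1)/ε) * ε = C + 1 := div_mul_cancel₀ _ (ne_of_gt hε)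
    nlinarith [hm, hT, hTε, hC0, hε]
  calc (((N+1)^p / (p+1)^(N+1) : ℕ) : ℝ) ≤ (S.card : ℝ) := by exact_mod_cast hbcard
    _ ≤ B ^ p := hcard


open Complex Finset Filter in
lemma exists_large_trigpoly (N : ℕ) (a : Fin (N+1) → ℂ) (ha : ∀ j, ‖a j‖ = 1)
    (y : Fin (N+1) → ℝ)
    (hfreq : ∀ b b' : Fin (N+1) → ℕ, (∑ j, b j = ∑ j, b' j) →
      (∑ j, (b j : ℝ) * y j = ∑ j, (b' j : ℝ) * y j) → b = b')
    (B : ℝ) (hB1 : 1 ≤ B) (hBN : B < N + 1) :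
    ∃ t : ℝ, B < ‖∑ j, a j * Complex.exp (Complex.I * (y j * t))‖ := by
  by_contra hcon
  push_neg at hcon
  have hB0 : (0:ℝ) < B := lt_of_lt_of_le one_pos hB1
  have key : ∀ p : ℕ, (((N+1)^p / (p+1)^(N+1) : ℕ) : ℝ) ≤ B ^ p :=
    bohr_coeff_bound N a ha y hfreq B hB1 hcon
  set r : ℝ := (N + 1) / B with hrdef
  have hr : 1 < r := (lt_div_iff₀ hB0).2 (by linarith)
  have hr0 : 0 < r := lt_trans one_pos hr
  have h_lo := isLittleO_pow_const_const_pow_of_one_lt (R := ℝ) (N+1) hr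
  rw [Asymptotics.isLittleO_iff] at h_lo
  have hc : (0:ℝ) < 1/(4*r) := by positivity
  obtain ⟨m, hm, hm1⟩ := ((h_lo hc).and (eventually_ge_atTop 1)).exists
  set p : ℕ := m - 1 with hpdef
  have hpm : p + 1 = m := Nat.succ_pred_eq_of_pos hm1
  have hq := key p
  set q : ℕ := (N+1)^p / (p+1)^(N+1) with hqdef
  have hnat : (N+1)^p < (q+1) * (p+1)^(N+1) := by
    have := (Nat.div_lt_iff_lt_mul (pow_pos (Nat.succ_pos p) (N+1))).1 (Nat.lt_succ_self q)
    simpa [Nat.succ_eq_add_one, mul_comm] using this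
  have hcast : ((N:ℝ)+1)^p < ((q:ℝ)+1) * ((p:ℝ)+1)^(N+1) := by exact_mod_cast hnat
  have h2 : ((q:ℝ)+1) ≤ B^p + 1 := by linarith
  have hBp : (1:ℝ) ≤ B^p := one_le_pow₀ hB1
  have hm' : ((p:ℝ)+1)^(N+1) ≤ (1/(4*r)) * r^(p+1) := by
    have := hm
    rw [← hpm] at this
    rw [Real.norm_eq_abs, Real.norm_eq_abs, _root_.abs_of_nonneg (pow_nonneg hr0.le _),
      _root_.abs_of_nonneg (pow_nonneg (Nat.cast_nonneg _) _)] at this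
    push_cast at this ⊢
    exact this
  have hrp : (1/(4*r)) * r^(p+1) = (1/4) * r^p := by
    rw [pow_succ]
    field_simp
  have hfin : ((N:ℝ)+1)^p = B^p * r^p := by
    rw [← mul_pow, hrdef]
    field_simp
  have hrpos : (0:ℝ) < r ^ p := pow_pos hr0 p
  have hBppos : (0:ℝ) < B ^ p := pow_pos hB0 p
  nlinarith [hcast, h2, hm', hrp, hfin]

open Complex Finset in
lemma kronecker_flow (N : ℕ) (x : Fin N → ℝ)
    (hind : ∀ c : Fin N → ℤ, ∑ k, (c k : ℝ) * x k = 0 → ∀ k, c k = 0)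
    (w : Fin N → ℂ) (hw : ∀ k, ‖w k‖ = 1) (δ : ℝ) (hδ : 0 < δ) :
    ∃ t : ℝ, ∀ k, ‖Complex.exp (Complex.I * (x k * t)) - w k‖ < δ := by
  rcases Nat.eq_zero_or_pos N with hN | hN
  · subst hN; exact ⟨0, fun k => k.elim0⟩
  set a : Fin (N+1) → ℂ := Fin.cons 1 (fun k => starRingEnd ℂ (w k)) with hadef
  set y : Fin (N+1) → ℝ := Fin.cons 0 x with hydef
  have ha : ∀ j, ‖a j‖ = 1 := by
    intro j
    refine Fin.cases ?_ ?_ j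
    · simp [hadef]
    · intro k
      simp only [hadef, Fin.cons_succ]
      rw [RCLike.norm_conj, hw k]
  have hfreq : ∀ b b' : Fin (N+1) → ℕ, (∑ j, b j = ∑ j, b' j) →
      (∑ j, (b j : ℝ) * y j = ∑ j, (b' j : ℝ) * y j) → b = b' := by
    intro b b' hsum hlin
    have e : ∀ (c : Fin (N+1) → ℕ), ∑ j, (c j : ℝ) * y j = ∑ k : Fin N, (c k.succ : ℝ) * x k := by
      intro c
      rw [Fin.sum_univ_succ]
      simp [hydef]
    rw [e b, e b'] at hlin
    have h2 : ∀ k : Fin N, b k.succ = b' k.succ := by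
      intro k
      have hz := hind (fun k => (b k.succ : ℤ) - (b' k.succ : ℤ)) ?_ k
      · omega
      · push_cast
        simp only [sub_mul, Finset.sum_sub_distrib]
        rw [hlin, sub_self]
    have h0 : b 0 = b' 0 := by
      rw [Fin.sum_univ_succ, Fin.sum_univ_succ] at hsum
      have hs2 : ∑ k : Fin N, b k.succ = ∑ k : Fin N, b' k.succ :=
        Finset.sum_congr rfl (fun k _ => h2 k)
      omega
    funext j
    exact Fin.cases h0 h2 j
  set η : ℝ := min 1 (δ^2/4) with hηdef
  have hη0 : 0 < η := lt_min one_pos (by positivity)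
  have hη1 : η ≤ 1 := min_le_left _ _
  have hN1 : (1:ℝ) ≤ N := by exact_mod_cast hN
  have hB1 : (1:ℝ) ≤ (N+1) - η := by linarith
  obtain ⟨t, ht⟩ := exists_large_trigpoly N a ha y hfreq ((N+1) - η) hB1 (by linarith)
  refine ⟨t, fun k => ?_⟩
  set u : Fin (N+1) → ℂ := fun j => a j * Complex.exp (Complex.I * (y j * t)) with hudef
  have hu : ∀ j, ‖u j‖ = 1 := by
    intro j
    rw [hudef]
    simp only [norm_mul, ha j, one_mul]
    rw [Complex.norm_exp]
    simp
  have hne : (0 : Fin (N+1)) ≠ k.succ := (Fin.succ_ne_zero k).symm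
  have hsub : ({0, k.succ} : Finset (Fin (N+1))) ⊆ univ := subset_univ _
  have hcardpair : ({0, k.succ} : Finset (Fin (N+1))).card = 2 := by
    rw [Finset.card_insert_of_notMem (by simp [hne]), Finset.card_singleton]
  have hsplit2 : ∑ j, u j = (u 0 + u k.succ) + ∑ j ∈ univ \ {0, k.succ}, u j := by
    rw [← Finset.sum_sdiff hsub, Finset.sum_pair hne]
    ring
  have hrest : ‖∑ j ∈ univ \ ({0, k.succ} : Finset (Fin (N+1))), u j‖ ≤ (N:ℝ) - 1 := by
    refine (norm_sum_le _ _).trans ?_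
    rw [Finset.sum_congr rfl (fun j _ => hu j), Finset.sum_const,
      Finset.card_sdiff_of_subset hsub, card_univ, Fintype.card_fin, hcardpair, nsmul_eq_mul, mul_one]
    have h1N : 1 ≤ N := hN
    have : N + 1 - 2 = N - 1 := by omega
    rw [this, Nat.cast_sub h1N]
    simp
  have hpair : 2 - η < ‖u 0 + u k.succ‖ := by
    have hchain : ((N:ℝ)+1) - η ≤ ‖u 0 + u k.succ‖ + ((N:ℝ) - 1) := by
      calc ((N:ℝ)+1) - η ≤ ‖∑ j, u j‖ := le_of_lt ht
        _ ≤ ‖u 0 + u k.succ‖ + ‖∑ j ∈ univ \ ({0, k.succ} : Finset (Fin (N+1))), u j‖ := by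
            rw [hsplit2]; exact norm_add_le _ _
        _ ≤ ‖u 0 + u k.succ‖ + ((N:ℝ) - 1) := by linarith
    by_contra hcon
    push_neg at hcon
    -- ‖u0+uk‖ ≤ 2 - η would give N+1-η ≤ 2-η + N - 1 = N+1-η, need strict... 
    have : ((N:ℝ)+1) - η < ‖∑ j, u j‖ := ht
    have h2 : ‖∑ j, u j‖ ≤ ‖u 0 + u k.succ‖ + ((N:ℝ) - 1) := by
      rw [hsplit2]
      exact (norm_add_le _ _).trans (by linarith)
    linarith
  have hgeom : ‖u 0 - u k.succ‖^2 = 4 - ‖u 0 + u k.succ‖^2 :=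
    norm_sub_sq_of_norm_one (hu 0) (hu k.succ)
  have hδ2 : η ≤ δ^2/4 := min_le_right _ _
  have hlt : ‖u 0 - u k.succ‖^2 < δ^2 := by
    have hnn : 0 ≤ ‖u 0 + u k.succ‖ := norm_nonneg _
    nlinarith [hgeom, hpair, hη0, hη1, hδ2]
  have hfin : ‖u 0 - u k.succ‖ < δ := by
    nlinarith [norm_nonneg (u 0 - u k.succ), hδ]
  have hu0 : u 0 = 1 := by
    simp [hudef, hadef, hydef]
  have huk : u k.succ = starRingEnd ℂ (w k) * Complex.exp (Complex.I * (x k * t)) := by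
    simp [hudef, hadef, hydef]
  have hwk : w k * starRingEnd ℂ (w k) = 1 := by
    have hns : Complex.normSq (w k) = 1 := by
      rw [← Complex.sq_norm, hw k]; norm_num
    rw [Complex.mul_conj, hns, Complex.ofReal_one]
  have hid : Complex.exp (Complex.I * (x k * t)) - w k = -(w k * (u 0 - u k.succ)) := by
    rw [hu0, huk]
    linear_combination (-(Complex.exp (Complex.I * ((x k : ℂ) * (t:ℂ))))) * hwk
  calc ‖Complex.exp (Complex.I * (x k * t)) - w k‖
      = ‖w k‖ * ‖u 0 - u k.succ‖ := by rw [hid, norm_neg, norm_mul]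
    _ = ‖u 0 - u k.succ‖ := by rw [hw k, one_mul]
    _ < δ := hfin

lemma memℓp_two_of_le {g h : ℕ → ℂ} (hh : Memℓp h 2) {C : ℝ} (hC : 0 ≤ C)
    (hle : ∀ k, ‖g k‖ ≤ C * ‖h k‖) : Memℓp g 2 := by
  have ht : (2 : ℝ≥0∞).toReal = 2 := by norm_num
  have hsum : Summable fun k => ‖h k‖ ^ (2:ℝ) := by
    have := (memℓp_gen_iff (by rw [ht]; norm_num)).1 hh
    rwa [ht] at this
  apply memℓp_gen
  rw [ht]
  refine Summable.of_nonneg_of_le (fun k => ?_) (fun k => ?_) (hsum.mul_left (C^2))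
  · positivity
  · calc ‖g k‖ ^ (2:ℝ) = ‖g k‖ ^ (2:ℕ) := Real.rpow_two _
      _ ≤ (C * ‖h k‖) ^ (2:ℕ) := by
          exact pow_le_pow_left₀ (norm_nonneg _) (hle k) 2
      _ = C ^ 2 * ‖h k‖ ^ (2:ℝ) := by rw [Real.rpow_two]; ring

lemma lp_norm_sq_eq_tsum (D : lp (fun _ : ℕ => ℂ) 2) :
    ‖D‖ ^ 2 = ∑' k, ‖D k‖ ^ 2 := by
  have h := lp.norm_rpow_eq_tsum (p := 2) (by norm_num) D
  have ht : (2 : ℝ≥0∞).toReal = 2 := by norm_num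
  rw [ht] at h
  calc ‖D‖ ^ 2 = ‖D‖ ^ (2:ℝ) := (Real.rpow_two _).symm
    _ = ∑' k, ‖D k‖ ^ (2:ℝ) := h
    _ = ∑' k, ‖D k‖ ^ 2 := by
        exact tsum_congr fun k => Real.rpow_two _

open Complex Filter in
/-- Every unitary which is diagonal in a Hilbert basis of eigenvectors of a bounded
self-adjoint operator `K` with rationally independent eigenvalues lies in the strong
closure of the one-parameter group generated by `K`. -/
theorem diagonal_unitary_strong_limit_of_oneParameterGroup
    {H : Type*} [NormedAddCommGroup H] [InnerProductSpace ℂ H] [CompleteSpace H]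
    (φ : HilbertBasis ℕ ℂ H) (K : H →L[ℂ] H)
    (hKsa : ∀ ψ χ : H, ⟪K ψ, χ⟫_ℂ = ⟪ψ, K χ⟫_ℂ)
    (x : ℕ → ℝ) (hx : ∀ k, K (φ k) = (x k : ℂ) • φ k)
    (hind : LinearIndependent ℚ x)
    (z : ℕ → ℂ) (hz : ∀ k, ‖z k‖ = 1)
    (ε : ℝ) (hε : 0 < ε) (M : ℕ) (ψ : Fin M → H) :
    ∃ t : ℝ, ∀ j : Fin M,
      ‖NormedSpace.exp (Complex.I • ((t : ℂ) • K)) (ψ j)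
        - ∑' k : ℕ, z k • ⟪(φ k : H), ψ j⟫_ℂ • (φ k : H)‖ < ε := by
  classical
  set f : Fin M → (ℕ → ℂ) := fun j k => φ.repr (ψ j) k with hfdef
  have hinner : ∀ j k, ⟪(φ k : H), ψ j⟫_ℂ = f j k := fun j k => (φ.repr_apply_apply (ψ j) k).symm
  have hfmem : ∀ j, Memℓp (f j) 2 := fun j => lp.memℓp (φ.repr (ψ j))
  have hfsq : ∀ j, Summable fun k => ‖f j k‖ ^ 2 := by
    intro j
    have h := (memℓp_gen_iff (p := 2) (by norm_num)).1 (hfmem j)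
    have ht : (2 : ℝ≥0∞).toReal = 2 := by norm_num
    rw [ht] at h
    exact h.congr fun k => Real.rpow_two _
  have hfnormsq : ∀ j, ∑' k, ‖f j k‖^2 = ‖ψ j‖^2 := by
    intro j
    have h := lp_norm_sq_eq_tsum (φ.repr (ψ j))
    rw [LinearIsometryEquiv.norm_map] at h
    exact h.symm
  obtain ⟨n, hn⟩ : ∃ n, ∀ j : Fin M,
      (∑' k, ‖f j k‖^2) - ∑ k ∈ Finset.range n, ‖f j k‖^2 < ε^2/64 := by
    have he : ∀ j : Fin M, ∀ᶠ m in atTop,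
        (∑' k, ‖f j k‖^2) - ∑ k ∈ Finset.range m, ‖f j k‖^2 < ε^2/64 := by
      intro j
      have h := (hfsq j).hasSum.tendsto_sum_nat
      have h2 := (tendsto_const_nhds (x := ∑' k, ‖f j k‖^2) (f := atTop)).sub h
      rw [sub_self] at h2
      exact h2.eventually_lt_const (by positivity)
    exact (eventually_all.2 he).exists
  set Cb : ℝ := 1 + ∑ j, ‖ψ j‖ with hCbdef
  have hCbsum : (0:ℝ) ≤ ∑ j, ‖ψ j‖ := Finset.sum_nonneg fun j _ => norm_nonneg _
  have hCb1 : (1:ℝ) ≤ Cb := by rw [hCbdef]; linarith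
  have hCb0 : (0:ℝ) < Cb := by linarith
  have hCbj : ∀ j, ‖ψ j‖ ≤ Cb := by
    intro j
    have := Finset.single_le_sum (f := fun j : Fin M => ‖ψ j‖) (fun i _ => norm_nonneg _)
      (Finset.mem_univ j)
    rw [hCbdef]; linarith
  set δ' : ℝ := ε / (2 * Cb) with hδ'def
  have hδ' : 0 < δ' := div_pos hε (by linarith)
  have hindZ : ∀ c : Fin n → ℤ, ∑ k, (c k : ℝ) * x (k : ℕ) = 0 → ∀ k, c k = 0 := by
    intro c hc k
    have h := linearIndependent_iff'.1 hind (Finset.range n)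
      (fun i => if h : i < n then ((c ⟨i, h⟩ : ℤ) : ℚ) else 0) ?_ k (Finset.mem_range.2 k.isLt)
    · have h' : (if h : (k:ℕ) < n then ((c ⟨k, h⟩ : ℤ) : ℚ) else 0) = 0 := h
      rw [dif_pos k.isLt, Fin.eta] at h'
      exact_mod_cast h'
    · have heq : ∑ i ∈ Finset.range n,
          (if h : i < n then ((c ⟨i, h⟩ : ℤ) : ℚ) else 0) • x i
          = ∑ k : Fin n, (c k : ℝ) * x (k : ℕ) := by
        rw [Finset.sum_range (f := fun i =>
          (if h : i < n then ((c ⟨i, h⟩ : ℤ) : ℚ) else 0) • x i)]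
        refine Finset.sum_congr rfl fun i _ => ?_
        rw [dif_pos i.isLt, Fin.eta, Rat.smul_def]
        push_cast
        ring
      rw [heq, hc]
  obtain ⟨t, ht⟩ := kronecker_flow n (fun k => x (k : ℕ)) hindZ (fun k => z (k : ℕ))
    (fun k => hz (k : ℕ)) δ' hδ'
  refine ⟨t, fun j => ?_⟩
  set e : ℕ → ℂ := fun k => Complex.exp (Complex.I * (x k * t)) with hedef
  have hek : ∀ k, ‖e k‖ = 1 := by
    intro k
    rw [hedef]
    rw [Complex.norm_exp]
    simp
  have hlt : ∀ k, k < n → ‖e k - z k‖ < δ' := fun k hk => ht ⟨k, hk⟩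
  have hle2 : ∀ k, ‖e k - z k‖ ≤ 2 := fun k =>
    (norm_sub_le _ _).trans (by rw [hek k, hz k]; norm_num)
  set A : H →L[ℂ] H := Complex.I • ((t : ℂ) • K) with hAdef
  have hAφ : ∀ k, A (φ k) = (Complex.I * (x k * t)) • (φ k : H) := by
    intro k
    rw [hAdef, ContinuousLinearMap.smul_apply, ContinuousLinearMap.smul_apply, hx k,
      smul_smul, smul_smul]
    congr 1
    ring
  have hEφ : ∀ k, NormedSpace.exp A (φ k) = e k • (φ k : H) := by
    intro k
    rw [exp_apply_eigenvector A (φ k) _ (hAφ k), hedef]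
  have hrepr : HasSum (fun k => f j k • (φ k : H)) (ψ j) := φ.hasSum_repr (ψ j)
  have hE : HasSum (fun k => (e k * f j k) • (φ k : H)) (NormedSpace.exp A (ψ j)) := by
    have h := hrepr.mapL (NormedSpace.exp A)
    have heq : ∀ k, NormedSpace.exp A (f j k • (φ k : H)) = (e k * f j k) • (φ k : H) := by
      intro k
      rw [map_smul, hEφ k, smul_smul, mul_comm]
    simpa only [heq] using h
  have hzmem : Memℓp (fun k => z k * f j k) 2 :=
    memℓp_two_of_le (hfmem j) (by norm_num : (0:ℝ) ≤ 1)
      (fun k => by simp [norm_mul, hz k])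
  set Z : lp (fun _ : ℕ => ℂ) 2 := ⟨fun k => z k * f j k, hzmem⟩ with hZdef
  have hZsum : HasSum (fun k => (z k * f j k) • (φ k : H)) (φ.repr.symm Z) :=
    φ.hasSum_repr_symm Z
  have hχ : ∑' k : ℕ, z k • ⟪(φ k : H), ψ j⟫_ℂ • (φ k : H) = φ.repr.symm Z := by
    have heq : (fun k : ℕ => z k • ⟪(φ k : H), ψ j⟫_ℂ • (φ k : H))
        = fun k => (z k * f j k) • (φ k : H) := by
      funext k
      rw [hinner j k, smul_smul]
    rw [heq, hZsum.tsum_eq]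
  have hdmem : Memℓp (fun k => (e k - z k) * f j k) 2 :=
    memℓp_two_of_le (hfmem j) (by norm_num : (0:ℝ) ≤ 2)
      (fun k => by rw [norm_mul]; exact mul_le_mul_of_nonneg_right (hle2 k) (norm_nonneg _))
  set D : lp (fun _ : ℕ => ℂ) 2 := ⟨fun k => (e k - z k) * f j k, hdmem⟩ with hDdef
  have hDsum : HasSum (fun k => ((e k - z k) * f j k) • (φ k : H)) (φ.repr.symm D) :=
    φ.hasSum_repr_symm D
  have hdiff : HasSum (fun k => ((e k - z k) * f j k) • (φ k : H))
      (NormedSpace.exp A (ψ j) - φ.repr.symm Z) := by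
    have h := hE.sub hZsum
    simpa only [← sub_smul, ← sub_mul] using h
  have hkey : NormedSpace.exp A (ψ j) - φ.repr.symm Z = φ.repr.symm D := hdiff.unique hDsum
  rw [hχ, hkey, LinearIsometryEquiv.norm_map]
  -- estimate ‖D‖
  have hDsq : ‖D‖^2 = ∑' k, ‖(e k - z k) * f j k‖^2 := lp_norm_sq_eq_tsum D
  have hb1 : Summable (fun k => if k < n then ‖f j k‖^2 else (0:ℝ)) := by
    refine summable_of_ne_finset_zero (s := Finset.range n) fun k hk => ?_
    rw [if_neg (by simpa using hk)]
  have hb2 : Summable (fun k => if k < n then (0:ℝ) else ‖f j k‖^2) := by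
    have hdecomp : (fun k => if k < n then (0:ℝ) else ‖f j k‖^2)
        = fun k => ‖f j k‖^2 - (if k < n then ‖f j k‖^2 else 0) := by
      funext k
      by_cases h : k < n <;> simp [h]
    rw [hdecomp]
    exact (hfsq j).sub hb1
  have h1 : ∑' k, (if k < n then ‖f j k‖^2 else (0:ℝ)) = ∑ k ∈ Finset.range n, ‖f j k‖^2 := by
    rw [tsum_eq_sum (s := Finset.range n) (fun k hk => by rw [if_neg (by simpa using hk)])]
    exact Finset.sum_congr rfl fun k hk => by rw [if_pos (Finset.mem_range.1 hk)]
  have htsum2 : ∑' k, (if k < n then (0:ℝ) else ‖f j k‖^2)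
      = (∑' k, ‖f j k‖^2) - ∑ k ∈ Finset.range n, ‖f j k‖^2 := by
    have hdecomp : (fun k => if k < n then (0:ℝ) else ‖f j k‖^2)
        = fun k => ‖f j k‖^2 - (if k < n then ‖f j k‖^2 else 0) := by
      funext k
      by_cases h : k < n <;> simp [h]
    rw [hdecomp, Summable.tsum_sub (hfsq j) hb1, h1]
  have hpoint : ∀ k, ‖(e k - z k) * f j k‖^2
      ≤ δ'^2 * (if k < n then ‖f j k‖^2 else 0) + 4 * (if k < n then 0 else ‖f j k‖^2) := by
    intro k
    rw [norm_mul, mul_pow]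
    by_cases h : k < n
    · rw [if_pos h, if_pos h]
      have h2 := hlt k h
      have hsq : ‖e k - z k‖^2 ≤ δ'^2 := by nlinarith [norm_nonneg (e k - z k)]
      have h3 := mul_le_mul_of_nonneg_right hsq (sq_nonneg (‖f j k‖))
      linarith
    · rw [if_neg h, if_neg h]
      have h2 := hle2 k
      have hsq : ‖e k - z k‖^2 ≤ 4 := by nlinarith [norm_nonneg (e k - z k)]
      have h3 := mul_le_mul_of_nonneg_right hsq (sq_nonneg (‖f j k‖))
      linarith
  have hsummand : Summable (fun k => ‖(e k - z k) * f j k‖^2) := by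
    refine Summable.of_nonneg_of_le (fun k => by positivity) hpoint ?_
    exact (hb1.mul_left _).add (hb2.mul_left _)
  have hDle : ∑' k, ‖(e k - z k) * f j k‖^2
      ≤ δ'^2 * ‖ψ j‖^2 + 4 * (ε^2/64) := by
    have hstep := Summable.tsum_le_tsum hpoint hsummand ((hb1.mul_left _).add (hb2.mul_left _))
    have hsplit : ∑' k, (δ'^2 * (if k < n then ‖f j k‖^2 else 0)
          + 4 * (if k < n then 0 else ‖f j k‖^2))
        = δ'^2 * (∑' k, (if k < n then ‖f j k‖^2 else (0:ℝ)))
          + 4 * (∑' k, (if k < n then (0:ℝ) else ‖f j k‖^2)) := by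
      rw [Summable.tsum_add (hb1.mul_left _) (hb2.mul_left _), (hb1.tsum_mul_left _),
        (hb2.tsum_mul_left _)]
    rw [hsplit] at hstep
    have ht1 : ∑' k, (if k < n then ‖f j k‖^2 else (0:ℝ)) ≤ ‖ψ j‖^2 := by
      rw [h1, ← hfnormsq j]
      exact Summable.sum_le_tsum _ (fun k _ => by positivity) (hfsq j)
    have ht2 : ∑' k, (if k < n then (0:ℝ) else ‖f j k‖^2) ≤ ε^2/64 := by
      rw [htsum2]
      exact le_of_lt (hn j)
    have hd2 : (0:ℝ) ≤ δ'^2 := sq_nonneg _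
    have hm1 := mul_le_mul_of_nonneg_left ht1 hd2
    have hm2 := mul_le_mul_of_nonneg_left ht2 (by norm_num : (0:ℝ) ≤ 4)
    linarith
  have hfinal : ‖D‖^2 < ε^2 := by
    rw [hDsq]
    have hδψ : δ' * ‖ψ j‖ ≤ ε / 2 := by
      rw [hδ'def]
      rw [div_mul_eq_mul_div]
      rw [div_le_div_iff₀ (by linarith) (by norm_num)]
      have h4 := mul_le_mul_of_nonneg_left (hCbj j) hε.le
      linarith
    have hδψ2 : δ'^2 * ‖ψ j‖^2 ≤ ε^2/4 := by
      have h5 : (δ' * ‖ψ j‖)^2 ≤ (ε/2)^2 := pow_le_pow_left₀ (by positivity) hδψ 2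
      calc δ'^2 * ‖ψ j‖^2 = (δ' * ‖ψ j‖)^2 := by ring
        _ ≤ (ε/2)^2 := h5
        _ = ε^2/4 := by ring
    have hε2 : (0:ℝ) < ε^2 := by positivity
    linarith
  have hD0 := norm_nonneg D
  by_contra hcon
  push_neg at hcon
  have h6 : ε^2 ≤ ‖D‖^2 := pow_le_pow_left₀ hε.le hcon 2
  linarith
end

section
/- Let H be a complex Hilbert space, H_0 a bounded self-adjoint operator on H admitting a Hilbert basis of eigenvectors (pure point spectrum), and H_1, …, H_N bounded self-adjoint operators. For y ∈ ℝ^N write H(y) = H_0 + Σ_{j=1}^N y_j H_j. Then the strongly reachable set equals the restricted dynamical group: the closure, in the strong operator topology, of the set of all finite products exp(iτ_1 H(y^{(1)})) ⋯ exp(iτ_m H(y^{(m)})) with all τ_i > 0, equals the closure in the strong operator topology of the subgroup of invertible bounded operators generated by {exp(itH_j) : t ∈ ℝ, j = 0, …, N}. -/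
open scoped InnerProductSpace
open NormedSpace Pointwise

/-- The closure of a set of bounded operators in the strong operator topology,
characterized via finite families of vectors and `ε`-approximation. -/
def strongClosure {H : Type*} [NormedAddCommGroup H] [InnerProductSpace ℂ H]
    (S : Set (H →L[ℂ] H)) : Set (H →L[ℂ] H) :=
  {T | ∀ ε : ℝ, 0 < ε → ∀ (M : ℕ) (ψ : Fin M → H),
    ∃ W ∈ S, ∀ j : Fin M, ‖W (ψ j) - T (ψ j)‖ < ε}

section BanachAlgebra

variable {E : Type*} [NormedRing E] [NormedAlgebra ℂ E] [CompleteSpace E] [NormOneClass E]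

omit [CompleteSpace E] in
lemma aux_norm_coeff_smul_pow_le (x : E) (n : ℕ) :
    ‖((n.factorial : ℂ))⁻¹ • x ^ n‖ ≤ ‖x‖ ^ n / n.factorial := by
  rw [norm_smul, norm_inv]
  have h1 : ‖((n.factorial : ℂ))‖ = (n.factorial : ℝ) := by
    simp [Complex.norm_natCast]
  rw [h1, div_eq_inv_mul]
  gcongr
  exact norm_pow_le x n

omit [CompleteSpace E] in
lemma aux_norm_exp_le (x : E) : ‖exp x‖ ≤ Real.exp ‖x‖ := by
  rw [NormedSpace.exp_eq_tsum ℂ]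
  refine (norm_tsum_le_tsum_norm (NormedSpace.norm_expSeries_summable' x)).trans ?_
  rw [Real.exp_eq_exp_ℝ, NormedSpace.exp_eq_tsum_div]
  exact Summable.tsum_le_tsum (aux_norm_coeff_smul_pow_le x) (NormedSpace.norm_expSeries_summable' x)
    (NormedSpace.expSeries_div_summable ‖x‖)

lemma aux_norm_exp_sub_one_sub_le (x : E) :
    ‖exp x - 1 - x‖ ≤ ‖x‖ ^ 2 * Real.exp ‖x‖ := by
  have hh := NormedSpace.exp_series_hasSum_exp' (𝕂 := ℂ) x
  have hnorm : Summable fun n : ℕ => ‖(((n + 2).factorial : ℂ))⁻¹ • x ^ (n + 2)‖ :=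
    (summable_nat_add_iff 2).mpr (NormedSpace.norm_expSeries_summable' x)
  have h2 : HasSum (fun n : ℕ => (((n + 2).factorial : ℂ))⁻¹ • x ^ (n + 2))
      (exp x - ∑ i ∈ Finset.range 2, ((i.factorial : ℂ))⁻¹ • x ^ i) :=
    (hasSum_nat_add_iff' 2).mpr hh
  have h3 : exp x - 1 - x = ∑' n : ℕ, (((n + 2).factorial : ℂ))⁻¹ • x ^ (n + 2) := by
    rw [h2.tsum_eq]
    simp [Finset.sum_range_succ, sub_sub]
  rw [h3]
  refine (norm_tsum_le_tsum_norm hnorm).trans ?_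
  have key : ∀ n : ℕ, ‖(((n + 2).factorial : ℂ))⁻¹ • x ^ (n + 2)‖
      ≤ ‖x‖ ^ 2 * (‖x‖ ^ n / n.factorial) := by
    intro n
    refine (aux_norm_coeff_smul_pow_le x (n + 2)).trans ?_
    calc ‖x‖ ^ (n + 2) / ((n+2).factorial : ℝ) = ‖x‖ ^ 2 * (‖x‖ ^ n / ((n+2).factorial : ℝ)) := by
          rw [pow_add]; ring
    _ ≤ ‖x‖ ^ 2 * (‖x‖ ^ n / (n.factorial : ℝ)) := by
        gcongr
        omega
  refine (Summable.tsum_le_tsum key hnorm ((NormedSpace.expSeries_div_summable ‖x‖).mul_left _)).trans ?_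
  rw [tsum_mul_left, Real.exp_eq_exp_ℝ, NormedSpace.exp_eq_tsum_div]

omit [NormedAlgebra ℂ E] [CompleteSpace E] in
lemma aux_norm_pow_sub_pow_le (u v : E) (m : ℝ) (hm : 1 ≤ m) (hu : ‖u‖ ≤ m) (hv : ‖v‖ ≤ m) :
    ∀ n : ℕ, ‖u ^ n - v ^ n‖ ≤ n * m ^ n * ‖u - v‖ := by
  intro n
  induction n with
  | zero => simp
  | succ n ih =>
    have hm0 : (0:ℝ) ≤ m := by linarith
    have h1 : u ^ (n+1) - v ^ (n+1) = u * (u ^ n - v ^ n) + (u - v) * v ^ n := by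
      rw [pow_succ', pow_succ']; noncomm_ring
    rw [h1]
    have h2 : ‖u * (u ^ n - v ^ n)‖ ≤ m * (n * m ^ n * ‖u - v‖) := by
      refine (norm_mul_le _ _).trans ?_
      gcongr
    have h3 : ‖(u - v) * v ^ n‖ ≤ ‖u - v‖ * m ^ n := by
      refine (norm_mul_le _ _).trans ?_
      gcongr
      exact (norm_pow_le v n).trans (by gcongr)
    refine (norm_add_le _ _).trans ((add_le_add h2 h3).trans ?_)
    have h5 : m ^ n ≤ m ^ (n+1) := pow_le_pow_right₀ hm (Nat.le_succ n)
    push_cast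
    calc m * (↑n * m ^ n * ‖u - v‖) + ‖u - v‖ * m ^ n
        = ↑n * m ^ (n+1) * ‖u - v‖ + ‖u - v‖ * m ^ n := by ring
      _ ≤ ↑n * m ^ (n+1) * ‖u - v‖ + ‖u - v‖ * m ^ (n+1) := by
          gcongr
      _ = (↑n + 1) * m ^ (n+1) * ‖u - v‖ := by ring

lemma aux_trotter_formula (a b : E) :
    Filter.Tendsto (fun n : ℕ => (exp ((n : ℂ)⁻¹ • a) * exp ((n : ℂ)⁻¹ • b)) ^ n)
      Filter.atTop (nhds (exp (a + b))) := by
  letI : NormedAlgebra ℚ E := NormedAlgebra.restrictScalars ℚ ℂ E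
  set c : ℝ := ‖a‖ + ‖b‖ with hc
  have hc0 : 0 ≤ c := by positivity
  set E2 : ℝ := Real.exp (2 * c) with hE2
  have hE21 : 1 ≤ E2 := Real.one_le_exp (by linarith)
  set C : ℝ := E2 * E2 + 2 * E2 + c * E2 + 1 with hC
  set K : ℝ := Real.exp c * C * c ^ 2 with hK
  have key : ∀ n : ℕ, 1 ≤ n →
      ‖(exp ((n : ℂ)⁻¹ • a) * exp ((n : ℂ)⁻¹ • b)) ^ n - exp (a + b)‖ ≤ K / n := by
    intro n hn
    have hn1 : (1:ℝ) ≤ (n:ℝ) := by exact_mod_cast hn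
    have hn0 : (0:ℝ) < (n:ℝ) := by linarith
    have hnc : (n : ℂ) ≠ 0 := Nat.cast_ne_zero.mpr (by omega)
    set x : E := (n : ℂ)⁻¹ • a with hx
    set y : E := (n : ℂ)⁻¹ • b with hy
    set d : ℝ := c / n with hd
    have hd0 : 0 ≤ d := by positivity
    have hdc : d ≤ c := div_le_self hc0 hn1
    have hninv : ‖((n:ℂ))⁻¹‖ = (n:ℝ)⁻¹ := by
      rw [norm_inv]; norm_num
    have hnx : ‖x‖ = ‖a‖ / n := by rw [hx, norm_smul, hninv, div_eq_inv_mul]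
    have hny : ‖y‖ = ‖b‖ / n := by rw [hy, norm_smul, hninv, div_eq_inv_mul]
    have hnormx : ‖x‖ ≤ d := by
      rw [hnx, hd]; gcongr; rw [hc]; linarith [norm_nonneg b]
    have hnormy : ‖y‖ ≤ d := by
      rw [hny, hd]; gcongr; rw [hc]; linarith [norm_nonneg a]
    have hxyadd : x + y = (n : ℂ)⁻¹ • (a + b) := by rw [hx, hy, smul_add]
    have hnormxy : ‖x + y‖ ≤ d := by
      refine (norm_add_le x y).trans ?_
      rw [hnx, hny, hd, hc, ← add_div]
    have hupow : exp (x + y) ^ n = exp (a + b) := by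
      rw [← NormedSpace.exp_nsmul, hxyadd]
      congr 1
      rw [← Nat.cast_smul_eq_nsmul ℂ, smul_smul, mul_inv_cancel₀ hnc, one_smul]
    have hexp2 : ∀ z : E, ‖z‖ ≤ d → ‖exp z - 1 - z‖ ≤ d ^ 2 * E2 := by
      intro z hz
      refine (aux_norm_exp_sub_one_sub_le z).trans ?_
      have h2 : Real.exp ‖z‖ ≤ E2 := Real.exp_le_exp.mpr (by linarith)
      gcongr
    have hey : ‖exp y‖ ≤ E2 := (aux_norm_exp_le y).trans (Real.exp_le_exp.mpr (by linarith))
    have hid : exp x * exp y = (exp x - 1 - x) * exp y + (exp y - 1 - y)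
        + x * (exp y - 1 - y) + x * y + (1 + x + y) := by noncomm_ring
    have hdiff : exp (x + y) - exp x * exp y
        = (exp (x + y) - 1 - (x + y)) - ((exp x - 1 - x) * exp y + (exp y - 1 - y)
          + x * (exp y - 1 - y) + x * y) := by rw [hid]; noncomm_ring
    have huv : ‖exp (x + y) - exp x * exp y‖ ≤ d ^ 2 * C := by
      rw [hdiff]
      have t1 : ‖(exp x - 1 - x) * exp y‖ ≤ d ^ 2 * E2 * E2 := by
        refine (norm_mul_le _ _).trans ?_
        exact mul_le_mul (hexp2 x hnormx) hey (norm_nonneg _) (by positivity)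
      have t2 : ‖exp y - 1 - y‖ ≤ d ^ 2 * E2 := hexp2 y hnormy
      have t3 : ‖x * (exp y - 1 - y)‖ ≤ c * (d ^ 2 * E2) := by
        refine (norm_mul_le _ _).trans ?_
        exact mul_le_mul (hnormx.trans hdc) t2 (norm_nonneg _) hc0
      have t4 : ‖x * y‖ ≤ d ^ 2 := by
        refine (norm_mul_le _ _).trans ?_
        calc ‖x‖ * ‖y‖ ≤ d * d := mul_le_mul hnormx hnormy (norm_nonneg _) hd0
          _ = d ^ 2 := by ring
      have b1 : ‖exp (x + y) - 1 - (x + y)‖ ≤ d ^ 2 * E2 := hexp2 _ hnormxy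
      have hs1 := norm_sub_le (exp (x + y) - 1 - (x + y))
        ((exp x - 1 - x) * exp y + (exp y - 1 - y) + x * (exp y - 1 - y) + x * y)
      have hs2 := norm_add_le ((exp x - 1 - x) * exp y + (exp y - 1 - y)
        + x * (exp y - 1 - y)) (x * y)
      have hs3 := norm_add_le ((exp x - 1 - x) * exp y + (exp y - 1 - y))
        (x * (exp y - 1 - y))
      have hs4 := norm_add_le ((exp x - 1 - x) * exp y) (exp y - 1 - y)
      have hCC : d ^ 2 * C = d ^ 2 * E2 + (d ^ 2 * E2 * E2 + d ^ 2 * E2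
        + c * (d ^ 2 * E2) + d ^ 2) := by rw [hC]; ring
      linarith
    set m : ℝ := Real.exp d with hm
    have hm1 : 1 ≤ m := Real.one_le_exp hd0
    have hmu : ‖exp (x + y)‖ ≤ m := (aux_norm_exp_le _).trans (Real.exp_le_exp.mpr hnormxy)
    have hmv : ‖exp x * exp y‖ ≤ m := by
      refine (norm_mul_le _ _).trans ?_
      calc ‖exp x‖ * ‖exp y‖ ≤ Real.exp ‖x‖ * Real.exp ‖y‖ :=
            mul_le_mul (aux_norm_exp_le x) (aux_norm_exp_le y) (norm_nonneg _) (Real.exp_pos _).le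
        _ = Real.exp (‖x‖ + ‖y‖) := (Real.exp_add _ _).symm
        _ ≤ m := Real.exp_le_exp.mpr (by rw [hnx, hny, hd, hc]; rw [← add_div])
    have hmn : m ^ n = Real.exp c := by
      rw [hm, ← Real.exp_nat_mul, hd]
      congr 1
      field_simp
    have hpow := aux_norm_pow_sub_pow_le (exp (x + y)) (exp x * exp y) m hm1 hmu hmv n
    rw [hupow, hmn] at hpow
    have final : (n : ℝ) * Real.exp c * ‖exp (x + y) - exp x * exp y‖ ≤ K / n := by
      calc (n:ℝ) * Real.exp c * ‖exp (x + y) - exp x * exp y‖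
          ≤ (n:ℝ) * Real.exp c * (d ^ 2 * C) := by
            gcongr
        _ = K / n := by
            rw [hK, hd]
            field_simp
    calc ‖(exp x * exp y) ^ n - exp (a + b)‖
        = ‖exp (a + b) - (exp x * exp y) ^ n‖ := norm_sub_rev _ _
      _ ≤ (n : ℝ) * Real.exp c * ‖exp (x + y) - exp x * exp y‖ := hpow
      _ ≤ K / n := final
  rw [← tendsto_sub_nhds_zero_iff]
  refine squeeze_zero_norm' ?_ (tendsto_const_div_atTop_nhds_zero_nat K)
  exact Filter.eventually_atTop.mpr ⟨1, fun n hn => key n hn⟩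

lemma aux_unit_coe_exp_inv (u : Eˣ) (x : E) (h : ((u⁻¹ : Eˣ) : E) = exp x) :
    (u : E) = exp (-x) := by
  letI : NormedAlgebra ℚ E := NormedAlgebra.restrictScalars ℚ ℂ E
  have h1 : exp x * exp (-x) = 1 := by
    rw [← NormedSpace.exp_add_of_commute (Commute.neg_right (Commute.refl x))]
    simp
  calc (u : E) = (u : E) * (exp x * exp (-x)) := by rw [h1, mul_one]
    _ = ((u : E) * ((u⁻¹ : Eˣ) : E)) * exp (-x) := by rw [h, mul_assoc]
    _ = exp (-x) := by rw [Units.mul_inv, one_mul]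

omit [NormedAlgebra ℂ E] [CompleteSpace E] in
lemma aux_norm_ofFn_prod_le_one :
    ∀ (m : ℕ) (g : Fin m → E), (∀ i, ‖g i‖ ≤ 1) → ‖(List.ofFn g).prod‖ ≤ 1 := by
  intro m
  induction m with
  | zero => intro g _; simp
  | succ n ih =>
    intro g h
    rw [List.ofFn_succ, List.prod_cons]
    refine (norm_mul_le _ _).trans ?_
    exact mul_le_one₀ (h 0) (norm_nonneg _) (ih _ fun i => h i.succ)

end BanachAlgebra

lemma aux_recurrence_core (K : Finset ℕ) (μ : ℕ → ℝ) (δ R : ℝ) (hδ : 0 < δ) :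
    ∃ s : ℝ, R < s ∧ ∀ k ∈ K, ‖Complex.exp (Complex.I * s * μ k) - 1‖ < δ := by
  classical
  set f : ℕ → (K → ℂ) := fun n k => Complex.exp (Complex.I * n * μ k) with hf
  have hfnorm : ∀ (n : ℕ) (k : K), ‖f n k‖ = 1 := by
    intro n k
    rw [hf]
    simp only [Complex.norm_exp]
    have : (Complex.I * n * μ k).re = 0 := by simp
    rw [this, Real.exp_zero]
  have hbdd : ∀ n, f n ∈ Metric.closedBall (0 : K → ℂ) 1 := by
    intro n
    rw [Metric.mem_closedBall, dist_zero_right]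
    refine (pi_norm_le_iff_of_nonneg zero_le_one).mpr fun k => le_of_eq (hfnorm n k)
  obtain ⟨L, -, σ, hσ, hconv⟩ :=
    tendsto_subseq_of_bounded Metric.isBounded_closedBall hbdd
  rw [Metric.tendsto_atTop] at hconv
  obtain ⟨n0, hn0⟩ := hconv (δ / 2) (by linarith)
  set j : ℕ := max n0 (⌈R⌉₊ + σ n0 + 1) with hj
  have hjn0 : n0 ≤ j := le_max_left _ _
  have hσj : ⌈R⌉₊ + σ n0 + 1 ≤ σ j := le_trans (le_max_right _ _) (hσ.le_apply)
  have hgap : σ n0 < σ j := by omega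
  refine ⟨((σ j - σ n0 : ℕ) : ℝ), ?_, ?_⟩
  · have h1 : R ≤ (⌈R⌉₊ : ℝ) := Nat.le_ceil R
    have h2 : ⌈R⌉₊ + 1 ≤ σ j - σ n0 := by omega
    have h3 : ((⌈R⌉₊ + 1 : ℕ) : ℝ) ≤ ((σ j - σ n0 : ℕ) : ℝ) := by exact_mod_cast h2
    push_cast at h3
    linarith
  · intro k hk
    have hdist : dist (f (σ j)) (f (σ n0)) < δ :=
      calc dist (f (σ j)) (f (σ n0)) ≤ dist (f (σ j)) L + dist L (f (σ n0)) := dist_triangle _ _ _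
        _ < δ / 2 + δ / 2 := by
            have h1 := hn0 j hjn0
            have h2 := hn0 n0 le_rfl
            rw [dist_comm L]
            exact add_lt_add h1 h2
        _ = δ := by ring
    have hcoord : ‖f (σ j) (⟨k, hk⟩ : K) - f (σ n0) (⟨k, hk⟩ : K)‖ < δ := by
      have h4 := dist_le_pi_dist (f (σ j)) (f (σ n0)) (⟨k, hk⟩ : K)
      rw [dist_eq_norm] at h4
      exact lt_of_le_of_lt h4 hdist
    have habs : ‖Complex.exp (Complex.I * (σ n0 : ℕ) * μ k)‖ = 1 := hfnorm (σ n0) ⟨k, hk⟩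
    have key : Complex.exp (Complex.I * (σ n0 : ℕ) * μ k)
          * (Complex.exp (Complex.I * ((σ j - σ n0 : ℕ) : ℝ) * μ k) - 1)
        = f (σ j) (⟨k, hk⟩ : K) - f (σ n0) (⟨k, hk⟩ : K) := by
      rw [hf]
      dsimp only
      rw [mul_sub, mul_one, ← Complex.exp_add]
      congr 2
      push_cast [Nat.cast_sub hgap.le]
      ring
    calc ‖Complex.exp (Complex.I * ((σ j - σ n0 : ℕ) : ℝ) * μ k) - 1‖
        = ‖Complex.exp (Complex.I * (σ n0 : ℕ) * μ k)‖
          * ‖Complex.exp (Complex.I * ((σ j - σ n0 : ℕ) : ℝ) * μ k) - 1‖ := by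
          rw [habs, one_mul]
      _ = ‖f (σ j) (⟨k, hk⟩ : K) - f (σ n0) (⟨k, hk⟩ : K)‖ := by rw [← norm_mul, key]
      _ < δ := hcoord

section Hilbert

variable {H : Type*} [NormedAddCommGroup H] [InnerProductSpace ℂ H] [CompleteSpace H]

lemma aux_skew_star {B : H →L[ℂ] H} (hB : IsSelfAdjoint B) (t : ℝ) :
    star (Complex.I • ((t : ℂ) • B)) = -(Complex.I • ((t : ℂ) • B)) := by
  rw [star_smul, star_smul, hB.star_eq]
  simp [Complex.conj_ofReal]

lemma aux_exp_skew_isometry {B : H →L[ℂ] H} (hB : IsSelfAdjoint B) (t : ℝ) (ψ : H) :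
    ‖exp (Complex.I • ((t : ℂ) • B)) ψ‖ = ‖ψ‖ := by
  letI : NormedAlgebra ℚ (H →L[ℂ] H) := NormedAlgebra.restrictScalars ℚ ℂ _
  set xx := Complex.I • ((t : ℂ) • B) with hxx
  have hstar : star xx = -xx := aux_skew_star hB t
  set U := exp xx with hU
  have h1 : star U * U = 1 := by
    rw [hU, star_exp, hstar, ← NormedSpace.exp_add_of_commute (Commute.neg_left (Commute.refl xx))]
    simp
  have h4 : ContinuousLinearMap.adjoint U (U ψ) = ψ := by
    have h5 : ContinuousLinearMap.adjoint U (U ψ) = (star U * U) ψ := rfl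
    rw [h5, h1, ContinuousLinearMap.one_apply]
  have h2 : ⟪U ψ, U ψ⟫_ℂ = ⟪ψ, ψ⟫_ℂ := by
    rw [← ContinuousLinearMap.adjoint_inner_right U ψ (U ψ), h4]
  rw [@norm_eq_sqrt_re_inner ℂ, @norm_eq_sqrt_re_inner ℂ _ _ _ _ ψ, h2]

lemma aux_exp_skew_norm_le_one {B : H →L[ℂ] H} (hB : IsSelfAdjoint B) (t : ℝ) :
    ‖exp (Complex.I • ((t : ℂ) • B))‖ ≤ 1 := by
  refine ContinuousLinearMap.opNorm_le_bound _ zero_le_one fun ψ => ?_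
  rw [aux_exp_skew_isometry hB t ψ, one_mul]

lemma aux_exp_apply_eig {A : H →L[ℂ] H} {x : H} {c : ℂ} (h : A x = c • x) :
    exp A x = Complex.exp c • x := by
  have hpow : ∀ n : ℕ, (A ^ n) x = c ^ n • x := by
    intro n
    induction n with
    | zero => simp
    | succ n ih =>
      rw [pow_succ, pow_succ, ContinuousLinearMap.mul_apply, h, map_smul, ih,
        smul_smul, mul_comm]
  have hsum := NormedSpace.expSeries_summable' (𝕂 := ℂ) A
  have happ := (ContinuousLinearMap.apply ℂ H x).map_tsum hsum
  rw [NormedSpace.exp_eq_tsum ℂ]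
  simp only [ContinuousLinearMap.apply_apply] at happ
  rw [happ]
  have h2 : ∀ n : ℕ, ((n.factorial : ℂ)⁻¹ • A ^ n) x = ((n.factorial : ℂ)⁻¹ * c ^ n) • x := by
    intro n; rw [ContinuousLinearMap.smul_apply, hpow, smul_smul]
  simp_rw [h2]
  rw [Summable.tsum_smul_const]
  · congr 1
    have h6 := NormedSpace.exp_eq_tsum (𝕂 := ℂ) (𝔸 := ℂ)
    rw [Complex.exp_eq_exp_ℂ, h6]
    simp [smul_eq_mul]
  · simpa [smul_eq_mul] using NormedSpace.expSeries_summable' (𝕂 := ℂ) c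

-- strong closure lemmas

lemma aux_subset_strongClosure (S : Set (H →L[ℂ] H)) : S ⊆ strongClosure S := by
  intro T hT ε hε M ψ
  exact ⟨T, hT, fun j => by simpa using hε⟩

lemma aux_strongClosure_min {S T : Set (H →L[ℂ] H)} (h : S ⊆ strongClosure T) :
    strongClosure S ⊆ strongClosure T := by
  intro X hX ε hε M ψ
  obtain ⟨W, hW, hWa⟩ := hX (ε/2) (by linarith) M ψ
  obtain ⟨V, hV, hVa⟩ := h hW (ε/2) (by linarith) M ψ
  refine ⟨V, hV, fun j => ?_⟩
  have h3 : V (ψ j) - X (ψ j) = (V (ψ j) - W (ψ j)) + (W (ψ j) - X (ψ j)) := by abel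
  rw [h3]
  exact lt_of_le_of_lt (norm_add_le _ _) (by linarith [hVa j, hWa j])

lemma aux_mem_sc_of_norm_approx {S : Set (H →L[ℂ] H)} {T : H →L[ℂ] H}
    (h : ∀ δ : ℝ, 0 < δ → ∃ W ∈ S, ‖W - T‖ < δ) : T ∈ strongClosure S := by
  intro ε hε M ψ
  set C : ℝ := 1 + ∑ j : Fin M, ‖ψ j‖ with hC
  have hC0 : 0 < C := by positivity
  obtain ⟨W, hW, hWn⟩ := h (ε / (2 * C)) (by positivity)
  refine ⟨W, hW, fun j => ?_⟩
  have h1 : ‖ψ j‖ ≤ C := by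
    have h2 := Finset.single_le_sum (f := fun j : Fin M => ‖ψ j‖)
      (fun i _ => norm_nonneg _) (Finset.mem_univ j)
    rw [hC]; linarith
  calc ‖W (ψ j) - T (ψ j)‖ = ‖(W - T) (ψ j)‖ := by
        rw [ContinuousLinearMap.sub_apply]
    _ ≤ ‖W - T‖ * ‖ψ j‖ := (W - T).le_opNorm _
    _ ≤ (ε / (2 * C)) * C := by
        refine mul_le_mul hWn.le h1 (norm_nonneg _) ?_
        positivity
    _ = ε / 2 := by
        have h5 : C ≠ 0 := ne_of_gt hC0
        field_simp
    _ < ε := by linarith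

lemma aux_sc_mul_mem {S : Set (H →L[ℂ] H)}
    (hnorm : ∀ W ∈ S, ‖W‖ ≤ 1) (hmul : ∀ W₁ ∈ S, ∀ W₂ ∈ S, W₁ * W₂ ∈ S)
    {T₁ T₂ : H →L[ℂ] H} (h1 : T₁ ∈ strongClosure S) (h2 : T₂ ∈ strongClosure S) :
    T₁ * T₂ ∈ strongClosure S := by
  intro ε hε M ψ
  obtain ⟨W₂, hW₂, ha2⟩ := h2 (ε/2) (by linarith) M ψ
  obtain ⟨W₁, hW₁, ha1⟩ := h1 (ε/2) (by linarith) M (fun j => T₂ (ψ j))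
  refine ⟨W₁ * W₂, hmul _ hW₁ _ hW₂, fun j => ?_⟩
  have key : (W₁ * W₂) (ψ j) - (T₁ * T₂) (ψ j)
      = W₁ (W₂ (ψ j) - T₂ (ψ j)) + (W₁ (T₂ (ψ j)) - T₁ (T₂ (ψ j))) := by
    rw [ContinuousLinearMap.mul_apply, ContinuousLinearMap.mul_apply, map_sub]
    abel
  rw [key]
  refine lt_of_le_of_lt (norm_add_le _ _) ?_
  have hb : ‖W₁ (W₂ (ψ j) - T₂ (ψ j))‖ ≤ ‖W₂ (ψ j) - T₂ (ψ j)‖ := by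
    refine (W₁.le_opNorm _).trans ?_
    exact mul_le_of_le_one_left (norm_nonneg _) (hnorm _ hW₁)
  linarith [ha1 j, ha2 j]

end Hilbert

set_option maxHeartbeats 1600000 in
/-- Corollary to Proposition 3 of the paper: under a pure point spectrum drift and
bounded self-adjoint controls, the strongly reachable set equals the restricted
dynamical group, i.e. the strong closure of the subgroup of invertible bounded
operators generated by the exponentials `exp (i t H_j)`, `j = 0, …, N`. -/
theorem reachable_set_eq_restricted_dynamical_group
    {H : Type*} [NormedAddCommGroup H] [InnerProductSpace ℂ H] [CompleteSpace H]
    (φ : HilbertBasis ℕ ℂ H) (H0 : H →L[ℂ] H)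
    (hH0sa : ∀ ψ χ : H, ⟪H0 ψ, χ⟫_ℂ = ⟪ψ, H0 χ⟫_ℂ)
    (μ : ℕ → ℝ) (hμ : ∀ k, H0 (φ k) = (μ k : ℂ) • φ k)
    (N : ℕ) (Hc : Fin N → (H →L[ℂ] H))
    (hHcsa : ∀ j, ∀ ψ χ : H, ⟪Hc j ψ, χ⟫_ℂ = ⟪ψ, Hc j χ⟫_ℂ) :
    strongClosure {W : H →L[ℂ] H |
        ∃ (m : ℕ) (τ : Fin m → ℝ) (y : Fin m → Fin N → ℝ),
          (∀ i, 0 < τ i) ∧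
          W = (List.ofFn fun i : Fin m => NormedSpace.exp
            (Complex.I • ((τ i : ℂ) • (H0 + ∑ j : Fin N, (y i j : ℂ) • Hc j)))).prod} =
    strongClosure
      (((↑) : (H →L[ℂ] H)ˣ → (H →L[ℂ] H)) ''
        (Subgroup.closure {u : (H →L[ℂ] H)ˣ | ∃ t : ℝ,
            (u : H →L[ℂ] H) = NormedSpace.exp (Complex.I • ((t : ℂ) • H0)) ∨
            ∃ j : Fin N,
              (u : H →L[ℂ] H) = NormedSpace.exp (Complex.I • ((t : ℂ) • Hc j))} :
          Set (H →L[ℂ] H)ˣ)) := by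
  classical
  letI : NormedAlgebra ℚ (H →L[ℂ] H) := NormedAlgebra.restrictScalars ℚ ℂ _
  haveI : Nontrivial H := by
    have h := φ.orthonormal.1 0
    refine nontrivial_of_ne (φ 0) 0 fun h0 => ?_
    rw [h0] at h
    simp at h
  have hsaH0 : IsSelfAdjoint H0 := ContinuousLinearMap.isSelfAdjoint_iff_isSymmetric.mpr hH0sa
  have hsaHc : ∀ j, IsSelfAdjoint (Hc j) :=
    fun j => ContinuousLinearMap.isSelfAdjoint_iff_isSymmetric.mpr (hHcsa j)
  have hsaHy : ∀ y : Fin N → ℝ, IsSelfAdjoint (H0 + ∑ j : Fin N, (y j : ℂ) • Hc j) := by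
    intro y
    rw [IsSelfAdjoint, star_add, hsaH0.star_eq, star_sum]
    congr 1
    refine Finset.sum_congr rfl fun j _ => ?_
    rw [star_smul, (hsaHc j).star_eq, Complex.star_def, Complex.conj_ofReal]
  set A : Set (H →L[ℂ] H) := {W : H →L[ℂ] H |
        ∃ (m : ℕ) (τ : Fin m → ℝ) (y : Fin m → Fin N → ℝ),
          (∀ i, 0 < τ i) ∧
          W = (List.ofFn fun i : Fin m => NormedSpace.exp
            (Complex.I • ((τ i : ℂ) • (H0 + ∑ j : Fin N, (y i j : ℂ) • Hc j)))).prod} with hA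
  set Sgen : Set (H →L[ℂ] H)ˣ := {u : (H →L[ℂ] H)ˣ | ∃ t : ℝ,
            (u : H →L[ℂ] H) = NormedSpace.exp (Complex.I • ((t : ℂ) • H0)) ∨
            ∃ j : Fin N,
              (u : H →L[ℂ] H) = NormedSpace.exp (Complex.I • ((t : ℂ) • Hc j))} with hSgen
  -- basic properties of A
  have hA_one : (1 : H →L[ℂ] H) ∈ A := by
    refine ⟨0, Fin.elim0, Fin.elim0, fun i => i.elim0, ?_⟩
    simp
  have hA_norm : ∀ W ∈ A, ‖W‖ ≤ 1 := by
    rintro W ⟨m, τ, y, hτ, rfl⟩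
    refine aux_norm_ofFn_prod_le_one m _ fun i => ?_
    exact aux_exp_skew_norm_le_one (hsaHy (y i)) (τ i)
  have hA_mul : ∀ W₁ ∈ A, ∀ W₂ ∈ A, W₁ * W₂ ∈ A := by
    rintro W₁ ⟨m₁, τ₁, y₁, hτ₁, rfl⟩ W₂ ⟨m₂, τ₂, y₂, hτ₂, rfl⟩
    refine ⟨m₁ + m₂, Fin.append τ₁ τ₂, Fin.append y₁ y₂, ?_, ?_⟩
    · intro i
      refine Fin.addCases (fun i => ?_) (fun i => ?_) i
      · rw [Fin.append_left]; exact hτ₁ i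
      · rw [Fin.append_right]; exact hτ₂ i
    · rw [List.ofFn_add, List.prod_append]
      have e1 : (fun i : Fin m₁ => NormedSpace.exp
          (Complex.I • (((Fin.append τ₁ τ₂ (Fin.castAdd m₂ i) : ℝ) : ℂ) •
            (H0 + ∑ j : Fin N, ((Fin.append y₁ y₂ (Fin.castAdd m₂ i) j : ℝ) : ℂ) • Hc j))))
          = fun i : Fin m₁ => NormedSpace.exp
          (Complex.I • ((τ₁ i : ℂ) • (H0 + ∑ j : Fin N, (y₁ i j : ℂ) • Hc j))) := by
        funext i
        rw [Fin.append_left, Fin.append_left]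
      have e2 : (fun i : Fin m₂ => NormedSpace.exp
          (Complex.I • (((Fin.append τ₁ τ₂ (Fin.natAdd m₁ i) : ℝ) : ℂ) •
            (H0 + ∑ j : Fin N, ((Fin.append y₁ y₂ (Fin.natAdd m₁ i) j : ℝ) : ℂ) • Hc j))))
          = fun i : Fin m₂ => NormedSpace.exp
          (Complex.I • ((τ₂ i : ℂ) • (H0 + ∑ j : Fin N, (y₂ i j : ℂ) • Hc j))) := by
        funext i
        rw [Fin.append_right, Fin.append_right]
      rw [← e1, ← e2]
      rfl
  -- eigenvector action
  have hUapp : ∀ (r : ℝ) (k : ℕ), NormedSpace.exp (Complex.I • ((r : ℂ) • H0)) (φ k)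
      = Complex.exp (Complex.I * r * μ k) • φ k := by
    intro r k
    refine aux_exp_apply_eig ?_
    rw [ContinuousLinearMap.smul_apply, ContinuousLinearMap.smul_apply, hμ k]
    module
  -- the H0 exponentials with arbitrary time belong to the strong closure of A
  have memH0 : ∀ t : ℝ, NormedSpace.exp (Complex.I • ((t : ℂ) • H0)) ∈ strongClosure A := by
    intro t ε hε M ψ
    have happrox : ∀ j : Fin M, ∃ χ : H,
        (∃ c : ℕ →₀ ℂ, (c.sum fun i a => a • φ i) = χ) ∧ ‖ψ j - χ‖ < ε / 4 := by
      intro j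
      have hd : ψ j ∈ closure ((Submodule.span ℂ (Set.range φ) : Submodule ℂ H) : Set H) := by
        have h10 := φ.dense_span
        have h11 : ψ j ∈ (Submodule.span ℂ (Set.range ⇑φ)).topologicalClosure := by
          rw [h10]; trivial
        exact h11
      rw [Metric.mem_closure_iff] at hd
      obtain ⟨χ, hχ1, hχ2⟩ := hd (ε / 4) (by linarith)
      exact ⟨χ, Finsupp.mem_span_range_iff_exists_finsupp.mp hχ1, by rwa [dist_eq_norm] at hχ2⟩
    choose χ hc hχnorm using happrox
    choose c hcsum using hc
    set Kf : Finset ℕ := Finset.univ.biUnion (fun j : Fin M => (c j).support) with hKf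
    set Cc : ℝ := 1 + ∑ j : Fin M, ∑ k ∈ (c j).support, ‖c j k‖ with hCc
    have hCc0 : 0 < Cc := by positivity
    obtain ⟨s, hsgt, hsδ⟩ := aux_recurrence_core Kf μ (ε / (4 * Cc)) |t| (by positivity)
    set τ0 : ℝ := t + s with hτ0
    have hτ0pos : 0 < τ0 := by
      have h6 := neg_abs_le t
      rw [hτ0]
      linarith
    refine ⟨NormedSpace.exp (Complex.I • ((τ0 : ℂ) • H0)), ?_, ?_⟩
    · refine ⟨1, fun _ => τ0, fun _ _ => 0, fun _ => hτ0pos, ?_⟩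
      simp
    · intro j
      set U := NormedSpace.exp (Complex.I • ((τ0 : ℂ) • H0)) with hUdef
      set T := NormedSpace.exp (Complex.I • ((t : ℂ) • H0)) with hTdef
      have hχeq : χ j = ∑ k ∈ (c j).support, (c j k) • φ k := by
        rw [← hcsum j, Finsupp.sum]
      have hUχ : U (χ j) = ∑ k ∈ (c j).support,
          (c j k) • (Complex.exp (Complex.I * τ0 * μ k) • φ k) := by
        rw [hχeq, map_sum]
        exact Finset.sum_congr rfl fun k _ => by rw [map_smul, hUdef, hUapp]
      have hTχ : T (χ j) = ∑ k ∈ (c j).support,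
          (c j k) • (Complex.exp (Complex.I * t * μ k) • φ k) := by
        rw [hχeq, map_sum]
        exact Finset.sum_congr rfl fun k _ => by rw [map_smul, hTdef, hUapp]
      have hmid : ‖U (χ j) - T (χ j)‖ ≤ ε / 4 := by
        rw [hUχ, hTχ, ← Finset.sum_sub_distrib]
        refine (norm_sum_le _ _).trans ?_
        have hterm : ∀ k ∈ (c j).support,
            ‖(c j k) • (Complex.exp (Complex.I * τ0 * μ k) • φ k)
              - (c j k) • (Complex.exp (Complex.I * t * μ k) • φ k)‖
            ≤ ‖c j k‖ * (ε / (4 * Cc)) := by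
          intro k hk
          rw [← smul_sub, norm_smul, ← sub_smul, norm_smul]
          have hφ1 : ‖φ k‖ = 1 := φ.orthonormal.1 k
          rw [hφ1, mul_one]
          have hkK : k ∈ Kf := Finset.mem_biUnion.mpr ⟨j, Finset.mem_univ j, hk⟩
          have hsplit2 : Complex.exp (Complex.I * τ0 * μ k) - Complex.exp (Complex.I * t * μ k)
              = Complex.exp (Complex.I * t * μ k) * (Complex.exp (Complex.I * s * μ k) - 1) := by
            rw [mul_sub, mul_one, ← Complex.exp_add]
            congr 1
            rw [hτ0]
            push_cast
            ring
          have habs1 : ‖Complex.exp (Complex.I * t * μ k)‖ = 1 := by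
            simp only [Complex.norm_exp]
            have h7 : (Complex.I * t * μ k).re = 0 := by simp
            rw [h7, Real.exp_zero]
          rw [hsplit2, norm_mul, habs1, one_mul]
          have := (hsδ k hkK).le
          gcongr
        refine (Finset.sum_le_sum hterm).trans ?_
        rw [← Finset.sum_mul]
        have hsum_le : ∑ k ∈ (c j).support, ‖c j k‖ ≤ Cc := by
          have hle := Finset.single_le_sum
            (f := fun j : Fin M => ∑ k ∈ (c j).support, ‖c j k‖)
            (fun i _ => by positivity) (Finset.mem_univ j)
          rw [hCc]
          linarith
        calc (∑ k ∈ (c j).support, ‖c j k‖) * (ε / (4 * Cc)) ≤ Cc * (ε / (4 * Cc)) := by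
              gcongr
          _ = ε / 4 := by
              have h5 : Cc ≠ 0 := ne_of_gt hCc0
              field_simp
      have hsplit : U (ψ j) - T (ψ j)
          = U (ψ j - χ j) + (U (χ j) - T (χ j)) + T (χ j - ψ j) := by
        rw [map_sub, map_sub]
        abel
      have h1 : ‖U (ψ j - χ j)‖ < ε / 4 := by
        rw [hUdef, aux_exp_skew_isometry hsaH0 τ0]
        exact hχnorm j
      have h3 : ‖T (χ j - ψ j)‖ < ε / 4 := by
        rw [hTdef, aux_exp_skew_isometry hsaH0 t, norm_sub_rev]
        exact hχnorm j
      rw [hsplit]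
      refine lt_of_le_of_lt ((norm_add_le _ _).trans
        (add_le_add (norm_add_le _ _) le_rfl)) ?_
      linarith [hmid]
  -- the control exponentials belong to the strong closure of A
  have memHc : ∀ (j : Fin N) (t : ℝ),
      NormedSpace.exp (Complex.I • ((t : ℂ) • Hc j)) ∈ strongClosure A := by
    intro j t
    refine aux_mem_sc_of_norm_approx fun δ hδ => ?_
    set g : ℝ → (H →L[ℂ] H) :=
      fun τ => NormedSpace.exp (Complex.I • ((τ : ℂ) • H0 + (t : ℂ) • Hc j)) with hg
    have hgc : Continuous g := by
      refine NormedSpace.exp_continuous.comp ?_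
      refine Continuous.const_smul ?_ Complex.I
      exact (Complex.continuous_ofReal.smul continuous_const).add continuous_const
    have hg0 : g 0 = NormedSpace.exp (Complex.I • ((t : ℂ) • Hc j)) := by
      rw [hg]
      norm_num
    have hca : ContinuousAt g 0 := hgc.continuousAt
    rw [Metric.continuousAt_iff] at hca
    obtain ⟨η, hη, hball⟩ := hca δ hδ
    set τ0 : ℝ := η / 2 with hτ0'
    have hτ0pos : 0 < τ0 := by rw [hτ0']; linarith
    have hdist : dist (g τ0) (g 0) < δ := by
      refine hball ?_
      rw [Real.dist_eq, sub_zero, abs_of_pos hτ0pos, hτ0']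
      linarith
    set y0 : Fin N → ℝ := fun j' => if j' = j then t / τ0 else 0 with hy0
    refine ⟨NormedSpace.exp (Complex.I • ((τ0 : ℂ) •
      (H0 + ∑ j' : Fin N, ((y0 j' : ℝ) : ℂ) • Hc j'))),
      ⟨1, fun _ => τ0, fun _ => y0, fun _ => hτ0pos, by simp⟩, ?_⟩
    have hsum : ∑ j' : Fin N, ((y0 j' : ℝ) : ℂ) • Hc j' = ((t / τ0 : ℝ) : ℂ) • Hc j := by
      rw [hy0]
      simp [apply_ite (fun r : ℝ => (r : ℂ)), ite_smul]
    have harg : Complex.I • ((τ0 : ℂ) • (H0 + ((t / τ0 : ℝ) : ℂ) • Hc j))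
        = Complex.I • ((τ0 : ℂ) • H0 + (t : ℂ) • Hc j) := by
      have hτ0ne : (τ0 : ℂ) ≠ 0 := Complex.ofReal_ne_zero.mpr (ne_of_gt hτ0pos)
      rw [smul_add]
      congr 1
      rw [smul_smul]
      congr 1
      push_cast
      rw [mul_comm, div_mul_cancel₀ _ hτ0ne]
    rw [hsum, harg, ← hg0]
    rw [← dist_eq_norm]
    exact hdist
  -- direction 1 : A is contained in the strong closure of the group
  set Mon : Submonoid (H →L[ℂ] H) :=
    Submonoid.map (Units.coeHom (H →L[ℂ] H)) (Subgroup.closure Sgen).toSubmonoid with hMon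
  have hMonG : (Mon : Set (H →L[ℂ] H))
      = ((↑) : (H →L[ℂ] H)ˣ → (H →L[ℂ] H)) '' (Subgroup.closure Sgen : Set (H →L[ℂ] H)ˣ) := by
    ext x
    constructor
    · rintro ⟨u, hu, rfl⟩
      exact ⟨u, hu, rfl⟩
    · rintro ⟨u, hu, rfl⟩
      exact ⟨u, hu, rfl⟩
  have hgen0 : ∀ s : ℝ, NormedSpace.exp (Complex.I • ((s : ℂ) • H0)) ∈ Mon := by
    intro s
    refine ⟨(NormedSpace.isUnit_exp (Complex.I • ((s : ℂ) • H0))).unit, ?_,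
      (NormedSpace.isUnit_exp _).unit_spec⟩
    exact Subgroup.subset_closure ⟨s, Or.inl (IsUnit.unit_spec _)⟩
  have hgenj : ∀ (j : Fin N) (s : ℝ),
      NormedSpace.exp (Complex.I • ((s : ℂ) • Hc j)) ∈ Mon := by
    intro j s
    refine ⟨(NormedSpace.isUnit_exp (Complex.I • ((s : ℂ) • Hc j))).unit, ?_,
      (NormedSpace.isUnit_exp _).unit_spec⟩
    exact Subgroup.subset_closure ⟨s, Or.inr ⟨j, IsUnit.unit_spec _⟩⟩
  have htrot : ∀ (F : Finset (Fin N)) (y : Fin N → ℝ) (s : ℝ),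
      NormedSpace.exp (Complex.I • ((s : ℂ) • (H0 + ∑ j ∈ F, (y j : ℂ) • Hc j)))
        ∈ Mon.topologicalClosure := by
    intro F
    induction F using Finset.induction_on with
    | empty =>
      intro y s
      simpa using Mon.le_topologicalClosure (hgen0 s)
    | @insert j0 F hj0 ih =>
      intro y s
      have hsplit : Complex.I • ((s : ℂ) • (H0 + ∑ j ∈ insert j0 F, (y j : ℂ) • Hc j))
          = (Complex.I • ((s : ℂ) • (H0 + ∑ j ∈ F, (y j : ℂ) • Hc j)))
            + (Complex.I • (((s * y j0 : ℝ) : ℂ) • Hc j0)) := by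
        rw [Finset.sum_insert hj0]
        push_cast
        module
      rw [hsplit]
      have hclosed : IsClosed (Mon.topologicalClosure : Set (H →L[ℂ] H)) :=
        isClosed_closure
      refine hclosed.mem_of_tendsto (aux_trotter_formula _ _)
        (Filter.Eventually.of_forall fun n => ?_)
      have ha : (n : ℂ)⁻¹ • (Complex.I • ((s : ℂ) • (H0 + ∑ j ∈ F, (y j : ℂ) • Hc j)))
          = Complex.I • (((s / n : ℝ) : ℂ) • (H0 + ∑ j ∈ F, (y j : ℂ) • Hc j)) := by
        push_cast
        module
      have hb : (n : ℂ)⁻¹ • (Complex.I • (((s * y j0 : ℝ) : ℂ) • Hc j0))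
          = Complex.I • (((s * y j0 / n : ℝ) : ℂ) • Hc j0) := by
        push_cast
        module
      rw [ha, hb]
      refine Submonoid.pow_mem _ (Submonoid.mul_mem _ ?_ ?_) n
      · exact ih y (s / n)
      · exact Mon.le_topologicalClosure (hgenj j0 (s * y j0 / n))
  have hdir1 : A ⊆ strongClosure
      (((↑) : (H →L[ℂ] H)ˣ → (H →L[ℂ] H)) '' (Subgroup.closure Sgen : Set (H →L[ℂ] H)ˣ)) := by
    rintro W ⟨m, τ, y, hτ, rfl⟩
    have hW : (List.ofFn fun i : Fin m => NormedSpace.exp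
        (Complex.I • ((τ i : ℂ) • (H0 + ∑ j : Fin N, (y i j : ℂ) • Hc j)))).prod
        ∈ Mon.topologicalClosure := by
      refine Submonoid.list_prod_mem _ fun x hx => ?_
      rw [List.mem_ofFn] at hx
      obtain ⟨i, rfl⟩ := hx
      exact htrot Finset.univ (y i) (τ i)
    refine aux_mem_sc_of_norm_approx fun δ hδ => ?_
    have hW' : (List.ofFn fun i : Fin m => NormedSpace.exp
        (Complex.I • ((τ i : ℂ) • (H0 + ∑ j : Fin N, (y i j : ℂ) • Hc j)))).prod
        ∈ closure (Mon : Set (H →L[ℂ] H)) := hW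
    rw [Metric.mem_closure_iff] at hW'
    obtain ⟨w, hwmem, hdist⟩ := hW' δ hδ
    rw [hMonG] at hwmem
    refine ⟨w, hwmem, ?_⟩
    rw [← dist_eq_norm, dist_comm]
    exact hdist
  -- direction 2 : the group is contained in the strong closure of A
  have hdir2 : (((↑) : (H →L[ℂ] H)ˣ → (H →L[ℂ] H)) ''
      (Subgroup.closure Sgen : Set (H →L[ℂ] H)ˣ)) ⊆ strongClosure A := by
    rintro x ⟨u, hu, rfl⟩
    have hu' : u ∈ Submonoid.closure (Sgen ∪ Sgen⁻¹) := by
      have h8 : u ∈ (Subgroup.closure Sgen).toSubmonoid := hu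
      rwa [Subgroup.closure_toSubmonoid] at h8
    refine Submonoid.closure_induction
      (motive := fun v _ => ((v : (H →L[ℂ] H)ˣ) : H →L[ℂ] H) ∈ strongClosure A) ?_ ?_ ?_ hu'
    · rintro v (hv | hvinv)
      · obtain ⟨t, hv0 | ⟨jj, hvj⟩⟩ := hv
        · rw [hv0]; exact memH0 t
        · rw [hvj]; exact memHc jj t
      · rw [Set.mem_inv] at hvinv
        obtain ⟨t, hv0 | ⟨jj, hvj⟩⟩ := hvinv
        · have h9 := aux_unit_coe_exp_inv v _ hv0
          rw [h9]
          have hneg : -(Complex.I • ((t : ℂ) • H0))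
              = Complex.I • (((-t : ℝ) : ℂ) • H0) := by
            push_cast
            module
          rw [hneg]
          exact memH0 (-t)
        · have h9 := aux_unit_coe_exp_inv v _ hvj
          rw [h9]
          have hneg : -(Complex.I • ((t : ℂ) • Hc jj))
              = Complex.I • (((-t : ℝ) : ℂ) • Hc jj) := by
            push_cast
            module
          rw [hneg]
          exact memHc jj (-t)
    · simpa using aux_subset_strongClosure A hA_one
    · intro a b ha hb hpa hpb
      rw [Units.val_mul]
      exact aux_sc_mul_mem hA_norm hA_mul hpa hpb
  exact Set.Subset.antisymm (aux_strongClosure_min hdir1) (aux_strongClosure_min hdir2)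
end

section
/- Let H_0, H_1, …, H_N be bounded self-adjoint operators on a complex Hilbert space H, and for y ∈ ℝ^N write H(y) = H_0 + Σ_{j=1}^N y_j H_j. Then the dynamical group equals the restricted dynamical group: the closure, in the strong operator topology, of the subgroup of invertible bounded operators generated by {exp(itH(y)) : t ∈ ℝ, y ∈ ℝ^N} equals the closure in the strong operator topology of the subgroup generated by {exp(itH_j) : t ∈ ℝ, j = 0, …, N}. -/
open scoped InnerProductSpace

open NormedSpace

set_option maxHeartbeats 1000000

private lemma tsum_shift2 {M : Type*} [AddCommGroup M] [TopologicalSpace M]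
    [IsTopologicalAddGroup M] [T2Space M] {f : ℕ → M} (hf : Summable f) :
    ∑' n, f n = f 0 + f 1 + ∑' n, f (n + 2) := by
  rw [hf.tsum_eq_zero_add, Summable.tsum_eq_zero_add ((summable_nat_add_iff 1).mpr hf), add_assoc]

private lemma list_norm_sum_le {M : Type*} [SeminormedAddCommGroup M] (L : List M) :
    ‖L.sum‖ ≤ (L.map norm).sum := by
  induction L with
  | nil => simp
  | cons x L ih =>
    simp only [List.sum_cons, List.map_cons]
    exact (norm_add_le _ _).trans (by gcongr)

section Analytic
variable {𝔸 : Type*} [NormedRing 𝔸] [NormedAlgebra ℂ 𝔸] [CompleteSpace 𝔸]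

private lemma real_exp_tail (s : ℝ) :
    ∑' n : ℕ, s ^ (n + 2) / (n + 2).factorial = Real.exp s - 1 - s := by
  have hg : Summable (fun n : ℕ => s ^ n / n.factorial) := Real.summable_pow_div_factorial s
  have h0 : Real.exp s = ∑' n : ℕ, s ^ n / n.factorial := by
    rw [Real.exp_eq_exp_ℝ, exp_eq_tsum_div]
  rw [h0, tsum_shift2 hg]
  simp only [pow_zero, Nat.factorial_zero, Nat.cast_one, div_one, pow_one, Nat.factorial_one]
  ring

private lemma norm_exp_sub_one_sub_id_le (x : 𝔸) :
    ‖exp x - 1 - x‖ ≤ Real.exp ‖x‖ - 1 - ‖x‖ := by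
  have hf : Summable (fun n : ℕ => ((n.factorial : ℂ))⁻¹ • x ^ n) := expSeries_summable' x
  have hexp : exp x = ∑' n : ℕ, ((n.factorial : ℂ))⁻¹ • x ^ n := by
    rw [exp_eq_tsum ℂ]
  have hkey : exp x - 1 - x = ∑' n : ℕ, (((n + 2).factorial : ℂ))⁻¹ • x ^ (n + 2) := by
    rw [hexp, tsum_shift2 hf]
    simp [Nat.factorial]
    abel
  rw [hkey, ← real_exp_tail ‖x‖]
  have hnormsum : Summable (fun n : ℕ => ‖(((n + 2).factorial : ℂ))⁻¹ • x ^ (n + 2)‖) :=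
    (summable_nat_add_iff 2).mpr (norm_expSeries_summable' x)
  refine (norm_tsum_le_tsum_norm hnormsum).trans (Summable.tsum_le_tsum ?_ hnormsum
    ((summable_nat_add_iff 2).mpr (Real.summable_pow_div_factorial ‖x‖)))
  intro n
  rw [norm_smul]
  have h1 : ‖(((n + 2).factorial : ℂ))⁻¹‖ = ((n + 2).factorial : ℝ)⁻¹ := by
    rw [norm_inv, Complex.norm_natCast]
  rw [h1, div_eq_inv_mul]
  exact mul_le_mul_of_nonneg_left (norm_pow_le' x (by omega)) (by positivity)

private lemma norm_exp_le (hone : ‖(1 : 𝔸)‖ ≤ 1) (x : 𝔸) : ‖exp x‖ ≤ Real.exp ‖x‖ := by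
  have h := norm_exp_sub_one_sub_id_le x
  have e : exp x = (exp x - 1 - x) + 1 + x := by abel
  have h2 : ‖exp x‖ ≤ ‖exp x - 1 - x‖ + ‖(1:𝔸)‖ + ‖x‖ := by
    conv_lhs => rw [e]
    exact (norm_add_le _ _).trans (add_le_add_left (norm_add_le _ _) _)
  nlinarith [norm_nonneg x]

/-- The key product estimate: `‖∏ exp xᵢ - 1 - ∑ xᵢ‖ ≤ e^s - 1 - s`. -/
private lemma norm_list_prod_exp_sub_le (hone : ‖(1 : 𝔸)‖ ≤ 1) (L : List 𝔸) :
    ‖(L.map (fun a => exp a)).prod - 1 - L.sum‖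
      ≤ Real.exp ((L.map norm).sum) - 1 - (L.map norm).sum := by
  induction L with
  | nil => simp
  | cons x L ih =>
    have hs : (0:ℝ) ≤ (L.map norm).sum := by
      apply List.sum_nonneg; intro a ha
      simp only [List.mem_map] at ha
      obtain ⟨b, _, rfl⟩ := ha
      exact norm_nonneg b
    set S := L.sum
    set P := (L.map (fun a => exp a)).prod
    set s := (L.map norm).sum
    have hnS : ‖S‖ ≤ s := list_norm_sum_le L
    have key : exp x * P - 1 - (x + S)
        = exp x * (P - 1 - S) + (exp x - 1 - x) + (exp x - 1) * S := by
      noncomm_ring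
    have hP : ‖exp x * P - 1 - (x + S)‖ ≤
        Real.exp ‖x‖ * (Real.exp s - 1 - s) + (Real.exp ‖x‖ - 1 - ‖x‖)
          + (Real.exp ‖x‖ - 1) * s := by
      rw [key]
      refine le_trans ((norm_add_le _ _).trans (add_le_add_left (norm_add_le _ _) _)) ?_
      gcongr
      · exact (norm_mul_le _ _).trans
          (mul_le_mul (norm_exp_le hone x) ih (norm_nonneg _) (Real.exp_pos _).le)
      · exact norm_exp_sub_one_sub_id_le x
      · refine (norm_mul_le _ _).trans (mul_le_mul ?_ hnS (norm_nonneg _) ?_)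
        · have h := norm_exp_sub_one_sub_id_le x
          have : ‖exp x - 1‖ ≤ ‖exp x - 1 - x‖ + ‖x‖ := by
            simpa using norm_add_le (exp x - 1 - x) x
          nlinarith
        · nlinarith [Real.add_one_le_exp ‖x‖, norm_nonneg x]
    simp only [List.map_cons, List.prod_cons, List.sum_cons]
    refine hP.trans (le_of_eq ?_)
    rw [Real.exp_add]
    ring

private lemma real_exp_quad {x : ℝ} (hx : 0 ≤ x) :
    Real.exp x - 1 - x ≤ x ^ 2 * Real.exp x := by
  rcases le_or_gt 1 x with h | h
  · nlinarith [Real.exp_pos x,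
      mul_nonneg (by nlinarith [sq_nonneg (x - 1)] : (0:ℝ) ≤ x ^ 2 - 1) (Real.exp_pos x).le]
  · have h1 : 1 - x ≤ Real.exp (-x) := by linarith [Real.add_one_le_exp (-x)]
    have h2 : Real.exp x * Real.exp (-x) = 1 := by rw [← Real.exp_add]; simp
    have h3 : Real.exp x * (1 - x) ≤ 1 := by
      nlinarith [Real.exp_pos x, mul_le_mul_of_nonneg_left h1 (Real.exp_pos x).le]
    nlinarith [mul_le_mul_of_nonneg_right h3 (by linarith : (0:ℝ) ≤ 1 + x)]

private lemma real_exp_mono_aux {a b : ℝ} (ha : 0 ≤ a) (hab : a ≤ b) :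
    Real.exp a - 1 - a ≤ Real.exp b - 1 - b := by
  have h1 : Real.exp b = Real.exp a * Real.exp (b - a) := by rw [← Real.exp_add]; ring_nf
  nlinarith [Real.add_one_le_exp (b - a), Real.one_le_exp ha, Real.exp_pos a]

private lemma norm_pow_le_of (hone : ‖(1 : 𝔸)‖ ≤ 1) {y : 𝔸} {M : ℝ} (hy : ‖y‖ ≤ M)
    (hM : 1 ≤ M) (n : ℕ) : ‖y ^ n‖ ≤ M ^ n := by
  rcases Nat.eq_zero_or_pos n with rfl | hn
  · simpa using hone
  · exact (norm_pow_le' y hn).trans (pow_le_pow_left₀ (norm_nonneg y) hy n)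

private lemma norm_pow_sub_pow_le (hone : ‖(1 : 𝔸)‖ ≤ 1) {x y : 𝔸} {M : ℝ} (hM : 1 ≤ M)
    (hx : ‖x‖ ≤ M) (hy : ‖y‖ ≤ M) (n : ℕ) :
    ‖x ^ n - y ^ n‖ ≤ n * M ^ n * ‖x - y‖ := by
  induction n with
  | zero => simp
  | succ n ih =>
    have key : x ^ (n + 1) - y ^ (n + 1) = x * (x ^ n - y ^ n) + (x - y) * y ^ n := by
      rw [pow_succ' x, pow_succ' y]
      noncomm_ring
    have h1 : ‖x ^ (n + 1) - y ^ (n + 1)‖ ≤ ‖x * (x ^ n - y ^ n)‖ + ‖(x - y) * y ^ n‖ := by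
      rw [key]; exact norm_add_le _ _
    have h2 : ‖x * (x ^ n - y ^ n)‖ ≤ M * (n * M ^ n * ‖x - y‖) :=
      (norm_mul_le _ _).trans (mul_le_mul hx ih (norm_nonneg _) (by linarith))
    have h3 : ‖(x - y) * y ^ n‖ ≤ ‖x - y‖ * M ^ n :=
      (norm_mul_le _ _).trans
        (mul_le_mul_of_nonneg_left (norm_pow_le_of hone hy hM n) (norm_nonneg _))
    have hMn : (0:ℝ) ≤ M ^ n := by positivity
    have hMn' : M ^ n ≤ M ^ (n + 1) := by
      calc M ^ n = 1 * M ^ n := (one_mul _).symm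
      _ ≤ M * M ^ n := by gcongr
      _ = M ^ (n + 1) := by ring
    have hd : (0:ℝ) ≤ ‖x - y‖ := norm_nonneg (x - y)
    push_cast
    calc ‖x ^ (n + 1) - y ^ (n + 1)‖ ≤ M * ((n:ℝ) * M ^ n * ‖x - y‖) + ‖x - y‖ * M ^ n :=
          h1.trans (add_le_add h2 h3)
      _ = (n:ℝ) * M ^ (n + 1) * ‖x - y‖ + M ^ n * ‖x - y‖ := by ring
      _ ≤ (n:ℝ) * M ^ (n + 1) * ‖x - y‖ + M ^ (n + 1) * ‖x - y‖ := by
          exact add_le_add_right (mul_le_mul_of_nonneg_right hMn' hd) _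
      _ = ((n:ℝ) + 1) * M ^ (n + 1) * ‖x - y‖ := by ring

private lemma trotter (hone : ‖(1 : 𝔸)‖ ≤ 1) (L : List 𝔸) {ε : ℝ} (hε : 0 < ε) :
    ∃ n₀ : ℕ, 0 < n₀ ∧ ∀ m : ℕ, n₀ ≤ m →
      ‖(L.map (fun a => exp ((m : ℂ)⁻¹ • a))).prod ^ m - exp L.sum‖ < ε := by
  set s := (L.map norm).sum with hs_def
  have hs0 : (0:ℝ) ≤ s := by
    apply List.sum_nonneg; intro a ha
    simp only [List.mem_map] at ha
    obtain ⟨b, _, rfl⟩ := ha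
    exact norm_nonneg b
  set C := 2 * s ^ 2 * Real.exp s * Real.exp s with hC_def
  have hC0 : 0 ≤ C := by positivity
  obtain ⟨n₀, hn₀⟩ := exists_nat_gt (C / ε)
  refine ⟨n₀ + 1, Nat.succ_pos _, fun m hm => ?_⟩
  have hm1 : 1 ≤ m := le_trans (Nat.succ_le_succ (Nat.zero_le _)) hm
  have hmpos : (0:ℝ) < m := by exact_mod_cast Nat.lt_of_lt_of_le (Nat.succ_pos _) hm
  have hmne : (m:ℂ) ≠ 0 := by exact_mod_cast (Nat.one_le_iff_ne_zero.mp hm1)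
  set u := s / m with hu_def
  have hu0 : 0 ≤ u := by positivity
  have hus : u ≤ s := by
    rw [hu_def, div_le_iff₀ hmpos]
    nlinarith [(by exact_mod_cast hm1 : (1:ℝ) ≤ (m:ℝ))]
  have hnormsmul : ∀ a : 𝔸, ‖(m:ℂ)⁻¹ • a‖ = (m:ℝ)⁻¹ * ‖a‖ := by
    intro a
    rw [norm_smul, norm_inv, Complex.norm_natCast]
  -- the scaled list
  set L' := L.map (fun a => (m:ℂ)⁻¹ • a) with hL'_def
  have hL'norm : (L'.map norm).sum = u := by
    rw [hL'_def, List.map_map]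
    have : (norm ∘ fun a : 𝔸 => (m:ℂ)⁻¹ • a) = fun a : 𝔸 => (m:ℝ)⁻¹ * ‖a‖ := by
      funext a; exact hnormsmul a
    rw [this, List.sum_map_mul_left, hu_def, div_eq_inv_mul]
  have hL'sum : L'.sum = (m:ℂ)⁻¹ • L.sum := by
    rw [hL'_def, ← List.smul_sum]
  set X := (L.map (fun a => exp ((m : ℂ)⁻¹ • a))).prod with hX_def
  set Y := exp ((m:ℂ)⁻¹ • L.sum) with hY_def
  have hXeq : X = (L'.map (fun a => exp a)).prod := by
    rw [hL'_def, List.map_map]; rfl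
  have hnS' : ‖(m:ℂ)⁻¹ • L.sum‖ ≤ u := by
    rw [hnormsmul]
    rw [hu_def, div_eq_inv_mul]
    exact mul_le_mul_of_nonneg_left (list_norm_sum_le L) (by positivity)
  have h1 : ‖X - 1 - (m:ℂ)⁻¹ • L.sum‖ ≤ Real.exp u - 1 - u := by
    rw [hXeq, ← hL'sum, ← hL'norm]
    exact norm_list_prod_exp_sub_le hone L'
  have h2 : ‖Y - 1 - (m:ℂ)⁻¹ • L.sum‖ ≤ Real.exp u - 1 - u := by
    refine (norm_exp_sub_one_sub_id_le _).trans (real_exp_mono_aux (norm_nonneg _) hnS')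
  have hXY : ‖X - Y‖ ≤ 2 * (Real.exp u - 1 - u) := by
    have e : X - Y = (X - 1 - (m:ℂ)⁻¹ • L.sum) - (Y - 1 - (m:ℂ)⁻¹ • L.sum) := by abel
    rw [e]
    exact (norm_sub_le _ _).trans (by linarith)
  have hXn : ‖X‖ ≤ Real.exp u := by
    have e : X = (X - 1 - (m:ℂ)⁻¹ • L.sum) + 1 + (m:ℂ)⁻¹ • L.sum := by abel
    have h3 : ‖X‖ ≤ ‖X - 1 - (m:ℂ)⁻¹ • L.sum‖ + ‖(1:𝔸)‖ + ‖(m:ℂ)⁻¹ • L.sum‖ := by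
      conv_lhs => rw [e]
      exact (norm_add_le _ _).trans (add_le_add_left (norm_add_le _ _) _)
    linarith
  have hYn : ‖Y‖ ≤ Real.exp u :=
    (norm_exp_le hone _).trans (Real.exp_le_exp.mpr hnS')
  have hM1 : 1 ≤ Real.exp u := Real.one_le_exp hu0
  have hpow : ‖X ^ m - Y ^ m‖ ≤ m * (Real.exp u) ^ m * ‖X - Y‖ :=
    norm_pow_sub_pow_le hone hM1 hXn hYn m
  have hYm : Y ^ m = exp L.sum := by
    letI : NormedAlgebra ℚ 𝔸 := NormedAlgebra.restrictScalars ℚ ℂ 𝔸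
    rw [hY_def, ← exp_nsmul, ← Nat.cast_smul_eq_nsmul ℂ, smul_smul,
      mul_inv_cancel₀ hmne, one_smul]
  have hexpum : (Real.exp u) ^ m = Real.exp s := by
    rw [← Real.exp_nat_mul, hu_def]
    congr 1
    field_simp
  have hexpu_le : Real.exp u ≤ Real.exp s := Real.exp_le_exp.mpr hus
  have hquad : Real.exp u - 1 - u ≤ u ^ 2 * Real.exp u := real_exp_quad hu0
  have hbound : ‖X ^ m - exp L.sum‖ ≤ C / m := by
    calc ‖X ^ m - exp L.sum‖ = ‖X ^ m - Y ^ m‖ := by rw [hYm]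
      _ ≤ m * (Real.exp u) ^ m * ‖X - Y‖ := hpow
      _ = m * Real.exp s * ‖X - Y‖ := by rw [hexpum]
      _ ≤ m * Real.exp s * (2 * (Real.exp u - 1 - u)) := by
          have : (0:ℝ) ≤ m * Real.exp s := by positivity
          exact mul_le_mul_of_nonneg_left hXY this
      _ ≤ m * Real.exp s * (2 * (u ^ 2 * Real.exp u)) := by
          have : (0:ℝ) ≤ m * Real.exp s := by positivity
          have h4 : 2 * (Real.exp u - 1 - u) ≤ 2 * (u ^ 2 * Real.exp u) := by linarith
          exact mul_le_mul_of_nonneg_left h4 this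
      _ ≤ m * Real.exp s * (2 * (u ^ 2 * Real.exp s)) := by
          have : (0:ℝ) ≤ u ^ 2 := sq_nonneg u
          gcongr
      _ = C / m := by
          rw [hC_def, hu_def]
          field_simp
  have hfin : C / m < ε := by
    rw [div_lt_iff₀ hmpos]
    have hn₀m : (n₀:ℝ) < m := by
      have : n₀ < m := Nat.lt_of_lt_of_le (Nat.lt_succ_self _) hm
      exact_mod_cast this
    have : C < n₀ * ε := by
      rcases (div_lt_iff₀ hε).mp hn₀ with h
      linarith
    nlinarith
  exact lt_of_le_of_lt hbound hfin


private lemma list_sum_map_neg {M : Type*} [AddCommGroup M] (l : List M) :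
    (l.map Neg.neg).sum = -l.sum := by
  induction l with
  | nil => simp
  | cons x l ih => simp [ih]; abel

private lemma units_val_list_prod {M : Type*} [Monoid M] (l : List Mˣ) :
    ((l.prod : Mˣ) : M) = (l.map Units.val).prod := by
  induction l with
  | nil => simp
  | cons x l ih => simp [ih]

/-- `exp x` as a unit. -/
private noncomputable def expUnit (x : 𝔸) : 𝔸ˣ where
  val := exp x
  inv := exp (-x)
  val_inv := by
    letI : NormedAlgebra ℚ 𝔸 := NormedAlgebra.restrictScalars ℚ ℂ 𝔸
    rw [← exp_add_of_commute ((Commute.refl x).neg_right)]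
    simp
  inv_val := by
    letI : NormedAlgebra ℚ 𝔸 := NormedAlgebra.restrictScalars ℚ ℂ 𝔸
    rw [← exp_add_of_commute ((Commute.refl x).neg_left)]
    simp

@[simp] private lemma expUnit_val (x : 𝔸) : ((expUnit x : 𝔸ˣ) : 𝔸) = exp x := rfl

@[simp] private lemma expUnit_inv_val (x : 𝔸) :
    (((expUnit x)⁻¹ : 𝔸ˣ) : 𝔸) = exp (-x) := rfl

private lemma expUnit_inv (x : 𝔸) : (expUnit x)⁻¹ = expUnit (-x) :=
  Units.ext rfl

/-- `u` can be approximated in operator norm, together with its inverse, by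
elements of the subgroup `B`. -/
private def Approx (B : Subgroup 𝔸ˣ) (u : 𝔸ˣ) : Prop :=
  ∀ ε : ℝ, 0 < ε → ∃ w ∈ B,
    ‖(w : 𝔸) - (u : 𝔸)‖ < ε ∧ ‖((w⁻¹ : 𝔸ˣ) : 𝔸) - ((u⁻¹ : 𝔸ˣ) : 𝔸)‖ < ε

private lemma approx_of_mem {B : Subgroup 𝔸ˣ} {u : 𝔸ˣ} (hu : u ∈ B) : Approx B u :=
  fun ε hε => ⟨u, hu, by simpa using hε, by simpa using hε⟩

private lemma Approx.one {B : Subgroup 𝔸ˣ} : Approx B 1 := approx_of_mem (one_mem B)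

private lemma Approx.inv {B : Subgroup 𝔸ˣ} {u : 𝔸ˣ} (h : Approx B u) : Approx B u⁻¹ := by
  intro ε hε
  obtain ⟨w, hwB, h1, h2⟩ := h ε hε
  exact ⟨w⁻¹, inv_mem hwB, h2, by simpa using h1⟩

private lemma Approx.mul {B : Subgroup 𝔸ˣ} {u v : 𝔸ˣ} (hu : Approx B u) (hv : Approx B v) :
    Approx B (u * v) := by
  intro ε hε
  set C := ‖(u : 𝔸)‖ + ‖(v : 𝔸)‖ + ‖((u⁻¹ : 𝔸ˣ) : 𝔸)‖ + ‖((v⁻¹ : 𝔸ˣ) : 𝔸)‖ + 1 with hC_def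
  have hC1 : 1 ≤ C := by
    have := norm_nonneg (u : 𝔸); have := norm_nonneg (v : 𝔸)
    have := norm_nonneg ((u⁻¹ : 𝔸ˣ) : 𝔸); have := norm_nonneg ((v⁻¹ : 𝔸ˣ) : 𝔸)
    rw [hC_def]; linarith
  have hC0 : (0:ℝ) < C := lt_of_lt_of_le one_pos hC1
  set δ := min 1 (ε / (2 * C)) with hδ_def
  have hδ0 : 0 < δ := lt_min one_pos (by positivity)
  have hδ1 : δ ≤ 1 := min_le_left _ _
  have hδC : δ * C ≤ ε / 2 := by
    have h1 : δ ≤ ε / (2 * C) := min_le_right _ _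
    calc δ * C ≤ (ε / (2 * C)) * C := mul_le_mul_of_nonneg_right h1 hC0.le
      _ = ε / 2 := by field_simp
  obtain ⟨w, hwB, hw1, hw2⟩ := hu δ hδ0
  obtain ⟨x, hxB, hx1, hx2⟩ := hv δ hδ0
  refine ⟨w * x, mul_mem hwB hxB, ?_, ?_⟩
  · have e : (w : 𝔸) * x - (u : 𝔸) * v
        = ((w : 𝔸) - u) * x + (u : 𝔸) * ((x : 𝔸) - v) := by noncomm_ring
    have hx_norm : ‖(x : 𝔸)‖ ≤ 1 + ‖(v : 𝔸)‖ := by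
      have : ‖(x : 𝔸)‖ ≤ ‖(x : 𝔸) - v‖ + ‖(v : 𝔸)‖ := by
        simpa using norm_add_le ((x : 𝔸) - v) (v : 𝔸)
      linarith
    have hb : ‖(w : 𝔸) * x - (u : 𝔸) * v‖ ≤ δ * (1 + ‖(v : 𝔸)‖) + ‖(u : 𝔸)‖ * δ := by
      rw [e]
      refine (norm_add_le _ _).trans (add_le_add ?_ ?_)
      · exact (norm_mul_le _ _).trans
          (mul_le_mul hw1.le hx_norm (norm_nonneg _) hδ0.le)
      · exact (norm_mul_le _ _).trans
          (mul_le_mul_of_nonneg_left hx1.le (norm_nonneg _))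
    have hδnn := hδ0.le
    have : δ * (1 + ‖(v : 𝔸)‖) + ‖(u : 𝔸)‖ * δ ≤ δ * C := by
      rw [hC_def]
      have := norm_nonneg ((u⁻¹ : 𝔸ˣ) : 𝔸); have := norm_nonneg ((v⁻¹ : 𝔸ˣ) : 𝔸)
      nlinarith
    rw [Units.val_mul, Units.val_mul]
    calc ‖(w : 𝔸) * x - (u : 𝔸) * v‖ ≤ δ * C := by linarith
      _ ≤ ε / 2 := hδC
      _ < ε := by linarith
  · have hrev : ((u * v)⁻¹ : 𝔸ˣ) = v⁻¹ * u⁻¹ := mul_inv_rev u v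
    have hrev' : ((w * x)⁻¹ : 𝔸ˣ) = x⁻¹ * w⁻¹ := mul_inv_rev w x
    rw [hrev, hrev', Units.val_mul, Units.val_mul]
    have e : ((x⁻¹ : 𝔸ˣ) : 𝔸) * ((w⁻¹ : 𝔸ˣ) : 𝔸) - ((v⁻¹ : 𝔸ˣ) : 𝔸) * ((u⁻¹ : 𝔸ˣ) : 𝔸)
        = (((x⁻¹ : 𝔸ˣ) : 𝔸) - ((v⁻¹ : 𝔸ˣ) : 𝔸)) * ((w⁻¹ : 𝔸ˣ) : 𝔸)
          + ((v⁻¹ : 𝔸ˣ) : 𝔸) * (((w⁻¹ : 𝔸ˣ) : 𝔸) - ((u⁻¹ : 𝔸ˣ) : 𝔸)) := by noncomm_ring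
    have hw_norm : ‖((w⁻¹ : 𝔸ˣ) : 𝔸)‖ ≤ 1 + ‖((u⁻¹ : 𝔸ˣ) : 𝔸)‖ := by
      have : ‖((w⁻¹ : 𝔸ˣ) : 𝔸)‖ ≤ ‖((w⁻¹ : 𝔸ˣ) : 𝔸) - ((u⁻¹ : 𝔸ˣ) : 𝔸)‖
          + ‖((u⁻¹ : 𝔸ˣ) : 𝔸)‖ := by
        simpa using norm_add_le (((w⁻¹ : 𝔸ˣ) : 𝔸) - ((u⁻¹ : 𝔸ˣ) : 𝔸)) ((u⁻¹ : 𝔸ˣ) : 𝔸)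
      linarith
    have hb : ‖((x⁻¹ : 𝔸ˣ) : 𝔸) * ((w⁻¹ : 𝔸ˣ) : 𝔸) - ((v⁻¹ : 𝔸ˣ) : 𝔸) * ((u⁻¹ : 𝔸ˣ) : 𝔸)‖
        ≤ δ * (1 + ‖((u⁻¹ : 𝔸ˣ) : 𝔸)‖) + ‖((v⁻¹ : 𝔸ˣ) : 𝔸)‖ * δ := by
      rw [e]
      refine (norm_add_le _ _).trans (add_le_add ?_ ?_)
      · exact (norm_mul_le _ _).trans
          (mul_le_mul hx2.le hw_norm (norm_nonneg _) hδ0.le)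
      · exact (norm_mul_le _ _).trans
          (mul_le_mul_of_nonneg_left hw2.le (norm_nonneg _))
    have : δ * (1 + ‖((u⁻¹ : 𝔸ˣ) : 𝔸)‖) + ‖((v⁻¹ : 𝔸ˣ) : 𝔸)‖ * δ ≤ δ * C := by
      rw [hC_def]
      have := norm_nonneg (u : 𝔸); have := norm_nonneg (v : 𝔸)
      nlinarith [hδ0.le]
    calc ‖((x⁻¹ : 𝔸ˣ) : 𝔸) * ((w⁻¹ : 𝔸ˣ) : 𝔸) - ((v⁻¹ : 𝔸ˣ) : 𝔸) * ((u⁻¹ : 𝔸ˣ) : 𝔸)‖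
        ≤ δ * C := by linarith
      _ ≤ ε / 2 := hδC
      _ < ε := by linarith

private lemma approx_closure {B : Subgroup 𝔸ˣ} {gens : Set 𝔸ˣ}
    (hgen : ∀ g ∈ gens, Approx B g) :
    ∀ u ∈ Subgroup.closure gens, Approx B u := by
  intro u hu
  refine Subgroup.closure_induction (p := fun g _ => Approx B g)
    (fun x hx => hgen x hx) Approx.one
    (fun x y _ _ hx hy => hx.mul hy) (fun x _ hx => hx.inv) hu

/-- The Trotter product formula at the level of units: `expUnit L.sum` is approximable
(together with its inverse) by elements of any subgroup containing the pieces. -/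
private lemma approx_expUnit_sum (hone : ‖(1 : 𝔸)‖ ≤ 1) (B : Subgroup 𝔸ˣ) (L : List 𝔸)
    (hmem : ∀ m : ℕ, 0 < m → ∀ a ∈ L, expUnit ((m : ℂ)⁻¹ • a) ∈ B) :
    Approx B (expUnit L.sum) := by
  intro ε hε
  obtain ⟨n₁, hn₁pos, hn₁⟩ := trotter hone L hε
  obtain ⟨n₂, _, hn₂⟩ := trotter hone (L.reverse.map Neg.neg) hε
  set m := max n₁ n₂ with hm_def
  have hmpos : 0 < m := lt_of_lt_of_le hn₁pos (le_max_left _ _)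
  set W : 𝔸ˣ := ((L.map (fun a => expUnit ((m : ℂ)⁻¹ • a))).prod) ^ m with hW_def
  have hWB : W ∈ B := by
    refine pow_mem (Subgroup.list_prod_mem B ?_) m
    intro x hx
    rw [List.mem_map] at hx
    obtain ⟨a, ha, rfl⟩ := hx
    exact hmem m hmpos a ha
  have hcoe : (W : 𝔸) = (L.map (fun a => exp ((m : ℂ)⁻¹ • a))).prod ^ m := by
    rw [hW_def, Units.val_pow_eq_pow_val, units_val_list_prod, List.map_map]
    rfl
  have hcoeinv : ((W⁻¹ : 𝔸ˣ) : 𝔸)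
      = ((L.reverse.map Neg.neg).map (fun a => exp ((m : ℂ)⁻¹ • a))).prod ^ m := by
    have h1 : (W⁻¹ : 𝔸ˣ)
        = ((L.map (fun a => expUnit ((m : ℂ)⁻¹ • a))).prod)⁻¹ ^ m := by
      rw [hW_def, inv_pow]
    have h2 : ((L.map (fun a => expUnit ((m : ℂ)⁻¹ • a))).prod)⁻¹
        = ((L.reverse.map Neg.neg).map (fun a => expUnit ((m : ℂ)⁻¹ • a))).prod := by
      rw [List.prod_inv_reverse]
      congr 1
      rw [List.map_map, ← List.map_reverse, List.map_map]
      congr 1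
      funext a
      show (expUnit ((m : ℂ)⁻¹ • a))⁻¹ = expUnit ((m : ℂ)⁻¹ • (-a))
      rw [expUnit_inv, smul_neg]
    rw [h1, h2, Units.val_pow_eq_pow_val, units_val_list_prod, List.map_map]
    rfl
  refine ⟨W, hWB, ?_, ?_⟩
  · rw [hcoe, expUnit_val]
    exact hn₁ m (le_max_left _ _)
  · rw [hcoeinv, expUnit_inv_val]
    have hsum : (L.reverse.map Neg.neg).sum = -L.sum := by
      rw [list_sum_map_neg, List.sum_reverse]
    have := hn₂ m (le_max_right _ _)
    rwa [hsum] at this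

end Analytic

section Main
variable {H : Type*} [NormedAddCommGroup H] [InnerProductSpace ℂ H] [CompleteSpace H]

private lemma strongClosure_mono_of_approx (A B : Subgroup (H →L[ℂ] H)ˣ)
    (h : ∀ u ∈ A, Approx B u) :
    strongClosure (((↑) : (H →L[ℂ] H)ˣ → (H →L[ℂ] H)) '' (A : Set (H →L[ℂ] H)ˣ))
      ⊆ strongClosure (((↑) : (H →L[ℂ] H)ˣ → (H →L[ℂ] H)) '' (B : Set (H →L[ℂ] H)ˣ)) := by
  intro T hT ε hε M ψ
  obtain ⟨W, hW, hWT⟩ := hT (ε / 2) (by linarith) M ψ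
  obtain ⟨u, huA, rfl⟩ := hW
  set C := 1 + ∑ j, ‖ψ j‖ with hC_def
  have hsum0 : (0:ℝ) ≤ ∑ j, ‖ψ j‖ := Finset.sum_nonneg fun j _ => norm_nonneg _
  have hC0 : (0:ℝ) < C := by rw [hC_def]; linarith
  have hψ : ∀ j, ‖ψ j‖ ≤ C := by
    intro j
    have := Finset.single_le_sum (f := fun j => ‖ψ j‖)
      (fun i _ => norm_nonneg _) (Finset.mem_univ j)
    rw [hC_def]; linarith
  obtain ⟨w, hwB, hw1, -⟩ := h u huA (ε / (2 * C)) (by positivity)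
  refine ⟨(w : H →L[ℂ] H), ⟨w, hwB, rfl⟩, fun j => ?_⟩
  have tri : ‖(w : H →L[ℂ] H) (ψ j) - T (ψ j)‖
      ≤ ‖(w : H →L[ℂ] H) (ψ j) - (u : H →L[ℂ] H) (ψ j)‖
        + ‖(u : H →L[ℂ] H) (ψ j) - T (ψ j)‖ := by
    have e : (w : H →L[ℂ] H) (ψ j) - T (ψ j)
        = ((w : H →L[ℂ] H) (ψ j) - (u : H →L[ℂ] H) (ψ j))
          + ((u : H →L[ℂ] H) (ψ j) - T (ψ j)) := by abel
    rw [e]; exact norm_add_le _ _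
  have h1 : ‖(w : H →L[ℂ] H) (ψ j) - (u : H →L[ℂ] H) (ψ j)‖ ≤ ε / 2 := by
    have e2 : (w : H →L[ℂ] H) (ψ j) - (u : H →L[ℂ] H) (ψ j)
        = ((w : H →L[ℂ] H) - (u : H →L[ℂ] H)) (ψ j) :=
      (ContinuousLinearMap.sub_apply _ _ _).symm
    rw [e2]
    calc ‖((w : H →L[ℂ] H) - (u : H →L[ℂ] H)) (ψ j)‖
        ≤ ‖(w : H →L[ℂ] H) - (u : H →L[ℂ] H)‖ * ‖ψ j‖ :=
          ContinuousLinearMap.le_opNorm _ _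
      _ ≤ (ε / (2 * C)) * C := mul_le_mul hw1.le (hψ j) (norm_nonneg _) (by positivity)
      _ = ε / 2 := by field_simp
  linarith [hWT j]

private lemma clm_norm_one_le : ‖(1 : H →L[ℂ] H)‖ ≤ 1 := by
  rw [ContinuousLinearMap.one_def]
  exact ContinuousLinearMap.norm_id_le

end Main


/-- Proposition 1 of the paper (bounded case): the dynamical group, i.e. the strong
closure of the subgroup of invertible bounded operators generated by all
`exp (i t H(y))` with `H(y) = H0 + ∑ y_j H_j`, equals the restricted dynamical group,
i.e. the strong closure of the subgroup generated by the `exp (i t H_j)`, `j = 0, …, N`. -/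
theorem dynamical_group_eq_restricted_dynamical_group
    {H : Type*} [NormedAddCommGroup H] [InnerProductSpace ℂ H] [CompleteSpace H]
    (H0 : H →L[ℂ] H)
    (hH0sa : ∀ ψ χ : H, ⟪H0 ψ, χ⟫_ℂ = ⟪ψ, H0 χ⟫_ℂ)
    (N : ℕ) (Hc : Fin N → (H →L[ℂ] H))
    (hHcsa : ∀ j, ∀ ψ χ : H, ⟪Hc j ψ, χ⟫_ℂ = ⟪ψ, Hc j χ⟫_ℂ) :
    strongClosure
      (((↑) : (H →L[ℂ] H)ˣ → (H →L[ℂ] H)) ''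
        (Subgroup.closure {u : (H →L[ℂ] H)ˣ | ∃ (t : ℝ) (y : Fin N → ℝ),
            (u : H →L[ℂ] H) = NormedSpace.exp
              (Complex.I • ((t : ℂ) • (H0 + ∑ j : Fin N, (y j : ℂ) • Hc j)))} :
          Set (H →L[ℂ] H)ˣ)) =
    strongClosure
      (((↑) : (H →L[ℂ] H)ˣ → (H →L[ℂ] H)) ''
        (Subgroup.closure {u : (H →L[ℂ] H)ˣ | ∃ t : ℝ,
            (u : H →L[ℂ] H) = NormedSpace.exp (Complex.I • ((t : ℂ) • H0)) ∨
            ∃ j : Fin N,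
              (u : H →L[ℂ] H) = NormedSpace.exp (Complex.I • ((t : ℂ) • Hc j))} :
          Set (H →L[ℂ] H)ˣ)) := by
  have hone : ‖(1 : H →L[ℂ] H)‖ ≤ 1 := clm_norm_one_le
  set genA : Set (H →L[ℂ] H)ˣ := {u : (H →L[ℂ] H)ˣ | ∃ (t : ℝ) (y : Fin N → ℝ),
      (u : H →L[ℂ] H) = NormedSpace.exp
        (Complex.I • ((t : ℂ) • (H0 + ∑ j : Fin N, (y j : ℂ) • Hc j)))} with hgenA
  set genB : Set (H →L[ℂ] H)ˣ := {u : (H →L[ℂ] H)ˣ | ∃ t : ℝ,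
      (u : H →L[ℂ] H) = NormedSpace.exp (Complex.I • ((t : ℂ) • H0)) ∨
      ∃ j : Fin N,
        (u : H →L[ℂ] H) = NormedSpace.exp (Complex.I • ((t : ℂ) • Hc j))} with hgenB
  apply Set.Subset.antisymm
  · -- dynamical group ⊆ restricted dynamical group
    apply strongClosure_mono_of_approx
    apply approx_closure
    intro g hg
    obtain ⟨t, y, hgeq⟩ := hg
    set L : List (H →L[ℂ] H) :=
      (Complex.I • ((t : ℂ) • H0)) ::
        List.ofFn (fun j : Fin N => Complex.I • (((t * y j : ℝ) : ℂ) • Hc j)) with hL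
    have hLsum : L.sum
        = Complex.I • ((t : ℂ) • (H0 + ∑ j : Fin N, (y j : ℂ) • Hc j)) := by
      rw [hL, List.sum_cons, List.sum_ofFn]
      have hterm : ∀ j : Fin N, Complex.I • (((t * y j : ℝ) : ℂ) • Hc j)
          = Complex.I • ((t : ℂ) • ((y j : ℂ) • Hc j)) := by
        intro j; push_cast; module
      rw [Finset.sum_congr rfl (fun j _ => hterm j), smul_add, smul_add,
        Finset.smul_sum, Finset.smul_sum]
    have hgu : g = expUnit L.sum := by
      apply Units.ext
      rw [expUnit_val, hLsum, hgeq]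
    rw [hgu]
    apply approx_expUnit_sum hone _ L
    intro m hm a ha
    apply Subgroup.subset_closure
    rcases List.mem_cons.mp ha with rfl | ha'
    · refine ⟨t / m, Or.inl ?_⟩
      rw [expUnit_val]
      congr 1
      push_cast
      match_scalars <;> ring
    · rw [List.mem_ofFn] at ha'
      obtain ⟨j, rfl⟩ := ha'
      refine ⟨t * y j / m, Or.inr ⟨j, ?_⟩⟩
      rw [expUnit_val]
      congr 1
      push_cast
      match_scalars <;> ring
  · -- restricted dynamical group ⊆ dynamical group
    apply strongClosure_mono_of_approx
    apply approx_closure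
    intro g hg
    obtain ⟨t, hg⟩ := hg
    rcases hg with hg | ⟨j, hg⟩
    · -- exp(itH0) is itself a generator of the dynamical group (y = 0)
      apply approx_of_mem
      apply Subgroup.subset_closure
      refine ⟨t, 0, ?_⟩
      rw [hg]
      congr 1
      simp
    · -- exp(itHc j) : Trotter with H(e_j) and -H(0)
      set y' : Fin N → ℝ := fun k => if k = j then 1 else 0 with hy'
      have hsingle : ∑ k : Fin N, ((y' k : ℝ) : ℂ) • Hc k = Hc j := by
        rw [hy']
        simp only [apply_ite (fun r : ℝ => (r : ℂ)), Complex.ofReal_one,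
          Complex.ofReal_zero, ite_smul, one_smul, zero_smul]
        rw [Finset.sum_ite_eq' Finset.univ j]
        simp
      have hzero : ∑ k : Fin N, (((0 : Fin N → ℝ) k : ℝ) : ℂ) • Hc k = 0 := by simp
      set L : List (H →L[ℂ] H) :=
        [Complex.I • ((t : ℂ) • (H0 + ∑ k : Fin N, ((y' k : ℝ) : ℂ) • Hc k)),
         Complex.I • (((-t : ℝ) : ℂ) • (H0 + ∑ k : Fin N, (((0 : Fin N → ℝ) k : ℝ) : ℂ) • Hc k))]
        with hL
      have hLsum : L.sum = Complex.I • ((t : ℂ) • Hc j) := by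
        rw [hL]
        simp only [List.sum_cons, List.sum_nil, add_zero]
        rw [hsingle, hzero, add_zero]
        push_cast
        module
      have hgu : g = expUnit L.sum := by
        apply Units.ext
        rw [expUnit_val, hLsum, hg]
      rw [hgu]
      apply approx_expUnit_sum hone _ L
      intro m hm a ha
      apply Subgroup.subset_closure
      rcases List.mem_cons.mp ha with rfl | ha'
      · refine ⟨t / m, y', ?_⟩
        rw [expUnit_val]
        congr 1
        push_cast
        match_scalars <;> ring
      · rcases List.mem_cons.mp ha' with rfl | h
        · refine ⟨-t / m, 0, ?_⟩
          rw [expUnit_val]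
          congr 1
          push_cast
          match_scalars <;> ring
        · exact absurd h List.not_mem_nil
end

section
/- (Recurrence) Let K be a bounded self-adjoint operator on a complex Hilbert space H admitting a Hilbert basis (φ_n)_{n∈ℕ} of eigenvectors of K. Then for every t_- ≤ 0, every ε > 0, and every finite family ψ_1, …, ψ_M ∈ H, there exists t_+ > 0 such that ‖exp(it_+ K) ψ_j − exp(it_- K) ψ_j‖ < ε for all j = 1, …, M; that is, exp(it_+K) lies in the given strong neighborhood of exp(it_-K). -/
open scoped InnerProductSpace

private lemma norm_exp_I_mul_real (r : ℝ) : ‖Complex.exp (Complex.I * (r : ℂ))‖ = 1 := by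
  rw [show Complex.I * (r : ℂ) = (r : ℂ) * Complex.I by ring, Complex.norm_exp_ofReal_mul_I]

/-- Simultaneous almost-recurrence of finitely many rotations, at arbitrarily late times. -/
private lemma approx_lemma (μ : ℕ → ℝ) (N : ℕ) (δ T : ℝ) (hδ : 0 < δ) (hT : 0 < T) :
    ∃ σ : ℝ, T ≤ σ ∧ ∀ n < N, ‖Complex.exp (Complex.I * ((σ * μ n : ℝ) : ℂ)) - 1‖ < δ := by
  set v : ℕ → (Fin N → ℂ) := fun k n => Complex.exp (Complex.I * (((k : ℝ) * T * μ n : ℝ) : ℂ))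
    with hv
  have hbd : ∀ k, v k ∈ Metric.closedBall (0 : Fin N → ℂ) 1 := by
    intro k
    rw [Metric.mem_closedBall, dist_zero_right]
    refine (pi_norm_le_iff_of_nonneg zero_le_one).2 fun n => ?_
    simp only [hv]
    rw [norm_exp_I_mul_real]
  obtain ⟨a, -, g, hg, hconv⟩ :=
    tendsto_subseq_of_bounded Metric.isBounded_closedBall hbd
  have hcs : CauchySeq (v ∘ g) := hconv.cauchySeq
  obtain ⟨K0, hK0⟩ := Metric.cauchySeq_iff'.1 hcs δ hδ
  have hd := hK0 (K0 + 1) (Nat.le_succ _)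
  set k1 := g K0 with hk1
  set k2 := g (K0 + 1) with hk2
  have hk12 : k1 < k2 := hg (Nat.lt_succ_self _)
  refine ⟨(k2 : ℝ) * T - (k1 : ℝ) * T, ?_, ?_⟩
  · have : (k1 : ℝ) + 1 ≤ (k2 : ℝ) := by exact_mod_cast hk12
    nlinarith
  · intro n hn
    have h1 : ‖Complex.exp (Complex.I * (((k1 : ℝ) * T * μ n : ℝ) : ℂ))‖ = 1 :=
      norm_exp_I_mul_real _
    have key : Complex.exp (Complex.I * ((((k2 : ℝ) * T - (k1 : ℝ) * T) * μ n : ℝ) : ℂ)) *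
        Complex.exp (Complex.I * (((k1 : ℝ) * T * μ n : ℝ) : ℂ)) =
        Complex.exp (Complex.I * (((k2 : ℝ) * T * μ n : ℝ) : ℂ)) := by
      rw [← Complex.exp_add]
      congr 1
      push_cast
      ring
    have hdiff : v k2 ⟨n, hn⟩ - v k1 ⟨n, hn⟩
        = (Complex.exp (Complex.I * ((((k2 : ℝ) * T - (k1 : ℝ) * T) * μ n : ℝ) : ℂ)) - 1) *
          Complex.exp (Complex.I * (((k1 : ℝ) * T * μ n : ℝ) : ℂ)) := by
      simp only [hv]
      rw [sub_mul, one_mul, key]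
    have : ‖Complex.exp (Complex.I * ((((k2 : ℝ) * T - (k1 : ℝ) * T) * μ n : ℝ) : ℂ)) - 1‖
        = ‖v k2 ⟨n, hn⟩ - v k1 ⟨n, hn⟩‖ := by
      rw [hdiff, norm_mul, h1, mul_one]
    rw [this]
    calc ‖v k2 ⟨n, hn⟩ - v k1 ⟨n, hn⟩‖ = dist (v k2 ⟨n, hn⟩) (v k1 ⟨n, hn⟩) :=
          (dist_eq_norm _ _).symm
      _ ≤ dist (v k2) (v k1) := dist_le_pi_dist _ _ _
      _ = dist ((v ∘ g) (K0 + 1)) ((v ∘ g) K0) := rfl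
      _ < δ := hd

section Main

variable {H : Type*} [NormedAddCommGroup H] [InnerProductSpace ℂ H] [CompleteSpace H]

/-- exponential of a scalar multiple of `K` acts diagonally on eigenvectors. -/
private lemma exp_apply_eigen (K : H →L[ℂ] H) (x : H) (m : ℝ) (hx : K x = (m : ℂ) • x)
    (c : ℂ) : NormedSpace.exp (c • K) x = Complex.exp (c * m) • x := by
  have hpow : ∀ k : ℕ, ((c • K) ^ k) x = ((c * m) ^ k) • x := by
    intro k
    induction k with
    | zero => simp
    | succ k ih =>
      rw [pow_succ', ContinuousLinearMap.mul_apply, ih, map_smul,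
        ContinuousLinearMap.smul_apply, hx, smul_smul, smul_smul]
      congr 1
      ring
  have hsum : Summable fun k : ℕ => ((k.factorial : ℂ))⁻¹ • (c • K) ^ k :=
    NormedSpace.expSeries_summable' (𝕂 := ℂ) (c • K)
  have hsum2 : Summable fun k : ℕ => ((k.factorial : ℂ))⁻¹ • (c * m) ^ k :=
    NormedSpace.expSeries_summable' (𝕂 := ℂ) (c * m)
  have := (ContinuousLinearMap.apply ℂ H x).map_tsum hsum
  rw [NormedSpace.exp_eq_tsum ℂ]
  calc (∑' k : ℕ, ((k.factorial : ℂ))⁻¹ • (c • K) ^ k) x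
      = ∑' k : ℕ, (((k.factorial : ℂ))⁻¹ • (c • K) ^ k) x := this
    _ = ∑' k : ℕ, (((k.factorial : ℂ))⁻¹ * (c * m) ^ k) • x := by
        congr 1; funext k
        rw [ContinuousLinearMap.smul_apply, hpow k, smul_smul]
    _ = (∑' k : ℕ, ((k.factorial : ℂ))⁻¹ * (c * m) ^ k) • x := by
        refine Summable.tsum_smul_const ?_ x
        simpa [smul_eq_mul] using hsum2
    _ = Complex.exp (c * m) • x := by
        rw [Complex.exp_eq_exp_ℂ, NormedSpace.exp_eq_tsum ℂ]
        simp [smul_eq_mul]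

/-- the coefficients of `exp (c • K) x` in the eigenbasis. -/
private lemma inner_exp_apply (φ : HilbertBasis ℕ ℂ H) (K : H →L[ℂ] H)
    (μ : ℕ → ℝ) (hμ : ∀ n, K (φ n) = (μ n : ℂ) • φ n) (c : ℂ) (x : H) (n : ℕ) :
    ⟪φ n, NormedSpace.exp (c • K) x⟫_ℂ
      = Complex.exp (c * μ n) * ⟪φ n, x⟫_ℂ := by
  have h2 := ((φ.hasSum_repr x).mapL (NormedSpace.exp (c • K))).mapL (innerSL ℂ (φ n))
  have h3 : HasSum (fun m => if m = n then Complex.exp (c * μ n) * ⟪φ n, x⟫_ℂ else 0)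
      (⟪φ n, NormedSpace.exp (c • K) x⟫_ℂ) := by
    refine h2.congr_fun fun m => ?_
    rw [innerSL_apply_apply, map_smul, inner_smul_right,
      exp_apply_eigen K (φ m) (μ m) (hμ m) c, inner_smul_right,
      orthonormal_iff_ite.1 φ.orthonormal n m, φ.repr_apply_apply]
    by_cases hmn : m = n
    · subst hmn
      simp [mul_comm]
    · simp [hmn, Ne.symm hmn]
  exact h3.unique (hasSum_ite_eq n _)

private lemma parseval (φ : HilbertBasis ℕ ℂ H) (x : H) :
    HasSum (fun n => ‖⟪φ n, x⟫_ℂ‖ ^ 2) (‖x‖ ^ 2) := by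
  have h := (φ.hasSum_inner_mul_inner x x).mapL Complex.reCLM
  have hre : Complex.reCLM ⟪x, x⟫_ℂ = ‖x‖ ^ 2 := by
    simpa using inner_self_eq_norm_sq (𝕜 := ℂ) x
  rw [hre] at h
  refine h.congr_fun fun m => ?_
  have : ⟪x, φ m⟫_ℂ = (starRingEnd ℂ) ⟪φ m, x⟫_ℂ := (inner_conj_symm _ _).symm
  rw [Complex.reCLM_apply, this, ← Complex.normSq_eq_conj_mul_self, Complex.ofReal_re,
    Complex.normSq_eq_norm_sq]

end Main

set_option maxHeartbeats 1000000 in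
/-- Proposition 2 of the paper (recurrence): for a bounded self-adjoint operator `K`
with a Hilbert basis of eigenvectors, the one-parameter group `t ↦ exp(itK)` revisits
approximately (in the strong topology) every point of its past at positive times. -/
theorem recurrence_of_pure_point_spectrum
    {H : Type*} [NormedAddCommGroup H] [InnerProductSpace ℂ H] [CompleteSpace H]
    (φ : HilbertBasis ℕ ℂ H) (K : H →L[ℂ] H)
    (hKsa : ∀ ψ χ : H, ⟪K ψ, χ⟫_ℂ = ⟪ψ, K χ⟫_ℂ)
    (μ : ℕ → ℝ) (hμ : ∀ n, K (φ n) = (μ n : ℂ) • φ n)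
    (tminus : ℝ) (htminus : tminus ≤ 0)
    (ε : ℝ) (hε : 0 < ε) (M : ℕ) (ψ : Fin M → H) :
    ∃ tplus : ℝ, 0 < tplus ∧ ∀ j : Fin M,
      ‖NormedSpace.exp (Complex.I • ((tplus : ℂ) • K)) (ψ j)
        - NormedSpace.exp (Complex.I • ((tminus : ℂ) • K)) (ψ j)‖ < ε := by
  classical
  set a : Fin M → ℕ → ℂ := fun j n => ⟪φ n, ψ j⟫_ℂ with ha
  have hs : ∀ j, HasSum (fun n => ‖a j n‖ ^ 2) (‖ψ j‖ ^ 2) := fun j => parseval φ (ψ j)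
  -- choose the truncation level N
  have htail : ∀ᶠ N in Filter.atTop, ∀ j : Fin M,
      (∑' k : ℕ, ‖a j (k + N)‖ ^ 2) < ε ^ 2 / 8 := by
    rw [Filter.eventually_all]
    intro j
    have := tendsto_sum_nat_add (fun n => ‖a j n‖ ^ 2)
    exact this.eventually_lt_const (by positivity)
  obtain ⟨N, hN⟩ := htail.exists
  -- choose δ
  set C : ℝ := 1 + ∑ j : Fin M, ‖ψ j‖ ^ 2 with hC
  have hC1 : 1 ≤ C := by
    have : (0:ℝ) ≤ ∑ j : Fin M, ‖ψ j‖ ^ 2 := Finset.sum_nonneg fun j _ => by positivity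
    linarith
  have hCpos : 0 < C := by linarith
  have hψC : ∀ j : Fin M, ‖ψ j‖ ^ 2 ≤ C := by
    intro j
    have : ‖ψ j‖ ^ 2 ≤ ∑ j : Fin M, ‖ψ j‖ ^ 2 :=
      Finset.single_le_sum (f := fun j : Fin M => ‖ψ j‖ ^ 2)
        (fun j _ => by positivity) (Finset.mem_univ j)
    linarith
  set δ : ℝ := min 1 (ε ^ 2 / (8 * C)) with hδdef
  have hδ : 0 < δ := lt_min one_pos (by positivity)
  have hδ1 : δ ≤ 1 := min_le_left _ _
  have hδC : δ * C ≤ ε ^ 2 / 8 := by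
    have h1 : δ ≤ ε ^ 2 / (8 * C) := min_le_right _ _
    calc δ * C ≤ ε ^ 2 / (8 * C) * C := by nlinarith
      _ = ε ^ 2 / 8 := by field_simp
  -- choose σ and tplus
  obtain ⟨σ, hσT, hσ⟩ := approx_lemma μ N δ (1 - tminus) hδ (by linarith)
  refine ⟨tminus + σ, by linarith, ?_⟩
  intro j
  set e : ℕ → ℂ := fun n =>
    Complex.exp (Complex.I * (tminus + σ) * μ n) - Complex.exp (Complex.I * tminus * μ n)
    with he
  -- coefficients of the difference
  have hcoeff : ∀ n, ⟪φ n, NormedSpace.exp (Complex.I • (((tminus + σ : ℝ) : ℂ) • K)) (ψ j)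
      - NormedSpace.exp (Complex.I • ((tminus : ℂ) • K)) (ψ j)⟫_ℂ = e n * a j n := by
    intro n
    rw [inner_sub_right, smul_smul, smul_smul,
      inner_exp_apply φ K μ hμ _ (ψ j) n, inner_exp_apply φ K μ hμ _ (ψ j) n]
    simp only [he, ha]
    push_cast
    ring
  -- norms of e
  have hnorm_exp : ∀ (t : ℝ) (n : ℕ), ‖Complex.exp (Complex.I * t * μ n)‖ = 1 := by
    intro t n
    rw [show Complex.I * (t : ℂ) * (μ n : ℂ) = Complex.I * ((t * μ n : ℝ) : ℂ) by push_cast; ring]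
    exact norm_exp_I_mul_real _
  have he2 : ∀ n, ‖e n‖ ≤ 2 := by
    intro n
    refine (norm_sub_le _ _).trans ?_
    have hX : ‖Complex.exp (Complex.I * ((tminus : ℂ) + (σ : ℂ)) * μ n)‖ = 1 := by
      rw [show Complex.I * ((tminus : ℂ) + (σ : ℂ)) * (μ n : ℂ)
          = Complex.I * (((tminus + σ) * μ n : ℝ) : ℂ) by push_cast; ring]
      exact norm_exp_I_mul_real _
    rw [hX, hnorm_exp]
    norm_num
  have heδ : ∀ n < N, ‖e n‖ < δ := by
    intro n hn
    have key : e n = (Complex.exp (Complex.I * ((σ * μ n : ℝ) : ℂ)) - 1) *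
        Complex.exp (Complex.I * (tminus : ℂ) * μ n) := by
      simp only [he]
      rw [sub_mul, one_mul, ← Complex.exp_add]
      congr 2
      push_cast
      ring
    rw [key, norm_mul, hnorm_exp, mul_one]
    exact hσ n hn
  -- Parseval for the difference
  set x : H := NormedSpace.exp (Complex.I • (((tminus + σ : ℝ) : ℂ) • K)) (ψ j)
      - NormedSpace.exp (Complex.I • ((tminus : ℂ) • K)) (ψ j) with hx
  have hpar : HasSum (fun n => ‖e n‖ ^ 2 * ‖a j n‖ ^ 2) (‖x‖ ^ 2) := by
    have := parseval φ x
    refine this.congr_fun fun n => ?_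
    rw [hcoeff n, norm_mul, mul_pow]
  have hg : Summable fun n => ‖e n‖ ^ 2 * ‖a j n‖ ^ 2 := hpar.summable
  have hsj : Summable fun n => ‖a j n‖ ^ 2 := (hs j).summable
  -- head estimate
  have hhead : ∑ n ∈ Finset.range N, ‖e n‖ ^ 2 * ‖a j n‖ ^ 2 ≤ ε ^ 2 / 8 := by
    have h1 : ∑ n ∈ Finset.range N, ‖e n‖ ^ 2 * ‖a j n‖ ^ 2
        ≤ ∑ n ∈ Finset.range N, δ * ‖a j n‖ ^ 2 := by
      refine Finset.sum_le_sum fun n hn => ?_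
      have h2 := heδ n (Finset.mem_range.1 hn)
      have h3 : ‖e n‖ ^ 2 ≤ δ := by nlinarith [norm_nonneg (e n)]
      nlinarith [norm_nonneg (a j n), sq_nonneg ‖a j n‖]
    have h4 : ∑ n ∈ Finset.range N, ‖a j n‖ ^ 2 ≤ ‖ψ j‖ ^ 2 := by
      rw [← (hs j).tsum_eq]
      exact Summable.sum_le_tsum _ (fun n _ => by positivity) hsj
    calc ∑ n ∈ Finset.range N, ‖e n‖ ^ 2 * ‖a j n‖ ^ 2
        ≤ δ * ∑ n ∈ Finset.range N, ‖a j n‖ ^ 2 := by rwa [Finset.mul_sum]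
      _ ≤ δ * C := by nlinarith [hψC j]
      _ ≤ ε ^ 2 / 8 := hδC
  -- tail estimate
  have htail2 : ∑' k : ℕ, ‖e (k + N)‖ ^ 2 * ‖a j (k + N)‖ ^ 2 < ε ^ 2 / 2 := by
    have h5 : ∑' k : ℕ, ‖e (k + N)‖ ^ 2 * ‖a j (k + N)‖ ^ 2
        ≤ ∑' k : ℕ, 4 * ‖a j (k + N)‖ ^ 2 := by
      refine Summable.tsum_le_tsum (fun k => ?_) ((summable_nat_add_iff N).2 hg)
        (((summable_nat_add_iff N).2 hsj).mul_left 4)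
      calc ‖e (k + N)‖ ^ 2 * ‖a j (k + N)‖ ^ 2
          ≤ 2 ^ 2 * ‖a j (k + N)‖ ^ 2 := by
            have h4 : ‖e (k + N)‖ ^ 2 ≤ 2 ^ 2 := by
              have := he2 (k + N)
              have := norm_nonneg (e (k + N))
              nlinarith
            exact mul_le_mul_of_nonneg_right h4 (by positivity)
        _ = 4 * ‖a j (k + N)‖ ^ 2 := by norm_num
    have h6 : ∑' k : ℕ, 4 * ‖a j (k + N)‖ ^ 2 = 4 * ∑' k : ℕ, ‖a j (k + N)‖ ^ 2 :=
      tsum_mul_left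
    have h7 := hN j
    calc ∑' k : ℕ, ‖e (k + N)‖ ^ 2 * ‖a j (k + N)‖ ^ 2
        ≤ 4 * ∑' k : ℕ, ‖a j (k + N)‖ ^ 2 := by rw [← h6]; exact h5
      _ < 4 * (ε ^ 2 / 8) := by nlinarith
      _ = ε ^ 2 / 2 := by ring
  -- combine
  have hxsq : ‖x‖ ^ 2 < ε ^ 2 := by
    rw [← hpar.tsum_eq, ← Summable.sum_add_tsum_nat_add N hg]
    nlinarith
  have hxε : ‖x‖ < ε := lt_of_pow_lt_pow_left₀ 2 hε.le hxsq
  simpa [hx] using hxε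
end

section
/- (Recurrence, sequence form) Let H be a complex Hilbert space with Hilbert basis (φ_n)_{n∈ℕ} and let (λ_n)_{n∈ℕ} be an arbitrary sequence of real numbers. Then for every t_- ≤ 0, every ε > 0, and every finite family ψ_1, …, ψ_M ∈ H, there exists t_+ > 0 such that Σ'_n |exp(i t_+ λ_n) − exp(i t_- λ_n)|² · ‖⟪φ_n, ψ_j⟫‖² < ε² for all j = 1, …, M. (This expresses recurrence of the unitary one-parameter group that is diagonal in the basis (φ_n) with eigenvalue sequence (λ_n), covering unbounded generators with pure point spectrum.) -/
open scoped InnerProductSpace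

lemma norm_exp_I_mul_ofReal (x : ℝ) : ‖Complex.exp (Complex.I * (x : ℂ))‖ = 1 := by
  rw [Complex.norm_exp]
  simp

lemma norm_exp_sub_exp (x y : ℝ) :
    ‖Complex.exp (Complex.I * ((x + y : ℝ) : ℂ)) - Complex.exp (Complex.I * (x : ℂ))‖
      = ‖Complex.exp (Complex.I * (y : ℂ)) - 1‖ := by
  have h : Complex.exp (Complex.I * ((x + y : ℝ) : ℂ)) - Complex.exp (Complex.I * (x : ℂ))
      = Complex.exp (Complex.I * (x : ℂ)) * (Complex.exp (Complex.I * (y : ℂ)) - 1) := by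
    rw [mul_sub, ← Complex.exp_add, mul_one]
    push_cast
    ring_nf
  rw [h, norm_mul, norm_exp_I_mul_ofReal, one_mul]

lemma exists_return (N : ℕ) (lam : ℕ → ℝ) (L δ : ℝ) (hL : 0 < L) (hδ : 0 < δ) :
    ∃ s : ℝ, L ≤ s ∧ ∀ n < N, ‖Complex.exp (Complex.I * ((s * lam n : ℝ) : ℂ)) - 1‖ < δ := by
  classical
  set F : ℕ → (Fin N → ℂ) := fun k n => Complex.exp (Complex.I * (((k : ℝ) * L * lam n : ℝ) : ℂ))
    with hF
  have hF1 : ∀ k, F k ∈ Metric.closedBall (0 : Fin N → ℂ) 1 := by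
    intro k
    rw [Metric.mem_closedBall, dist_zero_right]
    refine (pi_norm_le_iff_of_nonneg zero_le_one).2 fun n => ?_
    exact le_of_eq (norm_exp_I_mul_ofReal _)
  obtain ⟨t, htf, hcover⟩ :=
    (Metric.totallyBounded_iff.1
      (isCompact_closedBall (0 : Fin N → ℂ) 1).totallyBounded) (δ/2) (by positivity)
  choose y hyt hy using fun k => Set.mem_iUnion₂.1 (hcover (hF1 k))
  haveI := htf.to_subtype
  obtain ⟨k, m, hne, heq⟩ :=
    Finite.exists_ne_map_eq_of_infinite (fun k : ℕ => (⟨y k, hyt k⟩ : t))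
  have heq' : y k = y m := congrArg Subtype.val heq
  -- main argument for ordered pair
  have main : ∀ a b : ℕ, a < b → y a = y b →
      ∃ s : ℝ, L ≤ s ∧ ∀ n < N, ‖Complex.exp (Complex.I * ((s * lam n : ℝ) : ℂ)) - 1‖ < δ := by
    intro a b hab hyab
    refine ⟨((b - a : ℕ) : ℝ) * L, ?_, ?_⟩
    · have h1 : (1 : ℝ) ≤ ((b - a : ℕ) : ℝ) := by
        have : 1 ≤ b - a := Nat.le_sub_of_add_le (by omega)
        exact_mod_cast this
      nlinarith
    · intro n hn
      have hdist : dist (F b) (F a) < δ := by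
        have h1 := hy a
        have h2 := hy b
        rw [hyab] at h1
        calc dist (F b) (F a) ≤ dist (F b) (y b) + dist (F a) (y b) := dist_triangle_right _ _ _
          _ < δ/2 + δ/2 := by
              exact add_lt_add (Metric.mem_ball.1 h2) (Metric.mem_ball.1 h1)
          _ = δ := by ring
      have hcoord : ‖F b ⟨n, hn⟩ - F a ⟨n, hn⟩‖ < δ := by
        calc ‖F b ⟨n, hn⟩ - F a ⟨n, hn⟩‖ = dist (F b ⟨n, hn⟩) (F a ⟨n, hn⟩) := (dist_eq_norm _ _).symm
          _ ≤ dist (F b) (F a) := dist_le_pi_dist (F b) (F a) _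
          _ < δ := hdist
      have hcast : ((b : ℝ) * L * lam n : ℝ)
          = ((a : ℝ) * L * lam n) + (((b - a : ℕ) : ℝ) * L * lam n) := by
        have : ((b - a : ℕ) : ℝ) = (b : ℝ) - (a : ℝ) := by
          exact_mod_cast Nat.cast_sub hab.le
        rw [this]; ring
      have := norm_exp_sub_exp ((a : ℝ) * L * lam n) (((b - a : ℕ) : ℝ) * L * lam n)
      rw [← this]
      rw [← hcast]
      exact hcoord
  rcases hne.lt_or_gt with h | h
  · exact main k m h heq'
  · exact main m k h heq'.symm

/-- Recurrence, sequence form: for an arbitrary real sequence `lam` (the eigenvalue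
sequence of a possibly unbounded generator with pure point spectrum, diagonal in the
Hilbert basis `φ`), the diagonal unitary one-parameter group recurs: its past values
are approximated in the strong sense at positive times. -/
theorem recurrence_sequence_form
    {H : Type*} [NormedAddCommGroup H] [InnerProductSpace ℂ H] [CompleteSpace H]
    (φ : HilbertBasis ℕ ℂ H) (lam : ℕ → ℝ)
    (tminus : ℝ) (htminus : tminus ≤ 0)
    (ε : ℝ) (hε : 0 < ε) (M : ℕ) (ψ : Fin M → H) :
    ∃ tplus : ℝ, 0 < tplus ∧ ∀ j : Fin M,
      ∑' n : ℕ, ‖Complex.exp (Complex.I * tplus * lam n)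
          - Complex.exp (Complex.I * tminus * lam n)‖ ^ 2
        * ‖⟪(φ n : H), ψ j⟫_ℂ‖ ^ 2 < ε ^ 2 := by
  classical
  set c : Fin M → ℕ → ℝ := fun j n => ‖⟪(φ n : H), ψ j⟫_ℂ‖ ^ 2 with hc
  have hc0 : ∀ j n, 0 ≤ c j n := fun j n => pow_nonneg (norm_nonneg _) 2
  have hcsum : ∀ j, Summable (c j) := by
    intro j
    have h1 := φ.summable_inner_mul_inner (ψ j) (ψ j)
    have h2 : ∀ n, ⟪ψ j, (φ n : H)⟫_ℂ * ⟪(φ n : H), ψ j⟫_ℂ = ((c j n : ℝ) : ℂ) := by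
      intro n
      rw [← inner_conj_symm (ψ j) (φ n : H), RCLike.conj_mul]
      norm_cast
    exact Complex.summable_ofReal.mp (h1.congr h2)
  set K : ℝ := (∑ j : Fin M, ∑' n, c j n) + 1 with hK
  have hK0 : 0 < K := by
    have : 0 ≤ ∑ j : Fin M, ∑' n, c j n :=
      Finset.sum_nonneg fun j _ => tsum_nonneg (hc0 j)
    linarith
  have hcK : ∀ j, ∑' n, c j n ≤ K := by
    intro j
    have h1 : ∑' n, c j n ≤ ∑ j : Fin M, ∑' n, c j n :=
      Finset.single_le_sum (f := fun j => ∑' n, c j n)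
        (fun j _ => tsum_nonneg (hc0 j)) (Finset.mem_univ j)
    linarith
  set δ : ℝ := ε / Real.sqrt (4 * K) with hδdef
  have hδ : 0 < δ := div_pos hε (Real.sqrt_pos.2 (by linarith))
  have hδK : δ ^ 2 * K = ε ^ 2 / 4 := by
    rw [hδdef, div_pow, Real.sq_sqrt (by linarith : (0:ℝ) ≤ 4 * K)]
    field_simp
  -- choose N making all tails small
  have hev : ∀ j : Fin M, ∀ᶠ N in Filter.atTop, ∑' n, c j (n + N) < ε ^ 2 / 8 := by
    intro j
    have h2 : Filter.Tendsto (fun N => ∑' n, c j (n + N)) Filter.atTop (nhds 0) := by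
      have heq : ∀ N, ∑' n, c j (n + N)
          = (∑' n, c j n) - ∑ i ∈ Finset.range N, c j i := by
        intro N
        rw [eq_sub_iff_add_eq, add_comm]
        exact (hcsum j).sum_add_tsum_nat_add N
      simp_rw [heq]
      have := (hcsum j).hasSum.tendsto_sum_nat
      have h3 := Filter.Tendsto.sub (tendsto_const_nhds (x := ∑' n, c j n)
        (f := Filter.atTop (α := ℕ))) this
      simpa using h3
    exact (tendsto_order.1 h2).2 _ (by positivity)
  obtain ⟨N, hN⟩ := (Filter.eventually_all.2 hev).exists
  -- choose recurrence time
  obtain ⟨s, hsL, hsmall⟩ := exists_return N lam (1 - tminus) δ (by linarith) hδ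
  refine ⟨tminus + s, by linarith, fun j => ?_⟩
  set f : ℕ → ℝ := fun n => ‖Complex.exp (Complex.I * ((tminus + s : ℝ) : ℂ) * (lam n : ℂ))
      - Complex.exp (Complex.I * (tminus : ℂ) * (lam n : ℂ))‖ ^ 2 * c j n with hf
  have hfnorm : ∀ n, ‖Complex.exp (Complex.I * ((tminus + s : ℝ) : ℂ) * (lam n : ℂ))
      - Complex.exp (Complex.I * (tminus : ℂ) * (lam n : ℂ))‖
      = ‖Complex.exp (Complex.I * ((s * lam n : ℝ) : ℂ)) - 1‖ := by
    intro n
    have e1 : Complex.I * ((tminus + s : ℝ) : ℂ) * (lam n : ℂ)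
        = Complex.I * ((tminus * lam n + s * lam n : ℝ) : ℂ) := by push_cast; ring
    have e2 : Complex.I * (tminus : ℂ) * (lam n : ℂ)
        = Complex.I * ((tminus * lam n : ℝ) : ℂ) := by push_cast; ring
    rw [e1, e2, norm_exp_sub_exp]
  have hf0 : ∀ n, 0 ≤ f n := fun n =>
    mul_nonneg (pow_nonneg (norm_nonneg _) 2) (hc0 j n)
  have hfle : ∀ n, f n ≤ 4 * c j n := by
    intro n
    have hb : ‖Complex.exp (Complex.I * ((tminus + s : ℝ) : ℂ) * (lam n : ℂ))
        - Complex.exp (Complex.I * (tminus : ℂ) * (lam n : ℂ))‖ ≤ 2 := by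
      rw [hfnorm]
      calc ‖Complex.exp (Complex.I * ((s * lam n : ℝ) : ℂ)) - 1‖
          ≤ ‖Complex.exp (Complex.I * ((s * lam n : ℝ) : ℂ))‖ + ‖(1 : ℂ)‖ := norm_sub_le _ _
        _ = 2 := by rw [norm_exp_I_mul_ofReal, norm_one]; norm_num
    have : ‖Complex.exp (Complex.I * ((tminus + s : ℝ) : ℂ) * (lam n : ℂ))
        - Complex.exp (Complex.I * (tminus : ℂ) * (lam n : ℂ))‖ ^ 2 ≤ 4 := by
      nlinarith [norm_nonneg (Complex.exp (Complex.I * ((tminus + s : ℝ) : ℂ) * (lam n : ℂ))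
        - Complex.exp (Complex.I * (tminus : ℂ) * (lam n : ℂ)))]
    exact mul_le_mul_of_nonneg_right this (hc0 j n)
  have hfsum : Summable f :=
    ((hcsum j).mul_left 4).of_nonneg_of_le hf0 hfle
  have hgoal : ∑' n, f n < ε ^ 2 := by
    rw [← hfsum.sum_add_tsum_nat_add N]
    have hhead : ∑ i ∈ Finset.range N, f i ≤ ε ^ 2 / 4 := by
      have h1 : ∑ i ∈ Finset.range N, f i ≤ ∑ i ∈ Finset.range N, δ ^ 2 * c j i := by
        refine Finset.sum_le_sum fun i hi => ?_
        have hb := hsmall i (Finset.mem_range.1 hi)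
        have hb2 : ‖Complex.exp (Complex.I * ((tminus + s : ℝ) : ℂ) * (lam i : ℂ))
            - Complex.exp (Complex.I * (tminus : ℂ) * (lam i : ℂ))‖ ^ 2 ≤ δ ^ 2 := by
          rw [hfnorm]
          exact pow_le_pow_left₀ (norm_nonneg _) hb.le 2
        exact mul_le_mul_of_nonneg_right hb2 (hc0 j i)
      have h2 : ∑ i ∈ Finset.range N, δ ^ 2 * c j i = δ ^ 2 * ∑ i ∈ Finset.range N, c j i :=
        (Finset.mul_sum _ _ _).symm
      have h3 : ∑ i ∈ Finset.range N, c j i ≤ ∑' n, c j n :=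
        Summable.sum_le_tsum _ (fun i _ => hc0 j i) (hcsum j)
      have h4 : δ ^ 2 * ∑ i ∈ Finset.range N, c j i ≤ δ ^ 2 * K :=
        mul_le_mul_of_nonneg_left (h3.trans (hcK j)) (sq_nonneg δ)
      calc ∑ i ∈ Finset.range N, f i ≤ δ ^ 2 * ∑ i ∈ Finset.range N, c j i := by
            rw [← h2]; exact h1
        _ ≤ δ ^ 2 * K := h4
        _ = ε ^ 2 / 4 := hδK
    have htail : ∑' n, f (n + N) < ε ^ 2 / 2 := by
      have hcsumN : Summable (fun n => c j (n + N)) := (summable_nat_add_iff N).2 (hcsum j)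
      have h1 : ∑' n, f (n + N) ≤ ∑' n, 4 * c j (n + N) :=
        Summable.tsum_le_tsum (fun n => hfle (n + N)) ((summable_nat_add_iff N).2 hfsum)
          (hcsumN.mul_left 4)
      have h2 : ∑' n, 4 * c j (n + N) = 4 * ∑' n, c j (n + N) := tsum_mul_left
      have h3 := hN j
      calc ∑' n, f (n + N) ≤ 4 * ∑' n, c j (n + N) := by rw [← h2]; exact h1
        _ < 4 * (ε ^ 2 / 8) := by linarith
        _ = ε ^ 2 / 2 := by ring
    have hε2 : 0 < ε ^ 2 := pow_pos hε 2
    linarith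
  -- identify goal with ∑' f
  have : (fun n : ℕ => ‖Complex.exp (Complex.I * ((tminus + s : ℝ) : ℂ) * (lam n : ℂ))
      - Complex.exp (Complex.I * (tminus : ℂ) * (lam n : ℂ))‖ ^ 2
      * ‖⟪(φ n : H), ψ j⟫_ℂ‖ ^ 2) = f := rfl
  exact this ▸ hgoal
end

section
/- Let K be a self-adjoint linear operator on a finite-dimensional complex inner product space V. Then for every t_- < 0 and every ε > 0 there exists t_+ > 0 such that ‖exp(i t_- K) − exp(i t_+ K)‖ < ε in the operator norm. -/
open scoped InnerProductSpace

set_option synthInstance.maxHeartbeats 1000000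
set_option maxHeartbeats 1000000

/-- Recurrence in finite dimensions, Eq. (8) of the paper: a one-parameter unitary group
with bounded self-adjoint generator on a finite-dimensional complex inner product space
revisits its own past approximately in operator norm. -/
theorem finite_dim_recurrence
    {V : Type*} [NormedAddCommGroup V] [InnerProductSpace ℂ V] [FiniteDimensional ℂ V]
    (K : V →L[ℂ] V)
    (hKsa : ∀ ψ χ : V, ⟪K ψ, χ⟫_ℂ = ⟪ψ, K χ⟫_ℂ)
    (tminus : ℝ) (htminus : tminus < 0) (ε : ℝ) (hε : 0 < ε) :
    ∃ tplus : ℝ, 0 < tplus ∧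
      ‖NormedSpace.exp (Complex.I • ((tminus : ℂ) • K))
        - NormedSpace.exp (Complex.I • ((tplus : ℂ) • K))‖ < ε := by
  classical
  let +nondep : NormedAlgebra ℚ (V →L[ℂ] V) := .restrictScalars ℚ ℂ _
  set U : ℝ → (V →L[ℂ] V) := fun t => NormedSpace.exp (Complex.I • ((t : ℂ) • K)) with hUdef
  have hK : IsSelfAdjoint K := ContinuousLinearMap.isSelfAdjoint_iff_isSymmetric.mpr hKsa
  -- skew-adjointness of the generator
  have hskew : ∀ t : ℝ, Complex.I • ((t : ℂ) • K) ∈ skewAdjoint (V →L[ℂ] V) := by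
    intro t
    rw [smul_smul]
    refine hK.smul_mem_skewAdjoint ?_
    rw [skewAdjoint.mem_iff]
    simp [mul_comm]
  have hunit : ∀ t : ℝ, U t ∈ unitary (V →L[ℂ] V) := fun t =>
    NormedSpace.exp_mem_unitary_of_mem_skewAdjoint (hskew t)
  -- group law
  have hmul : ∀ a b : ℝ, U (a + b) = U a * U b := by
    intro a b
    have hc : Commute (Complex.I • ((a : ℂ) • K)) (Complex.I • ((b : ℂ) • K)) := by
      simp only [smul_smul]
      exact (Commute.refl K).smul_left _ |>.smul_right _
    have : Complex.I • (((a + b : ℝ) : ℂ) • K)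
        = Complex.I • ((a : ℂ) • K) + Complex.I • ((b : ℂ) • K) := by
      push_cast
      rw [add_smul, smul_add]
    rw [hUdef]
    simp only [this]
    exact NormedSpace.exp_add_of_commute hc
  -- the sequence of iterates at times n * (-tminus)
  set T : ℝ := -tminus with hT
  have hTpos : 0 < T := by simpa [hT] using htminus
  set f : ℕ → (V →L[ℂ] V) := fun n => U (n * T) with hf
  have hfball : ∀ n, f n ∈ Metric.closedBall (0 : V →L[ℂ] V) 1 := by
    intro n
    rw [Metric.mem_closedBall, dist_zero_right]
    rcases subsingleton_or_nontrivial (V →L[ℂ] V) with h | h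
    · rw [Subsingleton.elim (f n) 0]; simp
    · exact le_of_eq (CStarRing.norm_of_mem_unitary (hunit _))
  obtain ⟨x, -, φ, hφ, hconv⟩ :=
    (isCompact_closedBall (0 : V →L[ℂ] V) 1).tendsto_subseq hfball
  rw [Metric.tendsto_atTop] at hconv
  obtain ⟨N, hN⟩ := hconv (ε / 2) (half_pos hε)
  set n := φ N with hn
  set m := φ (N + 2) with hm
  have hnm : n + 2 ≤ m := by
    have h1 := hφ (show N < N + 1 by omega)
    have h2 := hφ (show N + 1 < N + 2 by omega)
    omega
  have hclose : ‖f n - f m‖ < ε := by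
    have h1 := hN N le_rfl
    have h2 := hN (N + 2) (by omega)
    have := dist_triangle (f n) x (f m)
    rw [dist_eq_norm] at *
    calc ‖f n - f m‖ ≤ ‖f n - x‖ + ‖x - f m‖ := norm_sub_le_norm_sub_add_norm_sub _ _ _
      _ < ε / 2 + ε / 2 := by
          refine add_lt_add h1 ?_
          rw [norm_sub_rev]
          exact h2
      _ = ε := add_halves ε
  -- translate back
  refine ⟨(m - n : ℕ) * T + tminus, ?_, ?_⟩
  · have h2 : (2 : ℝ) ≤ (m - n : ℕ) := by
      have : 2 ≤ m - n := by omega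
      exact_mod_cast this
    nlinarith [hTpos]
  · have key : U tminus - U ((m - n : ℕ) * T + tminus)
        = U (tminus - n * T) * (f n - f m) := by
      rw [mul_sub, hf]
      have e1 : U (tminus - n * T) * U (n * T) = U tminus := by
        rw [← hmul]; ring_nf
      have e2 : U (tminus - n * T) * U (m * T) = U ((m - n : ℕ) * T + tminus) := by
        rw [← hmul]
        congr 1
        have : ((m - n : ℕ) : ℝ) = (m : ℝ) - n := by
          have : n ≤ m := by omega
          push_cast [Nat.cast_sub this]
          ring
        rw [this]; ring
      rw [e1, e2]
    show ‖U tminus - U ((m - n : ℕ) * T + tminus)‖ < ε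
    rw [key, CStarRing.norm_mem_unitary_mul _ (hunit _)]
    exact hclose
end

section
/- (Strong continuity of the exponential map on self-adjoint operators) Let H be a complex Hilbert space, F a filter on an index type ι, and (A_i)_{i∈ι} a family of bounded self-adjoint operators on H converging strongly along F to a bounded self-adjoint operator A, i.e. for every ψ ∈ H, A_i ψ → A ψ along F. Then exp(iA_i) converges strongly to exp(iA) along F: for every ψ ∈ H, exp(iA_i) ψ → exp(iA) ψ along F. (No uniform bound on ‖A_i‖ is assumed.) -/
open scoped InnerProductSpace
open Filter

section Aux
variable {H : Type*} [NormedAddCommGroup H] [InnerProductSpace ℂ H] [CompleteSpace H]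



lemma aux_exp_norm (T : H →L[ℂ] H) (hT : IsSelfAdjoint T) (w : ℝ) (x : H) :
    ‖NormedSpace.exp ((w : ℂ) • (Complex.I • T)) x‖ = ‖x‖ := by
  set S : H →L[ℂ] H := (w : ℂ) • (Complex.I • T) with hS
  have hstarS : star S = -S := by
    rw [hS, star_smul, star_smul, hT.star_eq]
    simp [Complex.star_def, Complex.conj_ofReal, Complex.conj_I]
  letI : NormedAlgebra ℚ (H →L[ℂ] H) := NormedAlgebra.restrictScalars ℚ ℂ (H →L[ℂ] H)
  have h1 : NormedSpace.exp (-S) * NormedSpace.exp S = 1 := by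
    rw [← NormedSpace.exp_add_of_commute (Commute.refl S).neg_left, neg_add_cancel,
      NormedSpace.exp_zero]
  have hadj : star (NormedSpace.exp S) = NormedSpace.exp (-S) := by
    rw [NormedSpace.star_exp, hstarS]
  have key : ⟪NormedSpace.exp S x, NormedSpace.exp S x⟫_ℂ = ⟪x, x⟫_ℂ := by
    have := ContinuousLinearMap.adjoint_inner_left (NormedSpace.exp S)
      x (NormedSpace.exp S x)
    rw [← ContinuousLinearMap.star_eq_adjoint, hadj] at this
    rw [← this]
    have : NormedSpace.exp (-S) (NormedSpace.exp S x)
        = (NormedSpace.exp (-S) * NormedSpace.exp S) x := rfl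
    rw [this, h1, ContinuousLinearMap.one_apply]
  have h3 : ‖NormedSpace.exp S x‖ ^ 2 = ‖x‖ ^ 2 := by
    have h2 := key
    rw [inner_self_eq_norm_sq_to_K (𝕜 := ℂ), inner_self_eq_norm_sq_to_K (𝕜 := ℂ)] at h2
    exact_mod_cast h2
  nlinarith [norm_nonneg (NormedSpace.exp S x), norm_nonneg x]

lemma aux_norm_le (T : H →L[ℂ] H) (hT : IsSelfAdjoint T) (x : H) :
    ‖x‖ ≤ ‖(T + Complex.I • (1 : H →L[ℂ] H)) x‖ := by
  set y := (T + Complex.I • (1 : H →L[ℂ] H)) x with hy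
  have hsymm : ⟪T x, x⟫_ℂ = ⟪x, T x⟫_ℂ :=
    ContinuousLinearMap.isSelfAdjoint_iff_isSymmetric.mp hT x x
  have hreal : (⟪T x, x⟫_ℂ).im = 0 := by
    have h1 : (starRingEnd ℂ) ⟪T x, x⟫_ℂ = ⟪T x, x⟫_ℂ := by
      rw [inner_conj_symm]; exact hsymm.symm
    exact Complex.conj_eq_iff_im.mp h1
  have hyx : ⟪y, x⟫_ℂ = ⟪T x, x⟫_ℂ - Complex.I * (‖x‖ : ℂ) ^ 2 := by
    rw [hy]
    simp [inner_add_left, inner_smul_left, Complex.conj_I, inner_self_eq_norm_sq_to_K]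
    ring
  have him : (⟪y, x⟫_ℂ).im = -(‖x‖ ^ 2) := by
    have hc : ((‖x‖ : ℂ)) ^ 2 = ((‖x‖ ^ 2 : ℝ) : ℂ) := by push_cast; ring
    rw [hyx, hc]
    simp [hreal, ← Complex.ofReal_pow]
  have h2 : ‖x‖ ^ 2 ≤ ‖⟪y, x⟫_ℂ‖ := by
    calc ‖x‖ ^ 2 = |(⟪y, x⟫_ℂ).im| := by rw [him, abs_neg, abs_of_nonneg (sq_nonneg _)]
    _ ≤ ‖⟪y, x⟫_ℂ‖ := Complex.abs_im_le_norm _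
  have h3 : ‖⟪y, x⟫_ℂ‖ ≤ ‖y‖ * ‖x‖ := by
    exact norm_inner_le_norm (𝕜 := ℂ) y x
  rcases eq_or_lt_of_le (norm_nonneg x) with h | h
  · rw [← h]; exact norm_nonneg _
  · have := h2.trans h3
    nlinarith

lemma aux_isUnit (T : H →L[ℂ] H) (hT : IsSelfAdjoint T) :
    IsUnit (T + Complex.I • (1 : H →L[ℂ] H)) := by
  have hnm : (-Complex.I) ∉ spectrum ℂ T := by
    intro hm
    have := hT.mem_spectrum_eq_re hm
    simp at this
  have h := spectrum.notMem_iff.mp hnm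
  have heq : algebraMap ℂ (H →L[ℂ] H) (-Complex.I) - T
      = -(T + Complex.I • (1 : H →L[ℂ] H)) := by
    rw [Algebra.algebraMap_eq_smul_one]
    module
  rw [heq] at h
  exact (IsUnit.neg_iff _).mp h

lemma keyop {M : Type*} [Ring M] [Algebra ℂ M]
    (Pi Ri P₀ R₀ u e Bi B₀ : M)
    (hBi : Bi = Complex.I • Pi + 1) (hB₀ : B₀ = Complex.I • P₀ + 1)
    (hPiRi : Pi * Ri = 1) (hR₀P₀ : R₀ * P₀ = 1)
    (huP : u * P₀ = P₀ * u) (hPie : Pi * e = e * Pi) :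
    -((Bi * e) * u) + e * (u * B₀) +
      (-((Bi * e) * ((Ri - R₀) * (u * P₀))) + e * ((Ri - R₀) * ((u * B₀) * P₀)))
      = e * ((Ri - R₀) * (u * (B₀ * P₀ - P₀))) := by
  subst hBi hB₀
  have huP' : ∀ x, u * (P₀ * x) = P₀ * (u * x) := fun x => by
    rw [← mul_assoc, huP, mul_assoc]
  have hPie' : ∀ x, Pi * (e * x) = e * (Pi * x) := fun x => by
    rw [← mul_assoc, hPie, mul_assoc]
  have hPiRi' : ∀ x, Pi * (Ri * x) = x := fun x => by
    rw [← mul_assoc, hPiRi, one_mul]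
  have hR₀P₀' : ∀ x, R₀ * (P₀ * x) = x := fun x => by
    rw [← mul_assoc, hR₀P₀, one_mul]
  simp only [mul_add, add_mul, mul_sub, sub_mul, smul_mul_assoc, mul_smul_comm, mul_assoc,
    mul_one, one_mul, huP, huP', hPie, hPie', hPiRi, hPiRi', hR₀P₀, hR₀P₀']
  module



lemma aux_comp_ofReal {E : Type*} [NormedAddCommGroup E] [NormedSpace ℂ E] {f : ℂ → E} {f' : E}
    {s : ℝ} (hf : HasDerivAt f f' (s : ℂ)) : HasDerivAt (fun t : ℝ => f ↑t) f' s := by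
  simpa [Function.comp_def] using hf.scomp s Complex.ofRealCLM.hasDerivAt

lemma aux_deriv2 (B₀ : H →L[ℂ] H) (v : H) (s : ℝ) :
    HasDerivAt (fun t : ℝ => NormedSpace.exp ((t : ℂ) • B₀) v)
      (NormedSpace.exp ((s : ℂ) • B₀) (B₀ v)) s := by
  have h1 : HasDerivAt (fun z : ℂ => NormedSpace.exp (z • B₀) v)
      (NormedSpace.exp ((s : ℂ) • B₀) (B₀ v)) (s : ℂ) := by
    have h := (hasDerivAt_exp_smul_const (𝕂 := ℂ) B₀ (s : ℂ)).clm_apply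
      (hasDerivAt_const ((s : ℂ)) v)
    simpa [ContinuousLinearMap.mul_apply] using h
  exact aux_comp_ofReal h1

lemma aux_deriv (Bi B₀ C : H →L[ℂ] H) (v : H) (s : ℝ) :
    HasDerivAt (fun t : ℝ => NormedSpace.exp ((1 - (t : ℂ)) • Bi)
        (C (NormedSpace.exp ((t : ℂ) • B₀) v)))
      (-((Bi * NormedSpace.exp ((1 - (s : ℂ)) • Bi))
            (C (NormedSpace.exp ((s : ℂ) • B₀) v)))
        + NormedSpace.exp ((1 - (s : ℂ)) • Bi)
            (C (NormedSpace.exp ((s : ℂ) • B₀) (B₀ v)))) s := by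
  have hc : HasDerivAt (fun z : ℂ => NormedSpace.exp ((1 - z) • Bi))
      (-(Bi * NormedSpace.exp ((1 - (s : ℂ)) • Bi))) (s : ℂ) := by
    have h1 := hasDerivAt_exp_smul_const' (𝕂 := ℂ) Bi (1 - (s : ℂ))
    have h2 : HasDerivAt (fun z : ℂ => 1 - z) (-1 : ℂ) (s : ℂ) := by
      simpa using (hasDerivAt_id (s : ℂ)).const_sub (1 : ℂ)
    have h3 := h1.scomp (s : ℂ) h2
    simpa [Function.comp_def] using h3
  have hu : HasDerivAt (fun z : ℂ => C (NormedSpace.exp (z • B₀) v))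
      (C (NormedSpace.exp ((s : ℂ) • B₀) (B₀ v))) (s : ℂ) := by
    have h := (hasDerivAt_exp_smul_const (𝕂 := ℂ) B₀ (s : ℂ)).clm_apply
      (hasDerivAt_const ((s : ℂ)) v)
    have h' := (hasDerivAt_const ((s : ℂ)) C).clm_apply h
    simpa [ContinuousLinearMap.mul_apply] using h'
  have h4 := hc.clm_apply hu
  have h5 := aux_comp_ofReal h4
  simpa [ContinuousLinearMap.neg_apply] using h5

end Aux

set_option maxHeartbeats 1000000 in
/-- Strong continuity of the exponential map on self-adjoint operators: if a family of
bounded self-adjoint operators converges strongly along a filter to a bounded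
self-adjoint operator, then the corresponding unitary exponentials converge strongly.
No uniform norm bound is assumed. -/
theorem exp_strong_continuous_on_selfAdjoint
    {H : Type*} [NormedAddCommGroup H] [InnerProductSpace ℂ H] [CompleteSpace H]
    {ι : Type*} (F : Filter ι)
    (A : ι → (H →L[ℂ] H)) (A₀ : H →L[ℂ] H)
    (hAsa : ∀ i, ∀ ψ χ : H, ⟪A i ψ, χ⟫_ℂ = ⟪ψ, A i χ⟫_ℂ)
    (hA₀sa : ∀ ψ χ : H, ⟪A₀ ψ, χ⟫_ℂ = ⟪ψ, A₀ χ⟫_ℂ)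
    (hconv : ∀ ψ : H, Tendsto (fun i => A i ψ) F (nhds (A₀ ψ))) :
    ∀ ψ : H, Tendsto (fun i => NormedSpace.exp (Complex.I • A i) ψ) F
      (nhds (NormedSpace.exp (Complex.I • A₀) ψ)) := by
  intro ψ
  have hsa : ∀ i, IsSelfAdjoint (A i) := fun i =>
    ContinuousLinearMap.isSelfAdjoint_iff_isSymmetric.mpr (fun x y => hAsa i x y)
  have hsa₀ : IsSelfAdjoint A₀ :=
    ContinuousLinearMap.isSelfAdjoint_iff_isSymmetric.mpr (fun x y => hA₀sa x y)
  set P : ι → H →L[ℂ] H := fun i => A i + Complex.I • 1 with hPdef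
  set P₀ : H →L[ℂ] H := A₀ + Complex.I • 1 with hP₀def
  have hui : ∀ i, IsUnit (P i) := fun i => aux_isUnit (A i) (hsa i)
  have hu₀ : IsUnit P₀ := aux_isUnit A₀ hsa₀
  set Ri : ι → H →L[ℂ] H := fun i => ↑((hui i).unit⁻¹) with hRidef
  set R₀ : H →L[ℂ] H := ↑(hu₀.unit⁻¹) with hR₀def
  have hPR : ∀ i, P i * Ri i = 1 := fun i => by
    have := (hui i).unit.mul_inv
    rwa [IsUnit.unit_spec] at this
  have hRP : ∀ i, Ri i * P i = 1 := fun i => by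
    have := (hui i).unit.inv_mul
    rwa [IsUnit.unit_spec] at this
  have hP₀R₀ : P₀ * R₀ = 1 := by
    have := hu₀.unit.mul_inv
    rwa [IsUnit.unit_spec] at this
  have hR₀P₀ : R₀ * P₀ = 1 := by
    have := hu₀.unit.inv_mul
    rwa [IsUnit.unit_spec] at this
  have hRile : ∀ i (x : H), ‖Ri i x‖ ≤ ‖x‖ := by
    intro i x
    have h := aux_norm_le (A i) (hsa i) (Ri i x)
    rw [show (A i + Complex.I • (1 : H →L[ℂ] H)) (Ri i x) = (P i * Ri i) x from rfl,
      hPR i, ContinuousLinearMap.one_apply] at h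
    exact h
  have hR₀le : ∀ x : H, ‖R₀ x‖ ≤ ‖x‖ := by
    intro x
    have h := aux_norm_le A₀ hsa₀ (R₀ x)
    rw [show (A₀ + Complex.I • (1 : H →L[ℂ] H)) (R₀ x) = (P₀ * R₀) x from rfl,
      hP₀R₀, ContinuousLinearMap.one_apply] at h
    exact h
  set Ti : ι → H →L[ℂ] H := fun i => Ri i - R₀ with hTidef
  have hTile : ∀ i (x : H), ‖Ti i x‖ ≤ 2 * ‖x‖ := by
    intro i x
    rw [hTidef]
    simp only [ContinuousLinearMap.sub_apply]
    calc ‖Ri i x - R₀ x‖ ≤ ‖Ri i x‖ + ‖R₀ x‖ := norm_sub_le _ _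
    _ ≤ ‖x‖ + ‖x‖ := add_le_add (hRile i x) (hR₀le x)
    _ = 2 * ‖x‖ := by ring
  have hTconv : ∀ x : H, Tendsto (fun i => Ti i x) F (nhds 0) := by
    intro x
    have hb : ∀ i, ‖Ti i x‖ ≤ ‖A₀ (R₀ x) - A i (R₀ x)‖ := by
      intro i
      have e1 : x = P₀ (R₀ x) := by
        have h : (P₀ * R₀) x = x := by rw [hP₀R₀]; exact ContinuousLinearMap.one_apply x
        exact h.symm
      have e2 : R₀ x = Ri i (P i (R₀ x)) := by
        have h : (Ri i * P i) (R₀ x) = R₀ x := by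
          rw [hRP i]; exact ContinuousLinearMap.one_apply _
        exact h.symm
      have hT : Ti i x = Ri i (A₀ (R₀ x) - A i (R₀ x)) := by
        rw [hTidef]
        simp only [ContinuousLinearMap.sub_apply]
        calc Ri i x - R₀ x = Ri i (P₀ (R₀ x)) - Ri i (P i (R₀ x)) := by rw [← e1, ← e2]
        _ = Ri i (P₀ (R₀ x) - P i (R₀ x)) := (map_sub _ _ _).symm
        _ = Ri i (A₀ (R₀ x) - A i (R₀ x)) := by
            congr 1
            rw [hP₀def, hPdef]
            simp only [ContinuousLinearMap.add_apply]
            abel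
      rw [hT]
      exact hRile i _
    have ht : Tendsto (fun i => ‖A₀ (R₀ x) - A i (R₀ x)‖) F (nhds 0) := by
      have h := tendsto_iff_norm_sub_tendsto_zero.mp (hconv (R₀ x))
      simpa [norm_sub_rev] using h
    exact squeeze_zero_norm hb ht
  set χ : H := P₀ ψ with hχdef
  set B₀ : H →L[ℂ] H := Complex.I • A₀ with hB₀def
  set χ₂ : H := B₀ χ - χ with hχ₂def
  set Y₂ : ℝ → H := fun s => NormedSpace.exp ((s : ℂ) • B₀) χ₂ with hY₂def
  set L : ℝ := ‖B₀ χ₂‖ with hLdef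
  have hLnn : 0 ≤ L := norm_nonneg _
  have hexpnorm₀ : ∀ (w : ℝ) (x : H), ‖NormedSpace.exp ((w : ℂ) • B₀) x‖ = ‖x‖ := by
    intro w x
    rw [hB₀def]
    exact aux_exp_norm A₀ hsa₀ w x
  have hY₂lip : ∀ s t : ℝ, ‖Y₂ s - Y₂ t‖ ≤ L * |s - t| := by
    intro s t
    have h := Convex.norm_image_sub_le_of_norm_hasDerivWithin_le
      (f := Y₂) (f' := fun u : ℝ => NormedSpace.exp ((u : ℂ) • B₀) (B₀ χ₂))
      (s := Set.univ) (C := L)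
      (fun u _ => (aux_deriv2 B₀ χ₂ u).hasDerivWithinAt)
      (fun u _ => le_of_eq (hexpnorm₀ u (B₀ χ₂)))
      convex_univ (Set.mem_univ t) (Set.mem_univ s)
    rwa [Real.norm_eq_abs] at h
  refine Metric.tendsto_nhds.mpr (fun ε hε => ?_)
  set N : ℕ := max 1 ⌈12 * L / ε⌉₊ with hNdef
  have hN1 : 1 ≤ N := le_max_left _ _
  have hNpos : (0 : ℝ) < (N : ℝ) := by exact_mod_cast lt_of_lt_of_le one_pos hN1
  have hLN : 2 * (L * (1 / (N : ℝ))) ≤ ε / 6 := by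
    have h12 : 12 * L / ε ≤ (N : ℝ) := by
      refine le_trans (Nat.le_ceil _) ?_
      exact_mod_cast le_max_right 1 ⌈12 * L / ε⌉₊
    have h13 : 12 * L ≤ (N : ℝ) * ε := (div_le_iff₀ hε).mp h12
    rw [show 2 * (L * (1 / (N : ℝ))) = 2 * L / (N : ℝ) by ring,
      div_le_div_iff₀ hNpos (by norm_num : (0:ℝ) < 6)]
    nlinarith [h13]
  have ev1 : ∀ᶠ i in F, ‖Ti i (NormedSpace.exp B₀ χ)‖ < ε / 3 := by
    have h := (hTconv (NormedSpace.exp B₀ χ)).norm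
    rw [norm_zero] at h
    exact h.eventually_lt_const (by positivity)
  have ev2 : ∀ᶠ i in F, ‖Ti i χ‖ < ε / 3 := by
    have h := (hTconv χ).norm
    rw [norm_zero] at h
    exact h.eventually_lt_const (by positivity)
  have ev3 : ∀ᶠ i in F, ∀ m ∈ Finset.range (N + 1), ‖Ti i (Y₂ ((m : ℝ) / (N : ℝ)))‖ < ε / 6 := by
    rw [Filter.eventually_all_finset]
    intro m _
    have h := (hTconv (Y₂ ((m : ℝ) / (N : ℝ)))).norm
    rw [norm_zero] at h
    exact h.eventually_lt_const (by positivity)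
  filter_upwards [ev1, ev2, ev3] with i h1 h2 h3
  rw [dist_eq_norm]
  set Bi : H →L[ℂ] H := Complex.I • A i with hBidef
  have hexpnormi : ∀ (w : ℝ) (x : H), ‖NormedSpace.exp ((w : ℂ) • Bi) x‖ = ‖x‖ := by
    intro w x
    rw [hBidef]
    exact aux_exp_norm (A i) (hsa i) w x
  -- uniform bound on [0,1]
  have hsup : ∀ s ∈ Set.Icc (0:ℝ) 1, ‖Ti i (Y₂ s)‖ ≤ ε / 3 := by
    rintro s ⟨hs0, hs1⟩
    set m : ℕ := ⌊s * (N : ℝ)⌋₊ with hmdef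
    have hmle : (m : ℝ) ≤ s * N := Nat.floor_le (by positivity)
    have hmlt : s * N < (m : ℝ) + 1 := Nat.lt_floor_add_one _
    have hmN : m ∈ Finset.range (N + 1) := by
      rw [Finset.mem_range, Nat.lt_succ_iff]
      have hr : (m : ℝ) ≤ (N : ℝ) := le_trans hmle (by nlinarith)
      exact_mod_cast hr
    have hdist : |s - (m : ℝ) / (N : ℝ)| ≤ 1 / (N : ℝ) := by
      have hmd : (m : ℝ) / N ≤ s := by rw [div_le_iff₀ hNpos]; exact hmle
      have hmd2 : s < (m : ℝ) / N + 1 / N := by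
        rw [← add_div, lt_div_iff₀ hNpos]
        linarith
      rw [abs_le]
      constructor
      · have : (0:ℝ) < 1 / N := by positivity
        linarith
      · linarith
    have key : Ti i (Y₂ s) = Ti i (Y₂ s - Y₂ ((m : ℝ) / N)) + Ti i (Y₂ ((m : ℝ) / N)) := by
      rw [map_sub]; abel
    calc ‖Ti i (Y₂ s)‖ ≤ ‖Ti i (Y₂ s - Y₂ ((m : ℝ) / N))‖ + ‖Ti i (Y₂ ((m : ℝ) / N))‖ := by
          rw [key]; exact norm_add_le _ _
    _ ≤ 2 * ‖Y₂ s - Y₂ ((m : ℝ) / N)‖ + ε / 6 :=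
        add_le_add (hTile i _) (le_of_lt (h3 m hmN))
    _ ≤ 2 * (L * (1 / (N : ℝ))) + ε / 6 := by
        have hl := hY₂lip s ((m : ℝ) / N)
        nlinarith [hdist, hLnn]
    _ ≤ ε / 6 + ε / 6 := by linarith
    _ = ε / 3 := by ring
  -- the interpolating function and its derivative
  set kk : ℝ → H := fun t => NormedSpace.exp ((1 - (t : ℂ)) • Bi)
        (NormedSpace.exp ((t : ℂ) • B₀) ψ)
      + NormedSpace.exp ((1 - (t : ℂ)) • Bi) (Ti i (NormedSpace.exp ((t : ℂ) • B₀) χ))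
    with hkkdef
  have hkd : ∀ s ∈ Set.Icc (0:ℝ) 1, HasDerivWithinAt kk
      (NormedSpace.exp ((1 - (s : ℂ)) • Bi) (Ti i (NormedSpace.exp ((s : ℂ) • B₀) χ₂)))
      (Set.Icc (0:ℝ) 1) s := by
    intro s _
    have hga := aux_deriv Bi B₀ (1 : H →L[ℂ] H) ψ s
    simp only [ContinuousLinearMap.one_apply] at hga
    have hha := aux_deriv Bi B₀ (Ti i) χ s
    have hsum := hga.add hha
    have hBieq : Bi = Complex.I • P i + 1 := by
      rw [hBidef, hPdef]
      rw [smul_add, smul_smul, Complex.I_mul_I, neg_smul, one_smul]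
      abel
    have hB₀eq : B₀ = Complex.I • P₀ + 1 := by
      rw [hB₀def, hP₀def]
      rw [smul_add, smul_smul, Complex.I_mul_I, neg_smul, one_smul]
      abel
    have huP : NormedSpace.exp ((s : ℂ) • B₀) * P₀ = P₀ * NormedSpace.exp ((s : ℂ) • B₀) := by
      have hc : Commute P₀ ((s : ℂ) • B₀) := by
        rw [hP₀def, hB₀def]
        exact (((Commute.refl A₀).add_left ((Commute.one_left A₀).smul_left Complex.I)).smul_right
          Complex.I).smul_right (s : ℂ)
      exact ((hc.exp_right).symm).eq
    have hPie : P i * NormedSpace.exp ((1 - (s : ℂ)) • Bi)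
        = NormedSpace.exp ((1 - (s : ℂ)) • Bi) * P i := by
      have hc : Commute (P i) ((1 - (s : ℂ)) • Bi) := by
        rw [hPdef, hBidef]
        exact (((Commute.refl (A i)).add_left ((Commute.one_left (A i)).smul_left
          Complex.I)).smul_right Complex.I).smul_right (1 - (s : ℂ))
      exact (hc.exp_right).eq
    have hop := keyop (P i) (Ri i) P₀ R₀ (NormedSpace.exp ((s : ℂ) • B₀))
      (NormedSpace.exp ((1 - (s : ℂ)) • Bi)) Bi B₀ hBieq hB₀eq (hPR i) hR₀P₀ huP hPie
    have hops := congrArg (fun T : H →L[ℂ] H => T ψ) hop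
    simp only [ContinuousLinearMap.mul_apply, ContinuousLinearMap.add_apply,
      ContinuousLinearMap.neg_apply, ContinuousLinearMap.sub_apply, map_sub] at hops
    have heq : -((Bi * NormedSpace.exp ((1 - (s : ℂ)) • Bi))
            (NormedSpace.exp ((s : ℂ) • B₀) ψ))
        + NormedSpace.exp ((1 - (s : ℂ)) • Bi) (NormedSpace.exp ((s : ℂ) • B₀) (B₀ ψ))
        + (-((Bi * NormedSpace.exp ((1 - (s : ℂ)) • Bi))
            (Ti i (NormedSpace.exp ((s : ℂ) • B₀) χ)))
          + NormedSpace.exp ((1 - (s : ℂ)) • Bi) (Ti i (NormedSpace.exp ((s : ℂ) • B₀) (B₀ χ))))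
        = NormedSpace.exp ((1 - (s : ℂ)) • Bi)
            (Ti i (NormedSpace.exp ((s : ℂ) • B₀) χ₂)) := by
      rw [hχ₂def, hχdef, hTidef]
      simp only [ContinuousLinearMap.mul_apply, ContinuousLinearMap.sub_apply, map_sub]
      convert hops using 2
    rw [← heq]
    exact hsum.hasDerivWithinAt
  have hbound : ∀ s ∈ Set.Icc (0:ℝ) 1,
      ‖NormedSpace.exp ((1 - (s : ℂ)) • Bi)
        (Ti i (NormedSpace.exp ((s : ℂ) • B₀) χ₂))‖ ≤ ε / 3 := by
    intro s hs
    have hc : (1 - (s : ℂ)) = (((1 - s : ℝ)) : ℂ) := by push_cast; ring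
    rw [hc, hexpnormi (1 - s) _]
    exact hsup s hs
  have hmv := Convex.norm_image_sub_le_of_norm_hasDerivWithin_le
    (f := kk) (C := ε / 3) hkd hbound (convex_Icc 0 1)
    (Set.mem_Icc.mpr ⟨le_refl 0, zero_le_one⟩) (Set.mem_Icc.mpr ⟨zero_le_one, le_refl 1⟩)
  have hmv' : ‖kk 1 - kk 0‖ ≤ ε / 3 := by
    simpa using hmv
  have hk1 : kk 1 = NormedSpace.exp B₀ ψ + Ti i (NormedSpace.exp B₀ χ) := by
    rw [hkkdef]
    norm_num [NormedSpace.exp_zero]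
  have hk0 : kk 0 = NormedSpace.exp Bi ψ + NormedSpace.exp Bi (Ti i χ) := by
    rw [hkkdef]
    norm_num [NormedSpace.exp_zero]
  have hsplit : NormedSpace.exp Bi ψ - NormedSpace.exp B₀ ψ
      = -(kk 1 - kk 0) + Ti i (NormedSpace.exp B₀ χ) - NormedSpace.exp Bi (Ti i χ) := by
    rw [hk1, hk0]; abel
  have hE : ‖NormedSpace.exp Bi (Ti i χ)‖ = ‖Ti i χ‖ := by
    have h := hexpnormi 1 (Ti i χ)
    norm_num at h
    exact h
  calc ‖NormedSpace.exp Bi ψ - NormedSpace.exp B₀ ψ‖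
      ≤ ‖kk 1 - kk 0‖ + ‖Ti i (NormedSpace.exp B₀ χ)‖ + ‖NormedSpace.exp Bi (Ti i χ)‖ := by
        rw [hsplit]
        refine le_trans (norm_sub_le _ _) ?_
        gcongr
        refine le_trans (norm_add_le _ _) ?_
        rw [norm_neg]
  _ < ε / 3 + ε / 3 + ε / 3 := by
        rw [hE]
        linarith [hmv', h1, h2]
  _ = ε := by ring
end

section
/- Let H be a complex Hilbert space, F a filter on an index type ι, and (A_i)_{i∈ι} a family of bounded self-adjoint operators converging strongly along F to a bounded self-adjoint operator A. Then the resolvents converge strongly: for every ψ ∈ H, (A_i + i·1)^{-1} ψ → (A + i·1)^{-1} ψ along F, and likewise (A_i − i·1)^{-1} ψ → (A − i·1)^{-1} ψ along F. (All inverses exist since A ± i·1 is invertible with inverse of norm at most 1 for any bounded self-adjoint A.) -/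
open scoped InnerProductSpace
open Filter

lemma aux_lb {H : Type*} [NormedAddCommGroup H] [InnerProductSpace ℂ H]
    (T : H →L[ℂ] H) (hT : ∀ ψ χ : H, ⟪T ψ, χ⟫_ℂ = ⟪ψ, T χ⟫_ℂ)
    (c : ℂ) (hre : c.re = 0) (hc1 : ‖c‖ = 1) (ψ : H) :
    ‖ψ‖ ≤ ‖(T + c • (1 : H →L[ℂ] H)) ψ‖ := by
  have him : (⟪T ψ, ψ⟫_ℂ).im = 0 := by
    have h1 : (starRingEnd ℂ) ⟪T ψ, ψ⟫_ℂ = ⟪T ψ, ψ⟫_ℂ := by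
      rw [inner_conj_symm]; exact (hT ψ ψ).symm
    exact Complex.conj_eq_iff_im.mp h1
  have happ : (T + c • (1 : H →L[ℂ] H)) ψ = T ψ + c • ψ := by
    simp [ContinuousLinearMap.add_apply]
  have hsq : ‖(T + c • (1 : H →L[ℂ] H)) ψ‖ ^ 2 = ‖T ψ‖ ^ 2 + ‖ψ‖ ^ 2 := by
    rw [happ, @norm_add_sq ℂ]
    have hinner : ⟪T ψ, c • ψ⟫_ℂ = c * ⟪T ψ, ψ⟫_ℂ := by
      rw [inner_smul_right]
    have : RCLike.re ⟪T ψ, c • ψ⟫_ℂ = 0 := by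
      rw [hinner]
      simp [Complex.mul_re, hre, him]
    rw [this, norm_smul, hc1]
    ring
  nlinarith [norm_nonneg (T ψ), norm_nonneg ((T + c • (1 : H →L[ℂ] H)) ψ),
    norm_nonneg ψ]

lemma aux_unit {H : Type*} [NormedAddCommGroup H] [InnerProductSpace ℂ H]
    [CompleteSpace H]
    (T : H →L[ℂ] H) (hT : ∀ ψ χ : H, ⟪T ψ, χ⟫_ℂ = ⟪ψ, T χ⟫_ℂ)
    (c : ℂ) (hc : c = Complex.I ∨ c = -Complex.I) :
    IsUnit (T + c • (1 : H →L[ℂ] H)) := by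
  have hsa : IsSelfAdjoint T := by
    rw [ContinuousLinearMap.isSelfAdjoint_iff_isSymmetric]
    exact fun x y => hT x y
  have hns : (-c) ∉ spectrum ℂ T := by
    intro hmem
    have := hsa.mem_spectrum_eq_re hmem
    rcases hc with rfl | rfl <;>
      · have h2 := congrArg Complex.im this
        simp at h2
  rw [spectrum.notMem_iff] at hns
  have : T + c • (1 : H →L[ℂ] H) = -((algebraMap ℂ (H →L[ℂ] H)) (-c) - T) := by
    rw [Algebra.algebraMap_eq_smul_one]
    simp [neg_smul]
  rw [this]
  exact hns.neg

lemma aux_conv {H : Type*} [NormedAddCommGroup H] [InnerProductSpace ℂ H]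
    [CompleteSpace H] {ι : Type*} (F : Filter ι)
    (A : ι → (H →L[ℂ] H)) (A₀ : H →L[ℂ] H)
    (hAsa : ∀ i, ∀ ψ χ : H, ⟪A i ψ, χ⟫_ℂ = ⟪ψ, A i χ⟫_ℂ)
    (hA₀sa : ∀ ψ χ : H, ⟪A₀ ψ, χ⟫_ℂ = ⟪ψ, A₀ χ⟫_ℂ)
    (hconv : ∀ ψ : H, Tendsto (fun i => A i ψ) F (nhds (A₀ ψ)))
    (c : ℂ) (hc : c = Complex.I ∨ c = -Complex.I) (ψ : H) :
    Tendsto (fun i => Ring.inverse (A i + c • (1 : H →L[ℂ] H)) ψ) F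
      (nhds (Ring.inverse (A₀ + c • (1 : H →L[ℂ] H)) ψ)) := by
  have hre : c.re = 0 := by rcases hc with rfl | rfl <;> simp
  have hc1 : ‖c‖ = 1 := by rcases hc with rfl | rfl <;> simp
  set B : ι → (H →L[ℂ] H) := fun i => A i + c • 1 with hB
  set B₀ : H →L[ℂ] H := A₀ + c • 1 with hB₀
  have hu : ∀ i, IsUnit (B i) := fun i => aux_unit _ (hAsa i) c hc
  have hu₀ : IsUnit B₀ := aux_unit _ hA₀sa c hc
  set R : ι → (H →L[ℂ] H) := fun i => Ring.inverse (B i) with hR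
  set R₀ : H →L[ℂ] H := Ring.inverse B₀ with hR₀
  -- norm bound for the resolvents
  have hbd : ∀ i (φ : H), ‖R i φ‖ ≤ ‖φ‖ := by
    intro i φ
    have h1 := aux_lb (A i) (hAsa i) c hre hc1 (R i φ)
    have h2 : (B i) (R i φ) = φ := by
      rw [← ContinuousLinearMap.mul_apply, Ring.mul_inverse_cancel _ (hu i),
        ContinuousLinearMap.one_apply]
    calc ‖R i φ‖ ≤ ‖(B i) (R i φ)‖ := h1
      _ = ‖φ‖ := by rw [h2]
  -- resolvent identity
  have key : ∀ i, R i - R₀ = R i * (B₀ - B i) * R₀ := by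
    intro i
    have : R i * (B₀ - B i) * R₀ = R i * (B₀ * R₀) - (R i * B i) * R₀ := by
      noncomm_ring
    rw [this, Ring.mul_inverse_cancel _ hu₀, Ring.inverse_mul_cancel _ (hu i),
      mul_one, one_mul]
  have hdiff : ∀ i, B₀ - B i = A₀ - A i := by
    intro i; rw [hB, hB₀]; beta_reduce; abel
  rw [tendsto_iff_norm_sub_tendsto_zero]
  have hle : ∀ i, ‖R i ψ - R₀ ψ‖ ≤ ‖A₀ (R₀ ψ) - A i (R₀ ψ)‖ := by
    intro i
    have h1 : R i ψ - R₀ ψ = (R i) ((B₀ - B i) (R₀ ψ)) := by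
      have := congrArg (fun (T : H →L[ℂ] H) => T ψ) (key i)
      simpa [ContinuousLinearMap.sub_apply, ContinuousLinearMap.mul_apply]
        using this
    rw [h1]
    calc ‖(R i) ((B₀ - B i) (R₀ ψ))‖ ≤ ‖(B₀ - B i) (R₀ ψ)‖ := hbd i _
      _ = ‖A₀ (R₀ ψ) - A i (R₀ ψ)‖ := by
          rw [hdiff i, ContinuousLinearMap.sub_apply]
  have h0 : Tendsto (fun i => ‖A₀ (R₀ ψ) - A i (R₀ ψ)‖) F (nhds 0) := by
    have := (hconv (R₀ ψ))
    rw [tendsto_iff_norm_sub_tendsto_zero] at this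
    simpa [norm_sub_rev] using this
  exact squeeze_zero (fun i => norm_nonneg _) hle h0

/-- Strong convergence of resolvents: if a family of bounded self-adjoint operators
converges strongly along a filter to a bounded self-adjoint operator, then the
resolvents at `±i` converge strongly as well. -/
theorem resolvent_strong_continuous_on_selfAdjoint
    {H : Type*} [NormedAddCommGroup H] [InnerProductSpace ℂ H] [CompleteSpace H]
    {ι : Type*} (F : Filter ι)
    (A : ι → (H →L[ℂ] H)) (A₀ : H →L[ℂ] H)
    (hAsa : ∀ i, ∀ ψ χ : H, ⟪A i ψ, χ⟫_ℂ = ⟪ψ, A i χ⟫_ℂ)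
    (hA₀sa : ∀ ψ χ : H, ⟪A₀ ψ, χ⟫_ℂ = ⟪ψ, A₀ χ⟫_ℂ)
    (hconv : ∀ ψ : H, Tendsto (fun i => A i ψ) F (nhds (A₀ ψ))) :
    (∀ ψ : H, Tendsto
      (fun i => Ring.inverse (A i + Complex.I • (1 : H →L[ℂ] H)) ψ) F
      (nhds (Ring.inverse (A₀ + Complex.I • (1 : H →L[ℂ] H)) ψ))) ∧
    (∀ ψ : H, Tendsto
      (fun i => Ring.inverse (A i - Complex.I • (1 : H →L[ℂ] H)) ψ) F
      (nhds (Ring.inverse (A₀ - Complex.I • (1 : H →L[ℂ] H)) ψ))) := by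
  constructor
  · exact aux_conv F A A₀ hAsa hA₀sa hconv Complex.I (Or.inl rfl)
  · intro ψ
    have h := aux_conv F A A₀ hAsa hA₀sa hconv (-Complex.I) (Or.inr rfl) ψ
    simpa [sub_eq_add_neg, neg_smul] using h
end

section
/- (Trotter product formula for bounded operators) Let A and B be elements of a complex Banach algebra (for instance bounded operators on a complex Hilbert space). Then lim_{n→∞} (exp(A/n) · exp(B/n))^n = exp(A + B), with convergence in the norm of the algebra. -/
open Filter NormedSpace
open scoped Nat

set_option maxHeartbeats 1000000

section Aux

variable {𝔸 : Type*} [NormedRing 𝔸] [NormedAlgebra ℂ 𝔸] [CompleteSpace 𝔸]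

/-- Second-order remainder bound for the exponential series. -/
lemma trotter_exp_remainder (Z : 𝔸) :
    ‖exp Z - 1 - Z‖ ≤ ‖Z‖ ^ 2 * Real.exp ‖Z‖ := by
  have h : HasSum (fun k : ℕ => (k !⁻¹ : ℂ) • Z ^ k) (exp Z) :=
    exp_series_hasSum_exp' Z
  have h2 : HasSum (fun k : ℕ => ((k + 2)!⁻¹ : ℂ) • Z ^ (k + 2))
      (exp Z - ∑ i ∈ Finset.range 2, (i !⁻¹ : ℂ) • Z ^ i) :=
    (hasSum_nat_add_iff' 2).mpr h
  have hrange : (∑ i ∈ Finset.range 2, (i !⁻¹ : ℂ) • Z ^ i) = 1 + Z := by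
    simp [Finset.sum_range_succ, Nat.factorial]
  rw [hrange] at h2
  have heq : exp Z - 1 - Z = ∑' k : ℕ, ((k + 2)!⁻¹ : ℂ) • Z ^ (k + 2) := by
    rw [h2.tsum_eq, sub_sub]
  rw [heq]
  have hg : HasSum (fun k : ℕ => ‖Z‖ ^ 2 * (‖Z‖ ^ k / k !))
      (‖Z‖ ^ 2 * Real.exp ‖Z‖) := by
    have := expSeries_div_hasSum_exp ‖Z‖
    rw [← Real.exp_eq_exp_ℝ] at this
    exact this.mul_left _
  refine tsum_of_norm_bounded hg fun k => ?_
  have h1 : ‖((k + 2)!⁻¹ : ℂ) • Z ^ (k + 2)‖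
      = ((k + 2)! : ℝ)⁻¹ * ‖Z ^ (k + 2)‖ := by
    rw [norm_smul, norm_inv]
    norm_num
  rw [h1]
  have h3 : ‖Z ^ (k + 2)‖ ≤ ‖Z‖ ^ (k + 2) := norm_pow_le' Z (by omega)
  have h4 : ((k + 2)! : ℝ)⁻¹ ≤ (k ! : ℝ)⁻¹ := by
    apply inv_anti₀
    · positivity
    · exact_mod_cast Nat.factorial_le (by omega)
  have hfac : (0:ℝ) < (k + 2)! := by positivity
  calc ((k + 2)! : ℝ)⁻¹ * ‖Z ^ (k + 2)‖
      ≤ (k ! : ℝ)⁻¹ * ‖Z‖ ^ (k + 2) := by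
        apply mul_le_mul h4 h3 (norm_nonneg _) (by positivity)
    _ = ‖Z‖ ^ 2 * (‖Z‖ ^ k / k !) := by
        rw [pow_add]; field_simp
  

/-- Norm bound for the exponential, in a `NormOneClass` algebra. -/
lemma trotter_norm_exp_le [NormOneClass 𝔸] (Z : 𝔸) :
    ‖exp Z‖ ≤ Real.exp ‖Z‖ := by
  have h : HasSum (fun k : ℕ => (k !⁻¹ : ℂ) • Z ^ k) (exp Z) :=
    exp_series_hasSum_exp' Z
  have hg : HasSum (fun k : ℕ => ‖Z‖ ^ k / k !) (Real.exp ‖Z‖) := by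
    have := expSeries_div_hasSum_exp ‖Z‖
    rwa [← Real.exp_eq_exp_ℝ] at this
  rw [← h.tsum_eq]
  refine tsum_of_norm_bounded hg fun k => ?_
  rw [norm_smul, norm_inv]
  have : ‖(k ! : ℂ)‖ = (k ! : ℝ) := by norm_num
  rw [this]
  have h3 : ‖Z ^ k‖ ≤ ‖Z‖ ^ k := norm_pow_le Z k
  have hfac : (0:ℝ) < k ! := by positivity
  rw [div_eq_inv_mul]
  exact mul_le_mul_of_nonneg_left h3 (by positivity)

/-- Telescoping bound for differences of powers. -/
lemma trotter_pow_sub_pow {M : ℝ} {a b : 𝔸} (ha : ‖a‖ ≤ M) (hb : ‖b‖ ≤ M) :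
    ∀ n : ℕ, ‖a ^ n - b ^ n‖ ≤ n * M ^ (n - 1) * ‖a - b‖ := by
  have hM0 : 0 ≤ M := le_trans (norm_nonneg _) ha
  intro n
  induction n with
  | zero => simp
  | succ n ih =>
    have key : a ^ (n + 1) - b ^ (n + 1) = a ^ n * (a - b) + (a ^ n - b ^ n) * b := by
      noncomm_ring
    rw [key]
    match n with
    | 0 => simp
    | m + 1 =>
      have han : ‖a ^ (m + 1)‖ ≤ M ^ (m + 1) :=
        le_trans (norm_pow_le' a (by omega)) (pow_le_pow_left₀ (norm_nonneg _) ha _)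
      rw [Nat.add_sub_cancel] at ih ⊢
      have h1 : ‖a ^ (m+1) * (a - b)‖ ≤ M ^ (m+1) * ‖a - b‖ :=
        le_trans (norm_mul_le _ _) (mul_le_mul_of_nonneg_right han (norm_nonneg _))
      have h2 : ‖(a ^ (m+1) - b ^ (m+1)) * b‖ ≤ ((↑(m+1) : ℝ) * M ^ m * ‖a - b‖) * M := by
        refine le_trans (norm_mul_le _ _) (mul_le_mul ih hb (norm_nonneg _) ?_)
        positivity
      calc ‖a ^ (m+1) * (a - b) + (a ^ (m+1) - b ^ (m+1)) * b‖
          ≤ ‖a ^ (m+1) * (a - b)‖ + ‖(a ^ (m+1) - b ^ (m+1)) * b‖ := norm_add_le _ _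
        _ ≤ M ^ (m+1) * ‖a - b‖ + ((↑(m+1) : ℝ) * M ^ m * ‖a - b‖) * M := by
            exact add_le_add h1 h2
        _ = (↑(m + 1 + 1)) * M ^ (m + 1) * ‖a - b‖ := by
            push_cast; ring

end Aux

section MainAux

/-- Trotter product formula assuming `‖1‖ = 1`. -/
theorem trotter_aux {𝔸 : Type*} [NormedRing 𝔸] [NormedAlgebra ℂ 𝔸] [CompleteSpace 𝔸]
    [NormOneClass 𝔸] (A B : 𝔸) :
    Tendsto (fun n : ℕ =>
        (exp ((n : ℂ)⁻¹ • A) * exp ((n : ℂ)⁻¹ • B)) ^ n)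
      atTop (nhds (exp (A + B))) := by
  set r : ℝ := ‖A‖ + ‖B‖ with hr
  have hr0 : 0 ≤ r := by positivity
  set er : ℝ := Real.exp r with her
  have her1 : 1 ≤ er := Real.one_le_exp hr0
  have her0 : 0 < er := lt_of_lt_of_le one_pos her1
  set K : ℝ := er * (4 + 2 * r + r ^ 2 * er) with hK
  set Cf : ℝ := er * (r ^ 2 * K) with hCf
  rw [tendsto_iff_norm_sub_tendsto_zero]
  apply squeeze_zero' (g := fun n : ℕ => Cf / n)
  · filter_upwards with n; exact norm_nonneg _
  · filter_upwards [eventually_ge_atTop 1] with n hn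
    -- main estimate for n ≥ 1
    have hn0 : (0:ℝ) < n := by exact_mod_cast hn
    have hnC : ((n:ℂ)) ≠ 0 := by exact_mod_cast (Nat.one_le_iff_ne_zero.mp hn)
    set ν : ℂ := (n : ℂ)⁻¹ with hν
    have hνn : ‖ν‖ = ((n:ℝ))⁻¹ := by
      rw [hν, norm_inv]; norm_num
    set X : 𝔸 := ν • A with hX
    set Y : 𝔸 := ν • B with hY
    set S : 𝔸 := ν • (A + B) with hS
    set ρ : ℝ := r / n with hρ
    have hρ0 : 0 ≤ ρ := by positivity
    have hn1 : (1:ℝ) ≤ n := by exact_mod_cast hn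
    have hρr : ρ ≤ r := by
      rw [hρ, div_le_iff₀ hn0]
      nlinarith [mul_le_mul_of_nonneg_left hn1 hr0]
    have hxr : ‖X‖ ≤ ρ := by
      rw [hX, norm_smul, hνn, hρ]
      rw [inv_mul_eq_div, div_le_div_iff₀ hn0 hn0]
      nlinarith [norm_nonneg A, norm_nonneg B]
    have hyr : ‖Y‖ ≤ ρ := by
      rw [hY, norm_smul, hνn, hρ]
      rw [inv_mul_eq_div, div_le_div_iff₀ hn0 hn0]
      nlinarith [norm_nonneg A, norm_nonneg B]
    have hsr : ‖S‖ ≤ ρ := by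
      rw [hS, norm_smul, hνn, hρ]
      rw [inv_mul_eq_div, div_le_div_iff₀ hn0 hn0]
      nlinarith [norm_add_le A B, norm_nonneg (A + B)]
    have hSXY : S = X + Y := by rw [hS, hX, hY, smul_add]
    -- D ^ n = exp (A + B)
    have hDn : (exp S) ^ n = exp (A + B) := by
      let +nondep : NormedAlgebra ℚ 𝔸 := .restrictScalars ℚ ℂ 𝔸
      rw [← exp_nsmul, ← Nat.cast_smul_eq_nsmul ℂ n S, hS, smul_smul,
        mul_inv_cancel₀ hnC, one_smul]
    -- remainder terms
    set EX : 𝔸 := exp X - 1 - X with hEX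
    set EY : 𝔸 := exp Y - 1 - Y with hEY
    set ES : 𝔸 := exp S - 1 - S with hES
    have hrem : ∀ (Z : 𝔸), ‖Z‖ ≤ ρ → ‖exp Z - 1 - Z‖ ≤ ρ ^ 2 * er := by
      intro Z hZ
      refine le_trans (trotter_exp_remainder Z) ?_
      have h1 : ‖Z‖ ^ 2 ≤ ρ ^ 2 := pow_le_pow_left₀ (norm_nonneg _) hZ _
      have h2 : Real.exp ‖Z‖ ≤ er := Real.exp_le_exp.mpr (le_trans hZ hρr)
      exact mul_le_mul h1 h2 (Real.exp_pos _).le (by positivity)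
    have hex : ‖EX‖ ≤ ρ ^ 2 * er := hrem X hxr
    have hey : ‖EY‖ ≤ ρ ^ 2 * er := hrem Y hyr
    have hes : ‖ES‖ ≤ ρ ^ 2 * er := hrem S hsr
    -- difference of one-step propagators
    have hCD : exp X * exp Y - exp S
        = EX + EY - ES + X * Y + X * EY + EX * Y + EX * EY := by
      have e1 : exp X = 1 + X + EX := by rw [hEX]; abel
      have e2 : exp Y = 1 + Y + EY := by rw [hEY]; abel
      have e3 : exp S = 1 + S + ES := by rw [hES]; abel
      rw [e1, e2, e3, hSXY]
      noncomm_ring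
    have hCDnorm : ‖exp X * exp Y - exp S‖ ≤ ρ ^ 2 * K := by
      rw [hCD]
      have step : ‖EX + EY - ES + X * Y + X * EY + EX * Y + EX * EY‖
          ≤ ‖EX‖ + ‖EY‖ + ‖ES‖ + ‖X‖ * ‖Y‖ + ‖X‖ * ‖EY‖ + ‖EX‖ * ‖Y‖
            + ‖EX‖ * ‖EY‖ := by
        calc ‖EX + EY - ES + X * Y + X * EY + EX * Y + EX * EY‖
            ≤ ‖EX + EY - ES + X * Y + X * EY + EX * Y‖ + ‖EX * EY‖ := norm_add_le _ _
          _ ≤ ‖EX + EY - ES + X * Y + X * EY‖ + ‖EX * Y‖ + ‖EX * EY‖ := by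
              gcongr; exact norm_add_le _ _
          _ ≤ ‖EX + EY - ES + X * Y‖ + ‖X * EY‖ + ‖EX * Y‖ + ‖EX * EY‖ := by
              gcongr; exact norm_add_le _ _
          _ ≤ ‖EX + EY - ES‖ + ‖X * Y‖ + ‖X * EY‖ + ‖EX * Y‖ + ‖EX * EY‖ := by
              gcongr; exact norm_add_le _ _
          _ ≤ ‖EX‖ + ‖EY‖ + ‖ES‖ + ‖X * Y‖ + ‖X * EY‖ + ‖EX * Y‖ + ‖EX * EY‖ := by
              gcongr
              exact le_trans (norm_sub_le _ _) (by gcongr; exact norm_add_le _ _)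
          _ ≤ ‖EX‖ + ‖EY‖ + ‖ES‖ + ‖X‖ * ‖Y‖ + ‖X‖ * ‖EY‖ + ‖EX‖ * ‖Y‖
              + ‖EX‖ * ‖EY‖ := by gcongr <;> exact norm_mul_le _ _
      refine le_trans step ?_
      have hx0 := norm_nonneg X
      have hy0 := norm_nonneg Y
      have hex0 := norm_nonneg EX
      have hey0 := norm_nonneg EY
      have t1 : ‖X‖ * ‖Y‖ ≤ ρ ^ 2 * er := by
        nlinarith [mul_le_mul hxr hyr hy0 hρ0, sq_nonneg ρ]
      have t2 : ‖X‖ * ‖EY‖ ≤ r * (ρ ^ 2 * er) := by nlinarith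
      have t3 : ‖EX‖ * ‖Y‖ ≤ r * (ρ ^ 2 * er) := by nlinarith
      have t4 : ‖EX‖ * ‖EY‖ ≤ (r ^ 2 * er) * (ρ ^ 2 * er) := by
        have h1 : ‖EX‖ * ‖EY‖ ≤ (ρ ^ 2 * er) * (ρ ^ 2 * er) := by nlinarith
        refine le_trans h1 ?_
        have h2 : ρ ^ 2 ≤ r ^ 2 := pow_le_pow_left₀ hρ0 hρr _
        have h3 : ρ ^ 2 * er ≤ r ^ 2 * er := mul_le_mul_of_nonneg_right h2 her0.le
        exact mul_le_mul_of_nonneg_right h3 (mul_nonneg (sq_nonneg ρ) her0.le)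
      rw [hK]; nlinarith
    -- norms of propagators
    have hCn : ‖exp X * exp Y‖ ≤ Real.exp ρ := by
      refine le_trans (norm_mul_le _ _) ?_
      have h1 := trotter_norm_exp_le X
      have h2 := trotter_norm_exp_le Y
      have : Real.exp ‖X‖ * Real.exp ‖Y‖ = Real.exp (‖X‖ + ‖Y‖) :=
        (Real.exp_add _ _).symm
      calc ‖exp X‖ * ‖exp Y‖ ≤ Real.exp ‖X‖ * Real.exp ‖Y‖ := by
            exact mul_le_mul h1 h2 (norm_nonneg _) (Real.exp_pos _).le
        _ = Real.exp (‖X‖ + ‖Y‖) := this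
        _ ≤ Real.exp ρ := by
            apply Real.exp_le_exp.mpr
            have hxn : ‖X‖ = ‖A‖ / n := by rw [hX, norm_smul, hνn]; ring
            have hyn : ‖Y‖ = ‖B‖ / n := by rw [hY, norm_smul, hνn]; ring
            rw [hxn, hyn, hρ, hr, ← add_div]
    have hDnorm : ‖exp S‖ ≤ Real.exp ρ :=
      le_trans (trotter_norm_exp_le S) (Real.exp_le_exp.mpr hsr)
    -- telescoping
    have htel := trotter_pow_sub_pow hCn hDnorm n
    rw [hDn] at htel
    refine le_trans htel ?_
    have hexpρ : Real.exp ρ ^ (n - 1) ≤ er := by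
      rw [← Real.exp_nat_mul, her]
      apply Real.exp_le_exp.mpr
      have : ((n - 1 : ℕ) : ℝ) ≤ n := by
        exact_mod_cast Nat.sub_le n 1
      have h2 : ((n - 1 : ℕ) : ℝ) * ρ ≤ n * ρ := by
        exact mul_le_mul_of_nonneg_right this hρ0
      refine le_trans h2 ?_
      rw [hρ, mul_div_cancel₀ _ (ne_of_gt hn0)]
    calc (n : ℝ) * Real.exp ρ ^ (n - 1) * ‖exp X * exp Y - exp S‖
        ≤ (n : ℝ) * er * (ρ ^ 2 * K) := by
          have hK0 : 0 ≤ K := by rw [hK]; positivity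
          gcongr
      _ = Cf / n := by
          rw [hCf, hρ]
          field_simp
  · exact tendsto_const_div_atTop_nhds_zero_nat Cf

end MainAux

/-- The left-regular representation as a ring homomorphism. -/
noncomputable def trotterMulRingHom (𝔸 : Type*) [NormedRing 𝔸] [NormedAlgebra ℂ 𝔸] :
    𝔸 →+* (𝔸 →L[ℂ] 𝔸) where
  toFun a := ContinuousLinearMap.mul ℂ 𝔸 a
  map_one' := by ext x; simp
  map_mul' a b := by ext x; simp [mul_assoc]
  map_zero' := by ext x; simp
  map_add' a b := by ext x; simp [add_mul]

/-- Trotter product formula in a complex Banach algebra, Eq. (5) of the paper: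
`(exp(A/n) exp(B/n))^n → exp(A + B)` in norm. -/
theorem trotter_product_formula
    {𝔸 : Type*} [NormedRing 𝔸] [NormedAlgebra ℂ 𝔸] [CompleteSpace 𝔸]
    (A B : 𝔸) :
    Tendsto (fun n : ℕ =>
        (NormedSpace.exp ((n : ℂ)⁻¹ • A) * NormedSpace.exp ((n : ℂ)⁻¹ • B)) ^ n)
      atTop (nhds (NormedSpace.exp (A + B))) := by
  rcases subsingleton_or_nontrivial 𝔸 with h | h
  · exact tendsto_const_nhds.congr fun n => (Subsingleton.elim _ _)
  · set f := trotterMulRingHom 𝔸 with hf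
    have hfc : Continuous f := (ContinuousLinearMap.mul ℂ 𝔸).continuous
    have hfsmul : ∀ (c : ℂ) (x : 𝔸), f (c • x) = c • f x := fun c x =>
      (ContinuousLinearMap.mul ℂ 𝔸).map_smul c x
    have key := trotter_aux (f A) (f B)
    have hmap : ∀ n : ℕ,
        f ((exp ((n : ℂ)⁻¹ • A) * exp ((n : ℂ)⁻¹ • B)) ^ n)
          = (exp ((n : ℂ)⁻¹ • f A) * exp ((n : ℂ)⁻¹ • f B)) ^ n := by
      intro n
      let +nondep : NormedAlgebra ℚ 𝔸 := .restrictScalars ℚ ℂ 𝔸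
      rw [map_pow, map_mul, map_exp f hfc, map_exp f hfc, hfsmul, hfsmul]
    have hmap2 : f (exp (A + B)) = exp (f A + f B) := by
      let +nondep : NormedAlgebra ℚ 𝔸 := .restrictScalars ℚ ℂ 𝔸
      rw [map_exp f hfc, map_add]
    rw [tendsto_iff_norm_sub_tendsto_zero]
    have key' : Tendsto (fun n : ℕ =>
        ‖f ((exp ((n : ℂ)⁻¹ • A) * exp ((n : ℂ)⁻¹ • B)) ^ n)
          - f (exp (A + B))‖ * ‖(1 : 𝔸)‖) atTop (nhds 0) := by
      have := tendsto_iff_norm_sub_tendsto_zero.mp key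
      have h2 : Tendsto (fun n : ℕ =>
          ‖f ((exp ((n : ℂ)⁻¹ • A) * exp ((n : ℂ)⁻¹ • B)) ^ n)
            - f (exp (A + B))‖) atTop (nhds 0) := by
        refine this.congr fun n => ?_
        rw [hmap n, hmap2]
      simpa using h2.mul_const ‖(1 : 𝔸)‖
    apply squeeze_zero (fun n => norm_nonneg _) _ key'
    intro n
    set z := (exp ((n : ℂ)⁻¹ • A) * exp ((n : ℂ)⁻¹ • B)) ^ n - exp (A + B) with hz
    have h1 : z = f z (1 : 𝔸) := by
      show z = z * 1
      rw [mul_one]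
    calc ‖z‖ = ‖f z (1 : 𝔸)‖ := by rw [← h1]
      _ ≤ ‖f z‖ * ‖(1 : 𝔸)‖ := (f z).le_opNorm 1
      _ = ‖f ((exp ((n : ℂ)⁻¹ • A) * exp ((n : ℂ)⁻¹ • B)) ^ n)
          - f (exp (A + B))‖ * ‖(1 : 𝔸)‖ := by rw [hz, map_sub]
end
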